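/- arXiv:0803.2423 — 6 statements merged into one kernel-verified Lean document; each statement's English description precedes it below -/
import Mathlib

section
/- Every C-algebra (A,B) is semisimple; equivalently, the Jacobson radical of the algebra A is zero. -/
open Matrix
open scoped BigOperators

/-- `(A, B)` is a (possibly noncommutative) C-algebra with degree map `deg` and
structure constants `lam` :
(I) `1 ∈ B`, `B` is a basis, and the structure constants are real;
(II) `star` is a conjugate-linear involutory anti-automorphism with `B* = B`
(encoded by the `StarRing`/`StarModule` instances and `star_mem`);
(III) `λ_{a b 1} = δ_{a, b*} |a|` with `|a| > 0`;
(IV) `deg` is a `ℂ`-algebra homomorphism with `deg b = |b|` and `deg (x*) = conj (deg x)`. -/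
structure IsCAlgebra (A : Type*) [Ring A] [Algebra ℂ A] [StarRing A] [StarModule ℂ A]
    (B : Finset A) (deg : A →ₐ[ℂ] ℂ) (lam : A → A → A → ℝ) : Prop where
  indep : LinearIndependent ℂ (fun x : ↥(B : Set A) => (x : A))
  span_top : Submodule.span ℂ (B : Set A) = ⊤
  one_mem : (1 : A) ∈ B
  star_mem : ∀ b ∈ B, star b ∈ B
  struct : ∀ a ∈ B, ∀ b ∈ B, a * b = ∑ c ∈ B, (lam a b c : ℂ) • c
  lam_one_eq : ∀ a ∈ B, (lam a (star a) 1 : ℂ) = deg a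
  lam_one_ne : ∀ a ∈ B, ∀ b ∈ B, a ≠ star b → lam a b 1 = 0
  deg_pos : ∀ a ∈ B, 0 < lam a (star a) 1
  deg_star : ∀ x : A, deg (star x) = (starRingEnd ℂ) (deg x)

/-- A table algebra is a C-algebra with nonnegative structure constants. -/
structure IsTableAlgebra (A : Type*) [Ring A] [Algebra ℂ A] [StarRing A] [StarModule ℂ A]
    (B : Finset A) (deg : A →ₐ[ℂ] ℂ) (lam : A → A → A → ℝ)
    extends IsCAlgebra A B deg lam : Prop where
  lam_nonneg : ∀ a ∈ B, ∀ b ∈ B, ∀ c ∈ B, 0 ≤ lam a b c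

/-- The standard feasible trace: `ζ(1) = |B⁺|` and `ζ(b) = 0` for `1 ≠ b ∈ B`. -/
def IsStdTrace {A : Type*} [Ring A] [Algebra ℂ A] (B : Finset A) (deg : A →ₐ[ℂ] ℂ)
    (ζ : A →ₗ[ℂ] ℂ) : Prop :=
  ζ 1 = (∑ b ∈ B, deg b) ∧ ∀ b ∈ B, b ≠ 1 → ζ b = 0

/-- `χ` is an irreducible character of `A`: the trace of a surjective (hence irreducible)
matrix representation of positive degree. -/
def IsIrrChar (A : Type*) [Ring A] [Algebra ℂ A] (χ : A → ℂ) : Prop :=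
  ∃ (n : ℕ) (D : A →ₐ[ℂ] Matrix (Fin n) (Fin n) ℂ),
    0 < n ∧ Function.Surjective ⇑D ∧ ∀ a : A, χ a = (D a).trace

/-- `φ` agrees on the corner algebra `H = eAe = {x | e*x*e = x}` with an irreducible
character of `H`: there is an irreducible (i.e. surjective) unital matrix representation
of `H` of positive degree whose trace is `φ` on `H`. -/
def IsIrrCharOn {A : Type*} [Ring A] [Algebra ℂ A] (e : A) (φ : A → ℂ) : Prop :=
  ∃ (n : ℕ) (D : A → Matrix (Fin n) (Fin n) ℂ),
    0 < n ∧ D e = 1 ∧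
    (∀ x y : A, e * x * e = x → e * y * e = y → D (x + y) = D x + D y) ∧
    (∀ (c : ℂ) (x : A), e * x * e = x → D (c • x) = c • D x) ∧
    (∀ x y : A, e * x * e = x → e * y * e = y → D (x * y) = D x * D y) ∧
    (∀ M : Matrix (Fin n) (Fin n) ℂ, ∃ x : A, e * x * e = x ∧ D x = M) ∧
    (∀ x : A, e * x * e = x → φ x = (D x).trace)

/-- `C` is a closed subset of the basis `B` : `C` is nonempty and every basis element
occurring with nonzero coefficient in `c* ⬝ d` (for `c, d ∈ C`) lies in `C`.
Here `coord b x` is the coefficient of the basis element `b` in `x`. -/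
def IsClosedSubset {A : Type*} [Ring A] [Algebra ℂ A] [StarRing A] [StarModule ℂ A]
    (B C : Finset A) (coord : A → A → ℂ) : Prop :=
  C.Nonempty ∧ C ⊆ B ∧ ∀ c ∈ C, ∀ d ∈ C, ∀ b ∈ B, coord b (star c * d) ≠ 0 → b ∈ C

open scoped Classical in
/-- The double coset `CbC` : basis elements occurring with nonzero coefficient
in `C⁺ * b * C⁺`. -/
noncomputable def DCoset {A : Type*} [Ring A] [Algebra ℂ A]
    (B : Finset A) (coord : A → A → ℂ) (C : Finset A) (b : A) : Finset A :=
  B.filter fun y => coord y ((∑ c ∈ C, c) * b * (∑ c ∈ C, c)) ≠ 0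

/-- The quotient basis element `b/C = |C⁺|⁻¹ (CbC)⁺`. -/
noncomputable def quo {A : Type*} [Ring A] [Algebra ℂ A]
    (B : Finset A) (deg : A →ₐ[ℂ] ℂ) (coord : A → A → ℂ) (C : Finset A) (b : A) : A :=
  (∑ c ∈ C, deg c)⁻¹ • ∑ x ∈ DCoset B coord C b, x

/-- Every C-algebra `(A,B)` is semisimple; equivalently the Jacobson
radical of `A` is zero. -/
theorem stmt0 {A : Type*} [Ring A] [Algebra ℂ A] [StarRing A] [StarModule ℂ A]
    (B : Finset A) (deg : A →ₐ[ℂ] ℂ) (lam : A → A → A → ℝ)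
    (hCA : IsCAlgebra A B deg lam) :
    IsSemisimpleRing A ∧ (⊥ : Ideal A).jacobson = ⊥ := by
  classical
  obtain ⟨indep, span_top, one_mem, star_mem, struct, lam_one_eq, lam_one_ne, deg_pos, deg_star⟩ :=
    hCA
  haveI : Nontrivial A :=
    ⟨1, 0, fun h => one_ne_zero (α := ℂ) (by simpa using congrArg deg h)⟩
  haveI : FiniteDimensional ℂ A := ⟨⟨B, span_top⟩⟩
  set bB : Module.Basis ↥(B : Set A) ℂ A := Module.Basis.mk indep (by simpa using span_top.ge) with hbB
  have bB_apply : ∀ i : ↥(B : Set A), bB i = (i : A) := fun i => Module.Basis.mk_apply indep _ i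
  set τ : A →ₗ[ℂ] ℂ := bB.coord ⟨1, Finset.mem_coe.mpr one_mem⟩ with hτ
  have τ_basis : ∀ c ∈ B, τ c = if c = (1 : A) then 1 else 0 := by
    intro c hc
    have h1 : (c : A) = bB ⟨c, Finset.mem_coe.mpr hc⟩ := (bB_apply ⟨c, Finset.mem_coe.mpr hc⟩).symm
    rw [hτ, Module.Basis.coord_apply]
    conv_lhs => rw [h1]
    rw [Module.Basis.repr_self, Finsupp.single_apply]
    simp [Subtype.ext_iff]
  have tau_pair : ∀ a ∈ B, ∀ b ∈ B,
      τ (star a * b) = if a = b then (lam (star a) a 1 : ℂ) else 0 := by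
    intro a ha b hb
    rw [struct (star a) (star_mem a ha) b hb, map_sum]
    have h2 : ∀ c ∈ B, τ ((lam (star a) b c : ℂ) • c)
        = if c = (1 : A) then (lam (star a) b c : ℂ) else 0 := by
      intro c hc
      rw [LinearMap.map_smul, τ_basis c hc]
      simp [mul_ite]
    rw [Finset.sum_congr rfl h2, Finset.sum_ite_eq' B (1 : A) (fun c => (lam (star a) b c : ℂ)),
      if_pos one_mem]
    by_cases hab : a = b
    · subst hab; rw [if_pos rfl]
    · rw [if_neg hab]
      have : lam (star a) b 1 = 0 := by
        refine lam_one_ne (star a) (star_mem a ha) b hb ?_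
        intro h
        exact hab (star_injective h)
      exact_mod_cast congrArg (Complex.ofReal) this
  have tau_expand : ∀ x y : A, τ (star x * y)
      = ∑ i : ↥(B : Set A), starRingEnd ℂ (bB.repr x i) * bB.repr y i
          * (lam (star (i : A)) (i : A) 1 : ℂ) := by
    intro x y
    have hx : star x = ∑ i : ↥(B : Set A), starRingEnd ℂ (bB.repr x i) • star (bB i) := by
      conv_lhs => rw [← bB.sum_repr x]
      rw [star_sum]
      exact Finset.sum_congr rfl fun i _ => by rw [star_smul, starRingEnd_apply]
    have hy : y = ∑ j : ↥(B : Set A), bB.repr y j • bB j := (bB.sum_repr y).symm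
    calc τ (star x * y)
        = ∑ i : ↥(B : Set A), ∑ j : ↥(B : Set A),
            starRingEnd ℂ (bB.repr x i) * bB.repr y j * τ (star (bB i) * bB j) := by
          rw [hx]; conv_lhs => rw [hy]
          rw [Finset.sum_mul_sum, map_sum]
          refine Finset.sum_congr rfl fun i _ => ?_
          rw [map_sum]
          refine Finset.sum_congr rfl fun j _ => ?_
          rw [smul_mul_smul_comm, LinearMap.map_smul, smul_eq_mul]
      _ = ∑ i : ↥(B : Set A), starRingEnd ℂ (bB.repr x i) * bB.repr y i
            * (lam (star (i : A)) (i : A) 1 : ℂ) := by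
          refine Finset.sum_congr rfl fun i _ => ?_
          have h3 : ∀ j : ↥(B : Set A),
              starRingEnd ℂ (bB.repr x i) * bB.repr y j * τ (star (bB i) * bB j)
              = if i = j then starRingEnd ℂ (bB.repr x i) * bB.repr y j
                  * (lam (star (i : A)) (i : A) 1 : ℂ) else 0 := by
            intro j
            rw [bB_apply i, bB_apply j, tau_pair (i : A) i.2 (j : A) j.2]
            by_cases hij : i = j
            · rw [if_pos hij, if_pos (by rw [hij]), hij]
            · rw [if_neg hij, if_neg (fun h => hij (Subtype.ext h)), mul_zero]
          rw [Finset.sum_congr rfl fun j _ => h3 j, Finset.sum_ite_eq,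
            if_pos (Finset.mem_univ i)]
  have d_pos : ∀ i : ↥(B : Set A), 0 < lam (star (i : A)) (i : A) 1 := fun i => by
    have h := deg_pos (star (i : A)) (star_mem _ i.2)
    rwa [star_star] at h
  have inn_self : ∀ x : A, τ (star x * x)
      = ((∑ i : ↥(B : Set A), Complex.normSq (bB.repr x i)
          * lam (star (i : A)) (i : A) 1 : ℝ) : ℂ) := by
    intro x
    rw [tau_expand, Complex.ofReal_sum]
    refine Finset.sum_congr rfl fun i _ => ?_
    rw [Complex.ofReal_mul, Complex.normSq_eq_conj_mul_self]
  letI core : InnerProductSpace.Core ℂ A :=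
  { inner := fun x y => τ (star x * y)
    conj_inner_symm := by
      intro x y
      show starRingEnd ℂ (τ (star y * x)) = τ (star x * y)
      rw [tau_expand y x, tau_expand x y, map_sum]
      refine Finset.sum_congr rfl fun i _ => ?_
      rw [RingHom.map_mul, RingHom.map_mul, Complex.conj_conj, Complex.conj_ofReal]
      ring
    re_inner_nonneg := by
      intro x
      show 0 ≤ RCLike.re (τ (star x * x))
      rw [inn_self x]
      simpa using Finset.sum_nonneg fun (i : ↥(B : Set A)) _ =>
        mul_nonneg (Complex.normSq_nonneg (bB.repr x i)) (d_pos i).le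
    add_left := by
      intro x y z
      simp only [star_add, add_mul, map_add]
    smul_left := by
      intro x y r
      show τ (star (r • x) * y) = starRingEnd ℂ r * τ (star x * y)
      rw [star_smul, smul_mul_assoc, LinearMap.map_smul, smul_eq_mul, starRingEnd_apply]
    definite := by
      intro x hx
      have hx' : τ (star x * x) = 0 := hx
      rw [inn_self x] at hx'
      replace hx := hx'
      have h0 : (∑ i : ↥(B : Set A), Complex.normSq (bB.repr x i)
          * lam (star (i : A)) (i : A) 1) = 0 := by exact_mod_cast hx
      have hz : ∀ i : ↥(B : Set A), bB.repr x i = 0 := by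
        intro i
        have := (Finset.sum_eq_zero_iff_of_nonneg (fun i _ =>
          mul_nonneg (Complex.normSq_nonneg _) (d_pos i).le)).mp h0 i (Finset.mem_univ i)
        have hns : Complex.normSq (bB.repr x i) = 0 :=
          by
            rcases mul_eq_zero.mp this with h | h
            · exact h
            · exact absurd h (d_pos i).ne'
        exact Complex.normSq_eq_zero.mp hns
      have : bB.repr x = 0 := Finsupp.ext hz
      have := congrArg bB.repr.symm this
      simpa using this }
  letI : NormedAddCommGroup A := core.toNormedAddCommGroup
  letI : InnerProductSpace ℂ A := InnerProductSpace.ofCore core.toCore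
  have inner_def : ∀ u v : A, (inner ℂ u v : ℂ) = τ (star u * v) := fun u v => by rfl
  have hss : IsSemisimpleRing A := by
    refine (isSemisimpleModule_iff ..).mpr ⟨?_⟩
    intro I
    set K : Submodule ℂ A := I.restrictScalars ℂ with hK
    have hcompl : IsCompl K Kᗮ := Submodule.isCompl_orthogonal_of_hasOrthogonalProjection
    have smul_mem : ∀ (a : A) (y : A), y ∈ Kᗮ → a • y ∈ Kᗮ := by
      intro a y hy
      rw [Submodule.mem_orthogonal] at hy ⊢
      intro u hu
      have hu' : star a * u ∈ K := by
        have : star a • u ∈ I := I.smul_mem (star a) hu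
        simpa [smul_eq_mul, hK] using this
      have h1 : (inner ℂ u (a • y) : ℂ) = inner ℂ (star a * u) y := by
        rw [inner_def, inner_def, smul_eq_mul, StarMul.star_mul, star_star, mul_assoc]
      rw [h1]
      exact hy (star a * u) hu'
    let J : Ideal A :=
      { carrier := (Kᗮ : Set A)
        add_mem' := fun hx hy => Kᗮ.add_mem hx hy
        zero_mem' := Kᗮ.zero_mem
        smul_mem' := fun a y hy => smul_mem a y hy }
    refine ⟨J, ?_⟩
    rw [isCompl_iff, disjoint_iff, codisjoint_iff]
    constructor
    · rw [eq_bot_iff]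
      intro x hx
      have h1 : x ∈ K ⊓ Kᗮ := ⟨(Submodule.mem_inf.mp hx).1, (Submodule.mem_inf.mp hx).2⟩
      rw [disjoint_iff.mp hcompl.disjoint] at h1
      simpa using h1
    · rw [eq_top_iff]
      intro x _
      have h2 : x ∈ K ⊔ Kᗮ := by
        rw [codisjoint_iff.mp hcompl.codisjoint]; trivial
      obtain ⟨u, hu, v, hv, rfl⟩ := Submodule.mem_sup.mp h2
      exact Submodule.add_mem _ (Submodule.mem_sup_left hu) (Submodule.mem_sup_right hv)
  haveI := hss
  have hjac : (⊥ : Ideal A).jacobson = ⊥ := by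
    obtain ⟨I, hI⟩ := exists_isCompl ((⊥ : Ideal A).jacobson)
    by_cases hIt : I = ⊤
    · rw [hIt] at hI
      exact disjoint_top.mp hI.disjoint
    · obtain ⟨M, hM, hIM⟩ := Ideal.exists_le_maximal I hIt
      have hJM : (⊥ : Ideal A).jacobson ≤ M := sInf_le ⟨bot_le, hM⟩
      have hTM : (⊤ : Ideal A) ≤ M := by
        rw [← codisjoint_iff.mp hI.codisjoint]
        exact sup_le hJM hIM
      exact absurd (top_le_iff.mp hTM) hM.ne_top
  exact ⟨hss, hjac⟩
end

section
/- Let (A,B) be a C-algebra. For all φ, ψ ∈ Irr(A) the orthogonality relation holds: |B⁺|⁻¹ · Σ_{b∈B} φ(b*)ψ(b)/|b*| = δ_{φψ} · φ(1_A)/ζ_φ. -/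
open Matrix
open scoped BigOperators

private lemma trace_mulVecLin' {k : ℕ} (M : Matrix (Fin k) (Fin k) ℂ) :
    LinearMap.trace ℂ (Fin k → ℂ) M.mulVecLin = M.trace := by
  rw [← Matrix.toLin'_apply', LinearMap.trace_eq_matrix_trace ℂ (Pi.basisFun ℂ (Fin k)),
      LinearMap.toMatrix_eq_toMatrix', LinearMap.toMatrix'_toLin']

private lemma inv_submodule' {k : ℕ} (p : Submodule ℂ (Fin k → ℂ))
    (h : ∀ M : Matrix (Fin k) (Fin k) ℂ, ∀ v ∈ p, M.mulVec v ∈ p) :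
    p = ⊥ ∨ p = ⊤ := by
  rcases eq_or_ne p ⊥ with h0 | h0
  · exact Or.inl h0
  · right
    obtain ⟨v, hv, hv0⟩ := Submodule.ne_bot_iff p |>.mp h0
    obtain ⟨i, hi⟩ : ∃ i, v i ≠ 0 := by
      by_contra hc
      push_neg at hc
      exact hv0 (funext hc)
    rw [Submodule.eq_top_iff']
    intro w
    have : Matrix.mulVec (Matrix.of fun a b => w a * (if b = i then (v i)⁻¹ else 0)) v = w := by
      funext a
      simp only [Matrix.mulVec, dotProduct, Matrix.of_apply]
      rw [Finset.sum_eq_single i]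
      · simp [mul_assoc, inv_mul_cancel₀ hi]
      · intro b _ hb; simp [hb]
      · simp
    exact this ▸ h _ v hv

private lemma schur_zero' {A : Type*} [Ring A] [Algebra ℂ A] {n m : ℕ}
    (D : A →ₐ[ℂ] Matrix (Fin n) (Fin n) ℂ) (E : A →ₐ[ℂ] Matrix (Fin m) (Fin m) ℂ)
    (hD : Function.Surjective ⇑D) (hE : Function.Surjective ⇑E)
    (hne : ∃ x, (E x).trace ≠ (D x).trace)
    (T : Matrix (Fin m) (Fin n) ℂ) (hT : ∀ x : A, E x * T = T * D x) : T = 0 := by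
  by_contra h0
  set f := T.mulVecLin with hf
  have hf0 : f ≠ 0 := by
    intro hc
    apply h0
    have : T = LinearMap.toMatrix' (Matrix.toLin' T) := (LinearMap.toMatrix'_toLin' T).symm
    rw [this, Matrix.toLin'_apply', ← hf, hc, map_zero]
  have hker : LinearMap.ker f = ⊥ := by
    have hinv : ∀ M : Matrix (Fin n) (Fin n) ℂ, ∀ v ∈ LinearMap.ker f, M.mulVec v ∈ LinearMap.ker f := by
      intro M v hv
      obtain ⟨x, hx⟩ := hD M
      rw [LinearMap.mem_ker] at hv ⊢
      rw [hf] at hv ⊢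
      rw [Matrix.mulVecLin_apply] at hv ⊢
      rw [Matrix.mulVec_mulVec, ← hx, ← hT x, ← Matrix.mulVec_mulVec, hv]
      exact Matrix.mulVec_zero _
    rcases inv_submodule' (LinearMap.ker f) hinv with h | h
    · exact h
    · exact absurd (LinearMap.ker_eq_top.mp h) hf0
  have hrange : LinearMap.range f = ⊤ := by
    have hinv : ∀ M : Matrix (Fin m) (Fin m) ℂ, ∀ v ∈ LinearMap.range f, M.mulVec v ∈ LinearMap.range f := by
      intro M v hv
      obtain ⟨u, hu⟩ := hv
      obtain ⟨x, hx⟩ := hE M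
      refine ⟨(D x).mulVec u, ?_⟩
      rw [hf, Matrix.mulVecLin_apply] at hu ⊢
      rw [Matrix.mulVec_mulVec, ← hT x, ← Matrix.mulVec_mulVec, hu, hx]
    rcases inv_submodule' (LinearMap.range f) hinv with h | h
    · exact absurd (LinearMap.range_eq_bot.mp h) hf0
    · exact h
  let e : (Fin n → ℂ) ≃ₗ[ℂ] (Fin m → ℂ) :=
    LinearEquiv.ofBijective f ⟨LinearMap.ker_eq_bot.mp hker, LinearMap.range_eq_top.mp hrange⟩
  obtain ⟨x, hx⟩ := hne
  apply hx
  have key : (E x).mulVecLin = e.conj (D x).mulVecLin := by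
    apply LinearMap.ext
    intro v
    have he : ∀ u, e u = T.mulVec u := fun u => rfl
    have hv : T.mulVec (e.symm v) = v := by rw [← he, e.apply_symm_apply]
    rw [LinearEquiv.conj_apply_apply, he, Matrix.mulVecLin_apply, Matrix.mulVecLin_apply,
      Matrix.mulVec_mulVec, ← hT x, ← Matrix.mulVec_mulVec, hv]
  rw [← trace_mulVecLin' (E x), ← trace_mulVecLin' (D x), key, LinearMap.trace_conj']

section CAlg
open scoped Classical
variable {A : Type*} [Ring A] [Algebra ℂ A] [StarRing A] [StarModule ℂ A]
  {B : Finset A} {deg : A →ₐ[ℂ] ℂ} {lam : A → A → A → ℝ}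

private lemma sum_star' {M : Type*} [AddCommMonoid M]
    (hB : ∀ b ∈ B, star b ∈ B) (f : A → M) :
    ∑ b ∈ B, f (star b) = ∑ b ∈ B, f b :=
  Finset.sum_nbij' (fun b => star b) (fun b => star b) (fun a ha => hB a ha)
    (fun a ha => hB a ha) (fun a _ => star_star a) (fun a _ => star_star a)
    (fun _ _ => rfl)

variable (hCA : IsCAlgebra A B deg lam)
include hCA

private lemma degC {b : A} (hb : b ∈ B) : deg b = ((lam b (star b) 1 : ℝ) : ℂ) :=
  (hCA.lam_one_eq b hb).symm

private lemma deg_ne {b : A} (hb : b ∈ B) : deg b ≠ 0 := by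
  rw [degC hCA hb]
  exact_mod_cast ne_of_gt (hCA.deg_pos b hb)

private lemma deg_star_eq {b : A} (hb : b ∈ B) : deg (star b) = deg b := by
  rw [hCA.deg_star b, degC hCA hb, Complex.conj_ofReal]

private lemma sumdeg_real : (∑ b ∈ B, deg b) = ((∑ b ∈ B, lam b (star b) 1 : ℝ) : ℂ) := by
  push_cast
  exact Finset.sum_congr rfl fun b hb => degC hCA hb

private lemma sumdeg_ne : (∑ b ∈ B, deg b) ≠ 0 := by
  rw [sumdeg_real hCA]
  have : 0 < ∑ b ∈ B, lam b (star b) 1 :=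
    Finset.sum_pos (fun b hb => hCA.deg_pos b hb) ⟨1, hCA.one_mem⟩
  exact_mod_cast ne_of_gt this

private lemma lam_one_val {a b : A} (ha : a ∈ B) (hb : b ∈ B) :
    ((lam a b 1 : ℝ) : ℂ) = if a = star b then deg a else 0 := by
  split_ifs with h
  · have hb' : b = star a := by rw [h, star_star]
    rw [hb', hCA.lam_one_eq a ha]
  · rw [hCA.lam_one_ne a ha b hb h, Complex.ofReal_zero]

variable {ζ : A →ₗ[ℂ] ℂ} (hζ : IsStdTrace B deg ζ)
include hζ

private lemma zeta_basis {b : A} (hb : b ∈ B) :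
    ζ b = if b = 1 then (∑ c ∈ B, deg c) else 0 := by
  split_ifs with h
  · rw [h, hζ.1]
  · exact hζ.2 b hb h

private lemma zeta_mul {a b : A} (ha : a ∈ B) (hb : b ∈ B) :
    ζ (a * b) = (if a = star b then deg a else 0) * (∑ c ∈ B, deg c) := by
  rw [hCA.struct a ha b hb, map_sum]
  simp only [_root_.map_smul, smul_eq_mul]
  rw [Finset.sum_eq_single_of_mem 1 hCA.one_mem]
  · rw [zeta_basis hCA hζ hCA.one_mem, if_pos rfl, lam_one_val hCA ha hb]
  · intro c hc hc1
    rw [zeta_basis hCA hζ hc, if_neg hc1, mul_zero]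

private lemma zeta_comm (x y : A) : ζ (x * y) = ζ (y * x) := by
  have hbb : ∀ a ∈ B, ∀ b ∈ B, ζ (a * b) = ζ (b * a) := by
    intro a ha b hb
    rw [zeta_mul hCA hζ ha hb, zeta_mul hCA hζ hb ha]
    congr 1
    by_cases h : a = star b
    · have h' : b = star a := by rw [h, star_star]
      rw [if_pos h, if_pos h', h', deg_star_eq hCA ha]
    · have h' : b ≠ star a := fun hc => h (by rw [hc, star_star])
      rw [if_neg h, if_neg h']
  have h1 : ∀ b ∈ B, ∀ x : A, ζ (x * b) = ζ (b * x) := by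
    intro b hb x
    have := LinearMap.ext_on (R := ℂ) hCA.span_top
      (f := ζ.comp (LinearMap.mulRight ℂ b)) (g := ζ.comp (LinearMap.mulLeft ℂ b))
      (fun a ha => by simpa using hbb a ha b hb)
    simpa using LinearMap.congr_fun this x
  have := LinearMap.ext_on (R := ℂ) hCA.span_top
    (f := ζ.comp (LinearMap.mulLeft ℂ x)) (g := ζ.comp (LinearMap.mulRight ℂ x))
    (fun b hb => by simpa using (h1 b hb x))
  simpa using LinearMap.congr_fun this y

private lemma zeta_triple {a b c : A} (ha : a ∈ B) (hb : b ∈ B) (hc : c ∈ B) :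
    ζ (a * b * star c) = (lam a b c : ℂ) * (deg c * (∑ d ∈ B, deg d)) := by
  rw [hCA.struct a ha b hb, Finset.sum_mul]
  simp only [smul_mul_assoc]
  rw [map_sum]
  simp only [_root_.map_smul, smul_eq_mul]
  rw [Finset.sum_eq_single_of_mem c hc]
  · rw [zeta_mul hCA hζ hc (hCA.star_mem c hc), if_pos (star_star c).symm]
  · intro d hd hdc
    rw [zeta_mul hCA hζ hd (hCA.star_mem c hc),
      if_neg (fun h => hdc (by rw [h, star_star])), zero_mul, mul_zero]

private lemma key_id {a b c : A} (ha : a ∈ B) (hb : b ∈ B) (hc : c ∈ B) :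
    (lam a (star b) (star c) : ℂ) * deg (star c) = (lam c a b : ℂ) * deg (star b) := by
  have h1 := zeta_triple hCA hζ ha (hCA.star_mem b hb) (hCA.star_mem c hc)
  rw [star_star] at h1
  have h2 := zeta_triple hCA hζ hc ha hb
  have h3 : ζ (a * star b * c) = ζ (c * a * star b) := by
    rw [zeta_comm hCA hζ, mul_assoc]
  rw [h1, h2, ← deg_star_eq hCA hb] at h3
  refine mul_right_cancel₀ (sumdeg_ne hCA) ?_
  linear_combination h3

private lemma ortho_off {φ ψ : A → ℂ} (hne : φ ≠ ψ)
    (hφ : IsIrrChar A φ) (hψ : IsIrrChar A ψ) :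
    ∑ b ∈ B, φ (star b) * ψ b / deg (star b) = 0 := by
  obtain ⟨n, D, hn, hDs, hψtr⟩ := hψ
  obtain ⟨m', E, hm, hEs, hφtr⟩ := hφ
  -- coefficient identity
  have kc : ∀ a ∈ B, ∀ b ∈ B, ∀ c ∈ B,
      (deg (star b))⁻¹ * ((lam a (star b) (star c) : ℝ) : ℂ)
        = (deg (star c))⁻¹ * ((lam c a b : ℝ) : ℂ) := by
    intro a ha b hb c hc
    have h1 := key_id hCA hζ ha hb hc
    have hb' := deg_ne hCA (hCA.star_mem b hb)
    have hc' := deg_ne hCA (hCA.star_mem c hc)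
    field_simp
    linear_combination h1
  set T : Matrix (Fin m') (Fin n) ℂ → Matrix (Fin m') (Fin n) ℂ :=
    fun M => ∑ b ∈ B, (deg (star b))⁻¹ • (E (star b) * M * D b) with hTdef
  have hbasis : ∀ M, ∀ a ∈ B, E a * T M = T M * D a := by
    intro M a ha
    have lhs_eq : E a * T M = ∑ b ∈ B, ∑ c ∈ B,
        ((deg (star c))⁻¹ * ((lam c a b : ℝ) : ℂ)) • (E (star c) * M * D b) := by
      simp only [hTdef]
      rw [Matrix.mul_sum]
      refine Finset.sum_congr rfl fun b hb => ?_
      rw [Matrix.mul_smul, ← Matrix.mul_assoc, ← Matrix.mul_assoc, ← _root_.map_mul,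
        hCA.struct a ha (star b) (hCA.star_mem b hb), map_sum]
      simp only [_root_.map_smul]
      rw [Matrix.sum_mul, Matrix.sum_mul, Finset.smul_sum]
      rw [← sum_star' hCA.star_mem (fun c => (deg (star b))⁻¹ •
        (((lam a (star b) c : ℝ) : ℂ) • E c * M * D b))]
      refine Finset.sum_congr rfl fun c hc => ?_
      rw [Matrix.smul_mul, Matrix.smul_mul, smul_smul, kc a ha b hb c hc, ← smul_smul]
    have rhs_eq : T M * D a = ∑ c ∈ B, ∑ b ∈ B,
        ((deg (star c))⁻¹ * ((lam c a b : ℝ) : ℂ)) • (E (star c) * M * D b) := by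
      simp only [hTdef]
      rw [Matrix.sum_mul]
      refine Finset.sum_congr rfl fun c hc => ?_
      rw [Matrix.smul_mul, Matrix.mul_assoc (E (star c) * M) (D c) (D a), ← _root_.map_mul,
        hCA.struct c hc a ha, map_sum]
      simp only [_root_.map_smul]
      rw [Matrix.mul_sum, Finset.smul_sum]
      refine Finset.sum_congr rfl fun b hb => ?_
      rw [Matrix.mul_smul, smul_smul]
    rw [lhs_eq, rhs_eq, Finset.sum_comm]
  have inter : ∀ M, ∀ x : A, E x * T M = T M * D x := by
    intro M x
    let R1 : Matrix (Fin m') (Fin m') ℂ →ₗ[ℂ] Matrix (Fin m') (Fin n) ℂ :=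
      { toFun := fun N => N * T M
        map_add' := fun x y => Matrix.add_mul x y (T M)
        map_smul' := fun c x => Matrix.smul_mul c x (T M) }
    let L1 : Matrix (Fin n) (Fin n) ℂ →ₗ[ℂ] Matrix (Fin m') (Fin n) ℂ :=
      { toFun := fun N => T M * N
        map_add' := fun x y => Matrix.mul_add (T M) x y
        map_smul' := fun c x => Matrix.mul_smul (T M) c x }
    have heq := LinearMap.ext_on (R := ℂ) hCA.span_top
      (f := R1.comp E.toLinearMap)
      (g := L1.comp D.toLinearMap)
      (fun a ha => by simpa [R1, L1] using hbasis M a ha)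
    simpa [R1, L1] using LinearMap.congr_fun heq x
  have htrne : ∃ x, (E x).trace ≠ (D x).trace := by
    obtain ⟨x, hx⟩ := Function.ne_iff.mp hne
    exact ⟨x, by rw [← hφtr, ← hψtr]; exact hx⟩
  have hT0 : ∀ M, T M = 0 := fun M =>
    schur_zero' D E hDs hEs htrne (T M) (inter M)
  have hentry : ∀ (X : Matrix (Fin m') (Fin m') ℂ) (Y : Matrix (Fin n) (Fin n) ℂ)
      (j : Fin m') (k : Fin n),
      (X * Matrix.single j k (1:ℂ) * Y) j k = X j j * Y k k := by
    intro X Y j k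
    rw [Matrix.mul_apply]
    have hrow : ∀ q, (X * Matrix.single j k (1:ℂ)) j q
        = if k = q then X j j else 0 := by
      intro q
      rw [Matrix.mul_apply]
      simp [Matrix.single, Matrix.of_apply, mul_ite, ite_and,
        Finset.sum_ite_eq, Finset.sum_ite_eq']
    simp only [hrow, ite_mul, zero_mul]
    simp
  have hTentry : ∀ (j : Fin m') (k : Fin n),
      (T (Matrix.single j k (1:ℂ))) j k
        = ∑ b ∈ B, (deg (star b))⁻¹ * (E (star b) j j * D b k k) := by
    intro j k
    simp only [hTdef]
    simp only [Matrix.sum_apply, Matrix.smul_apply, smul_eq_mul]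
    exact Finset.sum_congr rfl fun b hb => by rw [hentry]
  have hsum : ∑ b ∈ B, φ (star b) * ψ b / deg (star b)
      = ∑ j : Fin m', ∑ k : Fin n, (T (Matrix.single j k (1:ℂ))) j k := by
    calc ∑ b ∈ B, φ (star b) * ψ b / deg (star b)
        = ∑ b ∈ B, ∑ j : Fin m', ∑ k : Fin n,
            (deg (star b))⁻¹ * (E (star b) j j * D b k k) := by
          refine Finset.sum_congr rfl fun b hb => ?_
          rw [hφtr, hψtr, Matrix.trace, Matrix.trace]
          simp only [Matrix.diag]
          rw [Finset.sum_mul_sum, div_eq_mul_inv, mul_comm, Finset.mul_sum]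
          refine Finset.sum_congr rfl fun j _ => ?_
          rw [Finset.mul_sum]
      _ = ∑ j : Fin m', ∑ k : Fin n, ∑ b ∈ B,
            (deg (star b))⁻¹ * (E (star b) j j * D b k k) := by
          rw [Finset.sum_comm]
          exact Finset.sum_congr rfl fun j _ => Finset.sum_comm
      _ = ∑ j : Fin m', ∑ k : Fin n, (T (Matrix.single j k (1:ℂ))) j k := by
          refine Finset.sum_congr rfl fun j _ => Finset.sum_congr rfl fun k _ => ?_
          rw [hTentry]
  rw [hsum]
  simp [hT0]

omit hCA hζ in
private lemma char_sum {χ : A → ℂ} (hχ : IsIrrChar A χ) (c : A → ℂ) :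
    χ (∑ b ∈ B, c b • star b) = ∑ b ∈ B, c b * χ (star b) := by
  obtain ⟨n, D, hn, hDs, htr⟩ := hχ
  let L : A →ₗ[ℂ] ℂ := (Matrix.traceLinearMap (Fin n) ℂ ℂ).comp D.toLinearMap
  have hL : ∀ x, χ x = L x := fun x => htr x
  rw [hL, map_sum]
  simp only [_root_.map_smul, smul_eq_mul]
  exact Finset.sum_congr rfl fun b _ => by rw [hL]

end CAlg

/-- orthogonality relation
`|B⁺|⁻¹ ∑_{b∈B} φ(b*)ψ(b)/|b*| = δ_{φψ} φ(1)/ζ_φ`. -/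
theorem stmt3 {A : Type*} [Ring A] [Algebra ℂ A] [StarRing A] [StarModule ℂ A]
    (B : Finset A) (deg : A →ₐ[ℂ] ℂ) (lam : A → A → A → ℝ)
    (hCA : IsCAlgebra A B deg lam)
    (ζ : A →ₗ[ℂ] ℂ) (hζ : IsStdTrace B deg ζ)
    (Irr : Finset (A → ℂ)) (hIrr : ∀ χ : A → ℂ, χ ∈ Irr ↔ IsIrrChar A χ)
    (m : (A → ℂ) → ℂ) (hm0 : ∀ χ ∈ Irr, m χ ≠ 0)
    (hdec : ∀ a : A, ζ a = ∑ χ ∈ Irr, m χ * χ a)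
    (φ ψ : A → ℂ) (hφ : φ ∈ Irr) (hψ : ψ ∈ Irr) :
    (φ = ψ →
      (∑ b ∈ B, deg b)⁻¹ * ∑ b ∈ B, φ (star b) * ψ b / deg (star b) = φ 1 / m φ) ∧
    (φ ≠ ψ →
      (∑ b ∈ B, deg b)⁻¹ * ∑ b ∈ B, φ (star b) * ψ b / deg (star b) = 0) := by
  have hSne := sumdeg_ne hCA
  constructor
  · intro h
    subst h
    set s : A := ∑ b ∈ B, (φ b / deg (star b)) • star b with hs
    have h1 : ∀ χ : A → ℂ, IsIrrChar A χ →
        χ s = ∑ b ∈ B, χ (star b) * φ b / deg (star b) := by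
      intro χ hχ
      rw [hs, char_sum hχ]
      refine Finset.sum_congr rfl fun b _ => ?_
      rw [div_eq_mul_inv, div_eq_mul_inv]
      ring
    have h2 : ζ s = φ 1 * ∑ b ∈ B, deg b := by
      rw [hs, map_sum]
      simp only [_root_.map_smul, smul_eq_mul]
      rw [Finset.sum_eq_single_of_mem 1 hCA.one_mem]
      · rw [star_one, hζ.1, _root_.map_one, div_one]
      · intro b hb hb1
        have hsb : star b ≠ 1 := fun hc => hb1 (by rw [← star_star b, hc, star_one])
        rw [hζ.2 (star b) (hCA.star_mem b hb) hsb, mul_zero]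
    have h3 : ζ s = m φ * φ s := by
      rw [hdec s, Finset.sum_eq_single_of_mem φ hφ]
      intro χ hχ hχφ
      rw [h1 χ ((hIrr χ).mp hχ), ortho_off hCA hζ hχφ ((hIrr χ).mp hχ) ((hIrr φ).mp hφ),
        mul_zero]
    have hm := hm0 φ hφ
    have h4 : m φ * (∑ b ∈ B, φ (star b) * φ b / deg (star b)) = φ 1 * ∑ b ∈ B, deg b := by
      rw [← h1 φ ((hIrr φ).mp hφ), ← h3, h2]
    field_simp
    linear_combination h4
  · intro h
    rw [ortho_off hCA hζ h ((hIrr φ).mp hφ) ((hIrr ψ).mp hψ), mul_zero]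
end

section
/- Let (A,B) be a table algebra, C ⊆ B a closed subset, and b_1 = 1_A, …, b_k a complete set of representatives of the C-double cosets of B. Then the ℂ-span of b_1/C, …, b_k/C is a unital subalgebra of A with unit e = |C⁺|⁻¹C⁺, and the pair (span, {b_1/C, …, b_k/C}) is again a table algebra, whose structure constants are γ_{ijk} = |C⁺|⁻¹ Σ_{r∈Cb_iC, s∈Cb_jC} λ_{rst}, where t ∈ Cb_kC is arbitrary (the value being independent of the choice of t). -/
open Matrix
open scoped BigOperators

section Aux
open scoped Classical
set_option linter.unusedSectionVars false

variable {A : Type*} [Ring A] [Algebra ℂ A] [StarRing A] [StarModule ℂ A]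
  {B : Finset A} {deg : A →ₐ[ℂ] ℂ} {lam : A → A → A → ℝ}
  {coord : A → A → ℂ} {C : Finset A}

private lemma star_sum_reindex {M : Type*} [AddCommMonoid M]
    (s : Finset A) (hs : ∀ x ∈ s, star x ∈ s) (f : A → M) :
    ∑ x ∈ s, f (star x) = ∑ x ∈ s, f x := by
  apply Finset.sum_nbij' (fun x => star x) (fun x => star x) hs hs
    (fun a _ => star_star a) (fun a _ => star_star a) (fun a _ => rfl)

private lemma repr_unique (hTA : IsTableAlgebra A B deg lam) (f g : A → ℂ)
    (h : ∑ b ∈ B, f b • b = ∑ b ∈ B, g b • b) : ∀ b ∈ B, f b = g b := by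
  intro b hb
  have h0 : ∑ b ∈ B, (f b - g b) • b = 0 := by
    simp [sub_smul, Finset.sum_sub_distrib, h]
  have h1 : ∑ x : ↥(B : Set A), (f x.1 - g x.1) • (x.1 : A) = 0 := by
    rw [show ∑ x : ↥(B : Set A), (f x.1 - g x.1) • (x.1 : A)
        = ∑ x : ↥B, (f x.1 - g x.1) • (x.1 : A) from rfl,
      Finset.sum_coe_sort B (fun b => (f b - g b) • b)]
    exact h0
  have := Fintype.linearIndependent_iff.mp hTA.indep (fun x => f x.1 - g x.1) h1 ⟨b, hb⟩
  exact sub_eq_zero.mp this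

private lemma coord_eq (hTA : IsTableAlgebra A B deg lam)
    (hcoord : ∀ x : A, x = ∑ b ∈ B, coord b x • b) (x : A) (f : A → ℂ)
    (hx : x = ∑ b ∈ B, f b • b) : ∀ b ∈ B, coord b x = f b :=
  repr_unique hTA _ _ (by rw [← hcoord x, ← hx])

private lemma coord_basis (hTA : IsTableAlgebra A B deg lam)
    (hcoord : ∀ x : A, x = ∑ b ∈ B, coord b x • b) {b : A} (hb : b ∈ B) :
    ∀ b' ∈ B, coord b' b = if b' = b then 1 else 0 := by
  apply coord_eq hTA hcoord
  simp [ite_smul, Finset.sum_ite_eq', hb]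


private lemma coord_lam (hTA : IsTableAlgebra A B deg lam)
    (hcoord : ∀ x : A, x = ∑ b ∈ B, coord b x • b) {a b : A} (ha : a ∈ B) (hb : b ∈ B) :
    ∀ c ∈ B, coord c (a * b) = (lam a b c : ℂ) :=
  coord_eq hTA hcoord _ _ (hTA.struct a ha b hb)

private lemma lam_one_ite (hTA : IsTableAlgebra A B deg lam) {a b : A} (ha : a ∈ B) (hb : b ∈ B) :
    lam a b 1 = if b = star a then lam a (star a) 1 else 0 := by
  by_cases h : b = star a
  · rw [h, if_pos rfl]
  · rw [if_neg h]
    exact hTA.lam_one_ne a ha b hb (fun hab => h (by rw [hab, star_star]))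

private lemma d_star (hTA : IsTableAlgebra A B deg lam) {b : A} (hb : b ∈ B) :
    lam (star b) b 1 = lam b (star b) 1 := by
  have h1 : ((lam (star b) b 1 : ℝ) : ℂ) = ((lam b (star b) 1 : ℝ) : ℂ) := by
    have h2 := hTA.lam_one_eq (star b) (hTA.star_mem b hb)
    rw [star_star] at h2
    rw [h2, hTA.deg_star, ← hTA.lam_one_eq b hb, Complex.conj_ofReal]
  exact_mod_cast h1

private lemma tri (hTA : IsTableAlgebra A B deg lam)
    (hcoord : ∀ x : A, x = ∑ b ∈ B, coord b x • b) {x y z : A}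
    (hx : x ∈ B) (hy : y ∈ B) (hz : z ∈ B) :
    coord 1 (x * y * z) = ∑ r ∈ B, (lam x y r : ℂ) * lam r z 1 := by
  have h : x * y * z = ∑ e ∈ B, (∑ r ∈ B, (lam x y r : ℂ) * lam r z e) • e := by
    rw [hTA.struct x hx y hy, Finset.sum_mul]
    have h2 : ∀ r ∈ B, ((lam x y r : ℂ) • r) * z = ∑ e ∈ B, ((lam x y r : ℂ) * lam r z e) • e := by
      intro r hr
      rw [smul_mul_assoc, hTA.struct r hr z hz, Finset.smul_sum]
      exact Finset.sum_congr rfl fun e _ => smul_smul _ _ _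
    rw [Finset.sum_congr rfl h2, Finset.sum_comm]
    simp [Finset.sum_smul]
  have h3 := coord_eq hTA hcoord _ _ h 1 hTA.one_mem
  simpa using h3

private lemma tri' (hTA : IsTableAlgebra A B deg lam)
    (hcoord : ∀ x : A, x = ∑ b ∈ B, coord b x • b) {x y z : A}
    (hx : x ∈ B) (hy : y ∈ B) (hz : z ∈ B) :
    coord 1 (x * (y * z)) = ∑ s ∈ B, (lam y z s : ℂ) * lam x s 1 := by
  have h : x * (y * z) = ∑ e ∈ B, (∑ s ∈ B, (lam y z s : ℂ) * lam x s e) • e := by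
    rw [hTA.struct y hy z hz, Finset.mul_sum]
    have h2 : ∀ s ∈ B, x * ((lam y z s : ℂ) • s) = ∑ e ∈ B, ((lam y z s : ℂ) * lam x s e) • e := by
      intro s hs
      rw [mul_smul_comm, hTA.struct x hx s hs, Finset.smul_sum]
      exact Finset.sum_congr rfl fun e _ => smul_smul _ _ _
    rw [Finset.sum_congr rfl h2, Finset.sum_comm]
    simp [Finset.sum_smul]
  have h3 := coord_eq hTA hcoord _ _ h 1 hTA.one_mem
  simpa using h3

private lemma R1 (hTA : IsTableAlgebra A B deg lam)
    (hcoord : ∀ x : A, x = ∑ b ∈ B, coord b x • b) {a b c : A}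
    (ha : a ∈ B) (hb : b ∈ B) (hc : c ∈ B) :
    lam a b c * lam c (star c) 1 = lam b (star c) (star a) * lam a (star a) 1 := by
  have hsc : star c ∈ B := hTA.star_mem c hc
  have hsa : star a ∈ B := hTA.star_mem a ha
  have h1 := tri hTA hcoord ha hb hsc
  have h2 := tri' hTA hcoord ha hb hsc
  rw [mul_assoc] at h1
  rw [h1] at h2
  have hL : ∑ r ∈ B, (lam a b r : ℂ) * lam r (star c) 1 = (lam a b c : ℂ) * lam c (star c) 1 := by
    apply Finset.sum_eq_single c
    · intro r hr hrc
      have : lam r (star c) 1 = 0 := by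
        rw [lam_one_ite hTA hr (hTA.star_mem c hc)]
        rw [if_neg (fun h => hrc (by
          have := congrArg (star ·) h
          simpa [star_star] using this.symm))]
      simp [this]
    · intro h; exact absurd hc h
  have hR : ∑ s ∈ B, (lam b (star c) s : ℂ) * lam a s 1
      = (lam b (star c) (star a) : ℂ) * lam a (star a) 1 := by
    apply Finset.sum_eq_single (star a)
    · intro s hs hsa'
      have : lam a s 1 = 0 := by rw [lam_one_ite hTA ha hs, if_neg hsa']
      simp [this]
    · intro h; exact absurd hsa h
  rw [hL, hR] at h2
  exact_mod_cast h2

private lemma R2 (hTA : IsTableAlgebra A B deg lam)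
    (hcoord : ∀ x : A, x = ∑ b ∈ B, coord b x • b) {a b c : A}
    (ha : a ∈ B) (hb : b ∈ B) (hc : c ∈ B) :
    lam a b c * lam c (star c) 1 = lam (star c) a (star b) * lam b (star b) 1 := by
  have hsc : star c ∈ B := hTA.star_mem c hc
  have hsb : star b ∈ B := hTA.star_mem b hb
  have h1 := tri hTA hcoord hsc ha hb
  have h2 := tri' hTA hcoord hsc ha hb
  rw [mul_assoc] at h1
  rw [h1] at h2
  have hL : ∑ r ∈ B, (lam (star c) a r : ℂ) * lam r b 1
      = (lam (star c) a (star b) : ℂ) * lam (star b) b 1 := by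
    apply Finset.sum_eq_single (star b)
    · intro r hr hrb
      have : lam r b 1 = 0 := by
        rw [lam_one_ite hTA hr hb]
        rw [if_neg (fun h => hrb (by
          have := congrArg (star ·) h
          simpa [star_star] using this.symm))]
      simp [this]
    · intro h; exact absurd hsb h
  have hR : ∑ s ∈ B, (lam a b s : ℂ) * lam (star c) s 1 = (lam a b c : ℂ) * lam (star c) c 1 := by
    apply Finset.sum_eq_single c
    · intro s hs hsc'
      have : lam (star c) s 1 = 0 := by
        rw [lam_one_ite hTA (hTA.star_mem c hc) hs, star_star, if_neg hsc']
      simp [this]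
    · intro h; exact absurd hc h
  rw [hL, hR] at h2
  rw [d_star hTA hc, d_star hTA hb] at h2
  exact_mod_cast h2.symm

private lemma lam_star (hTA : IsTableAlgebra A B deg lam) {a b c : A}
    (ha : a ∈ B) (hb : b ∈ B) (hc : c ∈ B) :
    lam (star b) (star a) (star c) = lam a b c := by
  have hkey : star b * star a = ∑ t ∈ B, (lam a b (star t) : ℂ) • t := by
    calc star b * star a = star (a * b) := (star_mul a b).symm
    _ = star (∑ t ∈ B, (lam a b t : ℂ) • t) := by rw [← hTA.struct a ha b hb]
    _ = ∑ t ∈ B, (lam a b t : ℂ) • star t := by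
        rw [star_sum]
        exact Finset.sum_congr rfl fun t _ => by
          rw [star_smul, Complex.star_def, Complex.conj_ofReal]
    _ = ∑ t ∈ B, (lam a b (star t) : ℂ) • t := by
        rw [← star_sum_reindex B (fun x hx => hTA.star_mem x hx)
          (fun t => (lam a b (star t) : ℂ) • t)]
        exact Finset.sum_congr rfl fun t _ => by rw [star_star]
  have h2 := repr_unique hTA _ _
    ((hTA.struct (star b) (hTA.star_mem b hb) (star a) (hTA.star_mem a ha)).symm.trans hkey)
    (star c) (hTA.star_mem c hc)
  rw [star_star] at h2
  exact_mod_cast h2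

private lemma lam_id_left (hTA : IsTableAlgebra A B deg lam)
    (hcoord : ∀ x : A, x = ∑ b ∈ B, coord b x • b) {a : A} (ha : a ∈ B) :
    ∀ b ∈ B, (lam 1 a b : ℂ) = if b = a then 1 else 0 := by
  intro b hb
  have h1 := coord_lam hTA hcoord hTA.one_mem ha b hb
  rw [one_mul] at h1
  rw [← h1, coord_basis hTA hcoord ha b hb]

private lemma lam_id_right (hTA : IsTableAlgebra A B deg lam)
    (hcoord : ∀ x : A, x = ∑ b ∈ B, coord b x • b) {a : A} (ha : a ∈ B) :
    ∀ b ∈ B, (lam a 1 b : ℂ) = if b = a then 1 else 0 := by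
  intro b hb
  have h1 := coord_lam hTA hcoord ha hTA.one_mem b hb
  rw [mul_one] at h1
  rw [← h1, coord_basis hTA hcoord ha b hb]

private lemma sum_lam_deg (hTA : IsTableAlgebra A B deg lam) {a b : A}
    (ha : a ∈ B) (hb : b ∈ B) :
    ∑ c ∈ B, lam a b c * lam c (star c) 1 = lam a (star a) 1 * lam b (star b) 1 := by
  have h := congrArg deg (hTA.struct a ha b hb)
  rw [_root_.map_mul, map_sum] at h
  have h2 : ∀ c ∈ B, deg ((lam a b c : ℂ) • c) = ((lam a b c * lam c (star c) 1 : ℝ) : ℂ) := by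
    intro c hc
    rw [_root_.map_smul, smul_eq_mul, ← hTA.lam_one_eq c hc]
    push_cast; ring
  rw [Finset.sum_congr rfl h2, ← hTA.lam_one_eq a ha, ← hTA.lam_one_eq b hb] at h
  exact_mod_cast h.symm

private lemma one_mem_C (hTA : IsTableAlgebra A B deg lam)
    (hcoord : ∀ x : A, x = ∑ b ∈ B, coord b x • b) (hC : IsClosedSubset B C coord) :
    (1 : A) ∈ C := by
  obtain ⟨c₀, hc₀⟩ := hC.1
  have hc₀B : c₀ ∈ B := hC.2.1 hc₀
  apply hC.2.2 c₀ hc₀ c₀ hc₀ 1 hTA.one_mem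
  rw [coord_lam hTA hcoord (hTA.star_mem c₀ hc₀B) hc₀B 1 hTA.one_mem]
  rw [d_star hTA hc₀B]
  exact_mod_cast ne_of_gt (hTA.deg_pos c₀ hc₀B)

private lemma star_mem_C (hTA : IsTableAlgebra A B deg lam)
    (hcoord : ∀ x : A, x = ∑ b ∈ B, coord b x • b) (hC : IsClosedSubset B C coord)
    {c : A} (hc : c ∈ C) : star c ∈ C := by
  have hcB : c ∈ B := hC.2.1 hc
  have hscB : star c ∈ B := hTA.star_mem c hcB
  apply hC.2.2 c hc 1 (one_mem_C hTA hcoord hC) (star c) hscB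
  rw [mul_one, coord_basis hTA hcoord hscB (star c) hscB, if_pos rfl]
  exact one_ne_zero

private lemma lam_support_C (hTA : IsTableAlgebra A B deg lam)
    (hcoord : ∀ x : A, x = ∑ b ∈ B, coord b x • b) (hC : IsClosedSubset B C coord)
    {a b t : A} (ha : a ∈ C) (hb : b ∈ C) (ht : t ∈ B) (hl : lam a b t ≠ 0) : t ∈ C := by
  have haB : a ∈ B := hC.2.1 ha
  have hbB : b ∈ B := hC.2.1 hb
  apply hC.2.2 (star a) (star_mem_C hTA hcoord hC ha) b hb t ht
  rw [star_star, coord_lam hTA hcoord haB hbB t ht]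
  exact_mod_cast hl

private def mm (lam : A → A → A → ℝ) (C : Finset A) (t s : A) : ℝ := ∑ c ∈ C, lam c t s

private def mm' (lam : A → A → A → ℝ) (C : Finset A) (t s : A) : ℝ := ∑ c ∈ C, lam t c s

private lemma absorb_left (hTA : IsTableAlgebra A B deg lam)
    (hcoord : ∀ x : A, x = ∑ b ∈ B, coord b x • b) (hC : IsClosedSubset B C coord)
    {a t : A} (ha : a ∈ C) (ht : t ∈ B) :
    mm lam C a t = if t ∈ C then lam a (star a) 1 else 0 := by
  have haB : a ∈ B := hC.2.1 ha
  by_cases htc : t ∈ C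
  · rw [if_pos htc]
    apply mul_right_cancel₀ (ne_of_gt (hTA.deg_pos t ht))
    calc (mm lam C a t) * lam t (star t) 1
        = ∑ c ∈ C, lam c a t * lam t (star t) 1 := by rw [mm, Finset.sum_mul]
      _ = ∑ c ∈ C, lam a (star t) (star c) * lam c (star c) 1 :=
          Finset.sum_congr rfl fun c hc => R1 hTA hcoord (hC.2.1 hc) haB ht
      _ = ∑ c ∈ C, lam a (star t) c * lam c (star c) 1 := by
          rw [← star_sum_reindex C (fun x hx => star_mem_C hTA hcoord hC hx)
            (fun c => lam a (star t) c * lam c (star c) 1)]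
          exact Finset.sum_congr rfl fun c hc => by
            rw [star_star, d_star hTA (hC.2.1 hc)]
      _ = ∑ c ∈ B, lam a (star t) c * lam c (star c) 1 := by
          apply Finset.sum_subset hC.2.1
          intro c hcB hcC
          have h0 : lam a (star t) c = 0 := by
            by_contra h
            exact hcC (lam_support_C hTA hcoord hC ha (star_mem_C hTA hcoord hC htc) hcB h)
          rw [h0, zero_mul]
      _ = lam a (star a) 1 * lam t (star t) 1 := by
          rw [sum_lam_deg hTA haB (hTA.star_mem t ht), star_star, d_star hTA ht]
  · rw [if_neg htc]
    apply Finset.sum_eq_zero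
    intro c hc
    by_contra hne
    exact htc (lam_support_C hTA hcoord hC hc ha ht hne)

private lemma absorb_right (hTA : IsTableAlgebra A B deg lam)
    (hcoord : ∀ x : A, x = ∑ b ∈ B, coord b x • b) (hC : IsClosedSubset B C coord)
    {a t : A} (ha : a ∈ C) (ht : t ∈ B) :
    mm' lam C a t = if t ∈ C then lam a (star a) 1 else 0 := by
  have haB : a ∈ B := hC.2.1 ha
  by_cases htc : t ∈ C
  · rw [if_pos htc]
    apply mul_right_cancel₀ (ne_of_gt (hTA.deg_pos t ht))
    calc (mm' lam C a t) * lam t (star t) 1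
        = ∑ c ∈ C, lam a c t * lam t (star t) 1 := by rw [mm', Finset.sum_mul]
      _ = ∑ c ∈ C, lam (star t) a (star c) * lam c (star c) 1 :=
          Finset.sum_congr rfl fun c hc => R2 hTA hcoord haB (hC.2.1 hc) ht
      _ = ∑ c ∈ C, lam (star t) a c * lam c (star c) 1 := by
          rw [← star_sum_reindex C (fun x hx => star_mem_C hTA hcoord hC hx)
            (fun c => lam (star t) a c * lam c (star c) 1)]
          exact Finset.sum_congr rfl fun c hc => by
            rw [star_star, d_star hTA (hC.2.1 hc)]
      _ = ∑ c ∈ B, lam (star t) a c * lam c (star c) 1 := by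
          apply Finset.sum_subset hC.2.1
          intro c hcB hcC
          have h0 : lam (star t) a c = 0 := by
            by_contra h
            exact hcC (lam_support_C hTA hcoord hC (star_mem_C hTA hcoord hC htc) ha hcB h)
          rw [h0, zero_mul]
      _ = lam a (star a) 1 * lam t (star t) 1 := by
          rw [sum_lam_deg hTA (hTA.star_mem t ht) haB, star_star, d_star hTA ht]
          ring
  · rw [if_neg htc]
    apply Finset.sum_eq_zero
    intro c hc
    by_contra hne
    exact htc (lam_support_C hTA hcoord hC ha hc ht hne)

private lemma Crepr (hTA : IsTableAlgebra A B deg lam) (hC : IsClosedSubset B C coord)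
    {t : A} (ht : t ∈ B) :
    (∑ c ∈ C, c) * t = ∑ s ∈ B, ((mm lam C t s : ℝ) : ℂ) • s := by
  rw [Finset.sum_mul,
    Finset.sum_congr rfl (fun c hc => hTA.struct c (hC.2.1 hc) t ht), Finset.sum_comm]
  apply Finset.sum_congr rfl
  intro s _
  rw [← Finset.sum_smul]
  congr 1
  unfold mm; push_cast; rfl

private lemma reprC (hTA : IsTableAlgebra A B deg lam) (hC : IsClosedSubset B C coord)
    {t : A} (ht : t ∈ B) :
    t * (∑ c ∈ C, c) = ∑ s ∈ B, ((mm' lam C t s : ℝ) : ℂ) • s := by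
  rw [Finset.mul_sum,
    Finset.sum_congr rfl (fun c hc => hTA.struct t ht c (hC.2.1 hc)), Finset.sum_comm]
  apply Finset.sum_congr rfl
  intro s _
  rw [← Finset.sum_smul]
  congr 1
  unfold mm'; push_cast; rfl

private lemma Cmul_absorb (hTA : IsTableAlgebra A B deg lam)
    (hcoord : ∀ x : A, x = ∑ b ∈ B, coord b x • b) (hC : IsClosedSubset B C coord)
    {a : A} (ha : a ∈ C) :
    (∑ c ∈ C, c) * a = ((lam a (star a) 1 : ℝ) : ℂ) • ∑ c ∈ C, c := by
  rw [Crepr hTA hC (hC.2.1 ha)]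
  calc ∑ s ∈ B, ((mm lam C a s : ℝ) : ℂ) • s
      = ∑ s ∈ B, if s ∈ C then ((lam a (star a) 1 : ℝ) : ℂ) • s else 0 := by
        apply Finset.sum_congr rfl
        intro s hs
        rw [absorb_left hTA hcoord hC ha hs]
        split <;> simp
    _ = ∑ s ∈ B ∩ C, ((lam a (star a) 1 : ℝ) : ℂ) • s := Finset.sum_ite_mem B C _
    _ = ((lam a (star a) 1 : ℝ) : ℂ) • ∑ s ∈ C, s := by
        rw [Finset.inter_eq_right.2 hC.2.1, Finset.smul_sum]

private lemma absorb_Cmul (hTA : IsTableAlgebra A B deg lam)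
    (hcoord : ∀ x : A, x = ∑ b ∈ B, coord b x • b) (hC : IsClosedSubset B C coord)
    {a : A} (ha : a ∈ C) :
    a * (∑ c ∈ C, c) = ((lam a (star a) 1 : ℝ) : ℂ) • ∑ c ∈ C, c := by
  rw [reprC hTA hC (hC.2.1 ha)]
  calc ∑ s ∈ B, ((mm' lam C a s : ℝ) : ℂ) • s
      = ∑ s ∈ B, if s ∈ C then ((lam a (star a) 1 : ℝ) : ℂ) • s else 0 := by
        apply Finset.sum_congr rfl
        intro s hs
        rw [absorb_right hTA hcoord hC ha hs]
        split <;> simp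
    _ = ∑ s ∈ B ∩ C, ((lam a (star a) 1 : ℝ) : ℂ) • s := Finset.sum_ite_mem B C _
    _ = ((lam a (star a) 1 : ℝ) : ℂ) • ∑ s ∈ C, s := by
        rw [Finset.inter_eq_right.2 hC.2.1, Finset.smul_sum]

private lemma CpCp (hTA : IsTableAlgebra A B deg lam)
    (hcoord : ∀ x : A, x = ∑ b ∈ B, coord b x • b) (hC : IsClosedSubset B C coord) :
    (∑ c ∈ C, c) * (∑ c ∈ C, c)
      = ((∑ c ∈ C, lam c (star c) 1 : ℝ) : ℂ) • ∑ c ∈ C, c := by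
  rw [Finset.mul_sum,
    Finset.sum_congr rfl (fun c hc => Cmul_absorb hTA hcoord hC hc), ← Finset.sum_smul]
  congr 1
  push_cast; rfl

private lemma nR_pos (hTA : IsTableAlgebra A B deg lam) (hC : IsClosedSubset B C coord) :
    0 < ∑ c ∈ C, lam c (star c) 1 :=
  Finset.sum_pos (fun c hc => hTA.deg_pos c (hC.2.1 hc)) hC.1

private lemma deg_sum_eq (hTA : IsTableAlgebra A B deg lam) (hC : IsClosedSubset B C coord) :
    (∑ c ∈ C, deg c) = ((∑ c ∈ C, lam c (star c) 1 : ℝ) : ℂ) := by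
  push_cast
  exact Finset.sum_congr rfl fun c hc => (hTA.lam_one_eq c (hC.2.1 hc)).symm

private lemma m_nonneg (hTA : IsTableAlgebra A B deg lam) (hC : IsClosedSubset B C coord)
    {t s : A} (ht : t ∈ B) (hs : s ∈ B) : 0 ≤ mm lam C t s :=
  Finset.sum_nonneg fun c hc => hTA.lam_nonneg c (hC.2.1 hc) t ht s hs

private lemma m'_nonneg (hTA : IsTableAlgebra A B deg lam) (hC : IsClosedSubset B C coord)
    {t s : A} (ht : t ∈ B) (hs : s ∈ B) : 0 ≤ mm' lam C t s :=
  Finset.sum_nonneg fun c hc => hTA.lam_nonneg t ht c (hC.2.1 hc) s hs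

private lemma beta_eq (hTA : IsTableAlgebra A B deg lam)
    (hcoord : ∀ x : A, x = ∑ b ∈ B, coord b x • b) (hC : IsClosedSubset B C coord)
    {t s : A} (ht : t ∈ B) (hs : s ∈ B) :
    mm lam C t s * lam s (star s) 1 = ∑ c ∈ C, lam t (star s) c * lam c (star c) 1 := by
  calc mm lam C t s * lam s (star s) 1
      = ∑ c ∈ C, lam c t s * lam s (star s) 1 := by rw [mm, Finset.sum_mul]
    _ = ∑ c ∈ C, lam t (star s) (star c) * lam c (star c) 1 :=
        Finset.sum_congr rfl fun c hc => R1 hTA hcoord (hC.2.1 hc) ht hs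
    _ = ∑ c ∈ C, lam t (star s) c * lam c (star c) 1 := by
        rw [← star_sum_reindex C (fun x hx => star_mem_C hTA hcoord hC hx)
          (fun c => lam t (star s) c * lam c (star c) 1)]
        exact Finset.sum_congr rfl fun c hc => by rw [star_star, d_star hTA (hC.2.1 hc)]

private lemma beta'_eq (hTA : IsTableAlgebra A B deg lam)
    (hcoord : ∀ x : A, x = ∑ b ∈ B, coord b x • b) (hC : IsClosedSubset B C coord)
    {t s : A} (ht : t ∈ B) (hs : s ∈ B) :
    mm' lam C t s * lam s (star s) 1 = ∑ c ∈ C, lam (star s) t c * lam c (star c) 1 := by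
  calc mm' lam C t s * lam s (star s) 1
      = ∑ c ∈ C, lam t c s * lam s (star s) 1 := by rw [mm', Finset.sum_mul]
    _ = ∑ c ∈ C, lam (star s) t (star c) * lam c (star c) 1 :=
        Finset.sum_congr rfl fun c hc => R2 hTA hcoord ht (hC.2.1 hc) hs
    _ = ∑ c ∈ C, lam (star s) t c * lam c (star c) 1 := by
        rw [← star_sum_reindex C (fun x hx => star_mem_C hTA hcoord hC hx)
          (fun c => lam (star s) t c * lam c (star c) 1)]
        exact Finset.sum_congr rfl fun c hc => by rw [star_star, d_star hTA (hC.2.1 hc)]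

private lemma m_rev (hTA : IsTableAlgebra A B deg lam)
    (hcoord : ∀ x : A, x = ∑ b ∈ B, coord b x • b) (hC : IsClosedSubset B C coord)
    {t s : A} (ht : t ∈ B) (hs : s ∈ B) :
    mm lam C t s * lam s (star s) 1 = mm lam C s t * lam t (star t) 1 := by
  rw [beta_eq hTA hcoord hC ht hs, beta_eq hTA hcoord hC hs ht]
  rw [← star_sum_reindex C (fun x hx => star_mem_C hTA hcoord hC hx)
    (fun c => lam s (star t) c * lam c (star c) 1)]
  apply Finset.sum_congr rfl
  intro c hc
  rw [star_star, d_star hTA (hC.2.1 hc)]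
  congr 1
  have h := lam_star hTA ht (hTA.star_mem s hs) (hC.2.1 hc)
  rw [star_star] at h
  exact h.symm

private lemma m'_rev (hTA : IsTableAlgebra A B deg lam)
    (hcoord : ∀ x : A, x = ∑ b ∈ B, coord b x • b) (hC : IsClosedSubset B C coord)
    {t s : A} (ht : t ∈ B) (hs : s ∈ B) :
    mm' lam C t s * lam s (star s) 1 = mm' lam C s t * lam t (star t) 1 := by
  rw [beta'_eq hTA hcoord hC ht hs, beta'_eq hTA hcoord hC hs ht]
  rw [← star_sum_reindex C (fun x hx => star_mem_C hTA hcoord hC hx)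
    (fun c => lam (star t) s c * lam c (star c) 1)]
  apply Finset.sum_congr rfl
  intro c hc
  rw [star_star, d_star hTA (hC.2.1 hc)]
  congr 1
  have h := lam_star hTA (hTA.star_mem s hs) ht (hC.2.1 hc)
  rw [star_star] at h
  exact h.symm

private lemma m_row (hTA : IsTableAlgebra A B deg lam) (hC : IsClosedSubset B C coord)
    {t : A} (ht : t ∈ B) :
    ∑ s ∈ B, mm lam C t s * lam s (star s) 1
      = (∑ c ∈ C, lam c (star c) 1) * lam t (star t) 1 := by
  calc ∑ s ∈ B, mm lam C t s * lam s (star s) 1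
      = ∑ s ∈ B, ∑ c ∈ C, lam c t s * lam s (star s) 1 := by
        exact Finset.sum_congr rfl fun s _ => by rw [mm, Finset.sum_mul]
    _ = ∑ c ∈ C, ∑ s ∈ B, lam c t s * lam s (star s) 1 := Finset.sum_comm
    _ = ∑ c ∈ C, lam c (star c) 1 * lam t (star t) 1 :=
        Finset.sum_congr rfl fun c hc => sum_lam_deg hTA (hC.2.1 hc) ht
    _ = (∑ c ∈ C, lam c (star c) 1) * lam t (star t) 1 := by rw [Finset.sum_mul]

private lemma m'_row (hTA : IsTableAlgebra A B deg lam) (hC : IsClosedSubset B C coord)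
    {t : A} (ht : t ∈ B) :
    ∑ s ∈ B, mm' lam C t s * lam s (star s) 1
      = (∑ c ∈ C, lam c (star c) 1) * lam t (star t) 1 := by
  calc ∑ s ∈ B, mm' lam C t s * lam s (star s) 1
      = ∑ s ∈ B, ∑ c ∈ C, lam t c s * lam s (star s) 1 := by
        exact Finset.sum_congr rfl fun s _ => by rw [mm', Finset.sum_mul]
    _ = ∑ c ∈ C, ∑ s ∈ B, lam t c s * lam s (star s) 1 := Finset.sum_comm
    _ = ∑ c ∈ C, lam t (star t) 1 * lam c (star c) 1 :=
        Finset.sum_congr rfl fun c hc => sum_lam_deg hTA ht (hC.2.1 hc)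
    _ = (∑ c ∈ C, lam c (star c) 1) * lam t (star t) 1 := by
        rw [Finset.sum_mul]
        exact Finset.sum_congr rfl fun c _ => mul_comm _ _

private lemma m_col (hTA : IsTableAlgebra A B deg lam)
    (hcoord : ∀ x : A, x = ∑ b ∈ B, coord b x • b) (hC : IsClosedSubset B C coord)
    {s : A} (hs : s ∈ B) :
    ∑ t ∈ B, mm lam C t s = ∑ c ∈ C, lam c (star c) 1 := by
  apply mul_right_cancel₀ (ne_of_gt (hTA.deg_pos s hs))
  rw [Finset.sum_mul,
    Finset.sum_congr rfl (fun t ht => m_rev hTA hcoord hC ht hs), m_row hTA hC hs]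

private lemma m'_col (hTA : IsTableAlgebra A B deg lam)
    (hcoord : ∀ x : A, x = ∑ b ∈ B, coord b x • b) (hC : IsClosedSubset B C coord)
    {s : A} (hs : s ∈ B) :
    ∑ t ∈ B, mm' lam C t s = ∑ c ∈ C, lam c (star c) 1 := by
  apply mul_right_cancel₀ (ne_of_gt (hTA.deg_pos s hs))
  rw [Finset.sum_mul,
    Finset.sum_congr rfl (fun t ht => m'_rev hTA hcoord hC ht hs), m'_row hTA hC hs]

private lemma m_refl (hTA : IsTableAlgebra A B deg lam)
    (hcoord : ∀ x : A, x = ∑ b ∈ B, coord b x • b) (hC : IsClosedSubset B C coord)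
    {t : A} (ht : t ∈ B) : 0 < mm lam C t t := by
  have h1 : lam 1 t t = 1 := by
    have := lam_id_left hTA hcoord ht t ht
    rw [if_pos rfl] at this
    exact_mod_cast this
  have h2 : lam 1 t t ≤ mm lam C t t :=
    Finset.single_le_sum (f := fun c => lam c t t)
      (fun c hc => hTA.lam_nonneg c (hC.2.1 hc) t ht t ht) (one_mem_C hTA hcoord hC)
  rw [h1] at h2
  linarith

private lemma m'_refl (hTA : IsTableAlgebra A B deg lam)
    (hcoord : ∀ x : A, x = ∑ b ∈ B, coord b x • b) (hC : IsClosedSubset B C coord)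
    {t : A} (ht : t ∈ B) : 0 < mm' lam C t t := by
  have h1 : lam t 1 t = 1 := by
    have := lam_id_right hTA hcoord ht t ht
    rw [if_pos rfl] at this
    exact_mod_cast this
  have h2 : lam t 1 t ≤ mm' lam C t t :=
    Finset.single_le_sum (f := fun c => lam t c t)
      (fun c hc => hTA.lam_nonneg t ht c (hC.2.1 hc) t ht) (one_mem_C hTA hcoord hC)
  rw [h1] at h2
  linarith

private lemma Cmul_repr (hTA : IsTableAlgebra A B deg lam) (hC : IsClosedSubset B C coord)
    (f : A → ℝ) :
    (∑ c ∈ C, c) * (∑ t ∈ B, ((f t : ℝ) : ℂ) • t)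
      = ∑ s ∈ B, ((∑ t ∈ B, f t * mm lam C t s : ℝ) : ℂ) • s := by
  rw [Finset.mul_sum]
  have h1 : ∀ t ∈ B, (∑ c ∈ C, c) * (((f t : ℝ) : ℂ) • t)
      = ∑ s ∈ B, ((f t * mm lam C t s : ℝ) : ℂ) • s := by
    intro t ht
    rw [mul_smul_comm, Crepr hTA hC ht, Finset.smul_sum]
    exact Finset.sum_congr rfl fun s _ => by rw [smul_smul]; norm_cast
  rw [Finset.sum_congr rfl h1, Finset.sum_comm]
  apply Finset.sum_congr rfl
  intro s _
  rw [← Finset.sum_smul]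
  congr 1
  push_cast; rfl

private lemma mulC_repr (hTA : IsTableAlgebra A B deg lam) (hC : IsClosedSubset B C coord)
    (f : A → ℝ) :
    (∑ t ∈ B, ((f t : ℝ) : ℂ) • t) * (∑ c ∈ C, c)
      = ∑ s ∈ B, ((∑ t ∈ B, f t * mm' lam C t s : ℝ) : ℂ) • s := by
  rw [Finset.sum_mul]
  have h1 : ∀ t ∈ B, (((f t : ℝ) : ℂ) • t) * (∑ c ∈ C, c)
      = ∑ s ∈ B, ((f t * mm' lam C t s : ℝ) : ℂ) • s := by
    intro t ht
    rw [smul_mul_assoc, reprC hTA hC ht, Finset.smul_sum]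
    exact Finset.sum_congr rfl fun s _ => by rw [smul_smul]; norm_cast
  rw [Finset.sum_congr rfl h1, Finset.sum_comm]
  apply Finset.sum_congr rfl
  intro s _
  rw [← Finset.sum_smul]
  congr 1
  push_cast; rfl

private lemma m_eig_key (hTA : IsTableAlgebra A B deg lam)
    (hcoord : ∀ x : A, x = ∑ b ∈ B, coord b x • b) (hC : IsClosedSubset B C coord)
    {t : A} (ht : t ∈ B) : ∀ z ∈ B,
    ∑ y ∈ B, mm lam C t y * mm lam C y z = (∑ c ∈ C, lam c (star c) 1) * mm lam C t z := by
  have hel : (∑ c ∈ C, c) * ((∑ c ∈ C, c) * t)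
      = ((∑ c ∈ C, lam c (star c) 1 : ℝ) : ℂ) • ((∑ c ∈ C, c) * t) := by
    rw [← mul_assoc, CpCp hTA hcoord hC, smul_mul_assoc]
  rw [Crepr hTA hC ht, Cmul_repr hTA hC, Finset.smul_sum] at hel
  have hel2 : ∑ s ∈ B, ((∑ y ∈ B, mm lam C t y * mm lam C y s : ℝ) : ℂ) • s
      = ∑ s ∈ B, (((∑ c ∈ C, lam c (star c) 1) * mm lam C t s : ℝ) : ℂ) • s := by
    rw [hel]
    exact Finset.sum_congr rfl fun s _ => by rw [smul_smul]; norm_cast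
  intro z hz
  exact_mod_cast repr_unique hTA _ _ hel2 z hz

private lemma m'_eig_key (hTA : IsTableAlgebra A B deg lam)
    (hcoord : ∀ x : A, x = ∑ b ∈ B, coord b x • b) (hC : IsClosedSubset B C coord)
    {t : A} (ht : t ∈ B) : ∀ z ∈ B,
    ∑ y ∈ B, mm' lam C t y * mm' lam C y z
      = (∑ c ∈ C, lam c (star c) 1) * mm' lam C t z := by
  have hel : ((t * (∑ c ∈ C, c)) * (∑ c ∈ C, c))
      = ((∑ c ∈ C, lam c (star c) 1 : ℝ) : ℂ) • (t * (∑ c ∈ C, c)) := by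
    rw [mul_assoc, CpCp hTA hcoord hC, mul_smul_comm]
  rw [reprC hTA hC ht, mulC_repr hTA hC, Finset.smul_sum] at hel
  have hel2 : ∑ s ∈ B, ((∑ y ∈ B, mm' lam C t y * mm' lam C y s : ℝ) : ℂ) • s
      = ∑ s ∈ B, (((∑ c ∈ C, lam c (star c) 1) * mm' lam C t s : ℝ) : ℂ) • s := by
    rw [hel]
    exact Finset.sum_congr rfl fun s _ => by rw [smul_smul]; norm_cast
  intro z hz
  exact_mod_cast repr_unique hTA _ _ hel2 z hz

private lemma m_trans (hTA : IsTableAlgebra A B deg lam)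
    (hcoord : ∀ x : A, x = ∑ b ∈ B, coord b x • b) (hC : IsClosedSubset B C coord)
    {t s r : A} (ht : t ∈ B) (hs : s ∈ B) (hr : r ∈ B)
    (h1 : mm lam C t s ≠ 0) (h2 : mm lam C s r ≠ 0) : mm lam C t r ≠ 0 := by
  have hkey := m_eig_key hTA hcoord hC ht r hr
  have hge : mm lam C t s * mm lam C s r ≤ ∑ y ∈ B, mm lam C t y * mm lam C y r :=
    Finset.single_le_sum (f := fun y => mm lam C t y * mm lam C y r)
      (fun y hy => mul_nonneg (m_nonneg hTA hC ht hy) (m_nonneg hTA hC hy hr)) hs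
  have hp1 : 0 < mm lam C t s := lt_of_le_of_ne (m_nonneg hTA hC ht hs) (Ne.symm h1)
  have hp2 : 0 < mm lam C s r := lt_of_le_of_ne (m_nonneg hTA hC hs hr) (Ne.symm h2)
  intro h0
  rw [h0, mul_zero] at hkey
  nlinarith

private lemma m'_trans (hTA : IsTableAlgebra A B deg lam)
    (hcoord : ∀ x : A, x = ∑ b ∈ B, coord b x • b) (hC : IsClosedSubset B C coord)
    {t s r : A} (ht : t ∈ B) (hs : s ∈ B) (hr : r ∈ B)
    (h1 : mm' lam C t s ≠ 0) (h2 : mm' lam C s r ≠ 0) : mm' lam C t r ≠ 0 := by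
  have hkey := m'_eig_key hTA hcoord hC ht r hr
  have hge : mm' lam C t s * mm' lam C s r ≤ ∑ y ∈ B, mm' lam C t y * mm' lam C y r :=
    Finset.single_le_sum (f := fun y => mm' lam C t y * mm' lam C y r)
      (fun y hy => mul_nonneg (m'_nonneg hTA hC ht hy) (m'_nonneg hTA hC hy hr)) hs
  have hp1 : 0 < mm' lam C t s := lt_of_le_of_ne (m'_nonneg hTA hC ht hs) (Ne.symm h1)
  have hp2 : 0 < mm' lam C s r := lt_of_le_of_ne (m'_nonneg hTA hC hs hr) (Ne.symm h2)
  intro h0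
  rw [h0, mul_zero] at hkey
  nlinarith

private lemma m_symm_ne (hTA : IsTableAlgebra A B deg lam)
    (hcoord : ∀ x : A, x = ∑ b ∈ B, coord b x • b) (hC : IsClosedSubset B C coord)
    {t s : A} (ht : t ∈ B) (hs : s ∈ B) (h : mm lam C t s ≠ 0) : mm lam C s t ≠ 0 := by
  intro h0
  have := m_rev hTA hcoord hC ht hs
  rw [h0, zero_mul] at this
  exact h (by
    have hds := ne_of_gt (hTA.deg_pos s hs)
    exact (mul_eq_zero.mp this).resolve_right hds)

private lemma m'_symm_ne (hTA : IsTableAlgebra A B deg lam)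
    (hcoord : ∀ x : A, x = ∑ b ∈ B, coord b x • b) (hC : IsClosedSubset B C coord)
    {t s : A} (ht : t ∈ B) (hs : s ∈ B) (h : mm' lam C t s ≠ 0) : mm' lam C s t ≠ 0 := by
  intro h0
  have := m'_rev hTA hcoord hC ht hs
  rw [h0, zero_mul] at this
  exact h (by
    have hds := ne_of_gt (hTA.deg_pos s hs)
    exact (mul_eq_zero.mp this).resolve_right hds)

private lemma mul_repr (hTA : IsTableAlgebra A B deg lam)
    (hcoord : ∀ x : A, x = ∑ b ∈ B, coord b x • b) (u v : A) :
    u * v = ∑ e ∈ B, (∑ r ∈ B, ∑ s ∈ B, coord r u * coord s v * ((lam r s e : ℝ) : ℂ)) • e := by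
  conv_lhs => rw [hcoord u, hcoord v]
  rw [Finset.sum_mul_sum]
  have h1 : ∀ r ∈ B, ∀ s ∈ B, (coord r u • r) * (coord s v • s)
      = ∑ e ∈ B, (coord r u * coord s v * ((lam r s e : ℝ) : ℂ)) • e := by
    intro r hr s hs
    rw [smul_mul_smul_comm, hTA.struct r hr s hs, Finset.smul_sum]
    exact Finset.sum_congr rfl fun e _ => by rw [smul_smul]
  rw [Finset.sum_congr rfl (fun r hr => Finset.sum_congr rfl (fun s hs => h1 r hr s hs))]
  rw [Finset.sum_congr rfl (fun r (_ : r ∈ B) => Finset.sum_comm), Finset.sum_comm]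
  exact Finset.sum_congr rfl fun e _ => by simp [Finset.sum_smul]

private lemma coord_mul (hTA : IsTableAlgebra A B deg lam)
    (hcoord : ∀ x : A, x = ∑ b ∈ B, coord b x • b) (u v : A) {e : A} (he : e ∈ B) :
    coord e (u * v) = ∑ r ∈ B, ∑ s ∈ B, coord r u * coord s v * ((lam r s e : ℝ) : ℂ) :=
  coord_eq hTA hcoord _ _ (mul_repr hTA hcoord u v) e he

private lemma coord_one_comm (hTA : IsTableAlgebra A B deg lam)
    (hcoord : ∀ x : A, x = ∑ b ∈ B, coord b x • b) (u v : A) :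
    coord 1 (u * v) = coord 1 (v * u) := by
  have h1 : ∀ u v : A, coord 1 (u * v)
      = ∑ r ∈ B, coord r u * coord (star r) v * ((lam r (star r) 1 : ℝ) : ℂ) := by
    intro u v
    rw [coord_mul hTA hcoord u v hTA.one_mem]
    apply Finset.sum_congr rfl
    intro r hr
    apply Finset.sum_eq_single (star r)
    · intro s hs hne
      have h0 : lam r s 1 = 0 := by rw [lam_one_ite hTA hr hs, if_neg hne]
      simp [h0]
    · intro habs; exact absurd (hTA.star_mem r hr) habs
  rw [h1 u v, h1 v u]
  rw [← star_sum_reindex B (fun x hx => hTA.star_mem x hx)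
    (fun r => coord r v * coord (star r) u * ((lam r (star r) 1 : ℝ) : ℂ))]
  apply Finset.sum_congr rfl
  intro r hr
  rw [star_star, d_star hTA hr]
  ring

private lemma repr_mul_basis (hTA : IsTableAlgebra A B deg lam) (f : A → ℝ)
    {z : A} (hz : z ∈ B) :
    (∑ t ∈ B, ((f t : ℝ) : ℂ) • t) * z = ∑ e ∈ B, ((∑ t ∈ B, f t * lam t z e : ℝ) : ℂ) • e := by
  rw [Finset.sum_mul]
  have h1 : ∀ t ∈ B, (((f t : ℝ) : ℂ) • t) * z = ∑ e ∈ B, ((f t * lam t z e : ℝ) : ℂ) • e := by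
    intro t ht
    rw [smul_mul_assoc, hTA.struct t ht z hz, Finset.smul_sum]
    exact Finset.sum_congr rfl fun e _ => by rw [smul_smul]; norm_cast
  rw [Finset.sum_congr rfl h1, Finset.sum_comm]
  exact Finset.sum_congr rfl fun e _ => by rw [← Finset.sum_smul]; congr 1; push_cast; rfl

private lemma pair_eval (hTA : IsTableAlgebra A B deg lam)
    (hcoord : ∀ x : A, x = ∑ b ∈ B, coord b x • b) (f : A → ℝ) {b : A} (hb : b ∈ B) :
    coord 1 ((∑ t ∈ B, ((f t : ℝ) : ℂ) • t) * b)
      = ((f (star b) * lam b (star b) 1 : ℝ) : ℂ) := by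
  rw [coord_eq hTA hcoord _ _ (repr_mul_basis hTA f hb) 1 hTA.one_mem]
  norm_cast
  rw [← d_star hTA hb]
  apply Finset.sum_eq_single (star b)
  · intro t ht hne
    have h0 : lam t b 1 = 0 := by
      rw [lam_one_ite hTA ht hb]
      apply if_neg
      intro h
      apply hne
      rw [h, star_star]
    rw [h0, mul_zero]
  · intro h; exact absurd (hTA.star_mem b hb) h

private lemma coord_star (hTA : IsTableAlgebra A B deg lam)
    (hcoord : ∀ x : A, x = ∑ b ∈ B, coord b x • b) {z : A} (hz : z ∈ B) (x : A) :
    coord (star z) (star x) = (starRingEnd ℂ) (coord z x) := by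
  have hrep : star x = ∑ b ∈ B, (starRingEnd ℂ) (coord (star b) x) • b := by
    conv_lhs => rw [hcoord x]
    rw [star_sum, Finset.sum_congr rfl (fun b (_ : b ∈ B) => star_smul (coord b x) b)]
    rw [← star_sum_reindex B (fun x hx => hTA.star_mem x hx)
      (fun b => star (coord b x) • star b)]
    exact Finset.sum_congr rfl fun b _ => by rw [star_star]; rfl
  have h2 := coord_eq hTA hcoord _ _ hrep (star z) (hTA.star_mem z hz)
  rw [h2, star_star]

private lemma star_Cp (hTA : IsTableAlgebra A B deg lam)
    (hcoord : ∀ x : A, x = ∑ b ∈ B, coord b x • b) (hC : IsClosedSubset B C coord) :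
    star (∑ c ∈ C, c) = ∑ c ∈ C, c := by
  rw [star_sum]
  exact star_sum_reindex C (fun x hx => star_mem_C hTA hcoord hC hx) (fun c => c)

private def VV (lam : A → A → A → ℝ) (B C : Finset A) (b y : A) : ℝ :=
  ∑ t ∈ B, mm lam C b t * mm' lam C t y

private lemma CbC_repr (hTA : IsTableAlgebra A B deg lam) (hC : IsClosedSubset B C coord)
    {b : A} (hb : b ∈ B) :
    (∑ c ∈ C, c) * b * (∑ c ∈ C, c) = ∑ y ∈ B, ((VV lam B C b y : ℝ) : ℂ) • y := by
  rw [Crepr hTA hC hb, mulC_repr hTA hC (fun t => mm lam C b t)]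
  rfl

private lemma mem_DC (hTA : IsTableAlgebra A B deg lam)
    (hcoord : ∀ x : A, x = ∑ b ∈ B, coord b x • b) (hC : IsClosedSubset B C coord)
    {b : A} (hb : b ∈ B) {y : A} :
    y ∈ DCoset B coord C b ↔ (y ∈ B ∧ VV lam B C b y ≠ 0) := by
  unfold DCoset
  rw [Finset.mem_filter]
  constructor
  · rintro ⟨hyB, hne⟩
    refine ⟨hyB, fun h0 => hne ?_⟩
    rw [coord_eq hTA hcoord _ _ (CbC_repr hTA hC hb) y hyB, h0]
    norm_num
  · rintro ⟨hyB, hne⟩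
    refine ⟨hyB, ?_⟩
    rw [coord_eq hTA hcoord _ _ (CbC_repr hTA hC hb) y hyB]
    exact_mod_cast hne

private lemma V_nonneg (hTA : IsTableAlgebra A B deg lam) (hC : IsClosedSubset B C coord)
    {b y : A} (hb : b ∈ B) (hy : y ∈ B) : 0 ≤ VV lam B C b y :=
  Finset.sum_nonneg fun t ht =>
    mul_nonneg (m_nonneg hTA hC hb ht) (m'_nonneg hTA hC ht hy)

private lemma DC_self (hTA : IsTableAlgebra A B deg lam)
    (hcoord : ∀ x : A, x = ∑ b ∈ B, coord b x • b) (hC : IsClosedSubset B C coord)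
    {b : A} (hb : b ∈ B) : b ∈ DCoset B coord C b := by
  rw [mem_DC hTA hcoord hC hb]
  refine ⟨hb, ne_of_gt ?_⟩
  have h1 : mm lam C b b * mm' lam C b b ≤ VV lam B C b b :=
    Finset.single_le_sum (f := fun t => mm lam C b t * mm' lam C t b)
      (fun t ht => mul_nonneg (m_nonneg hTA hC hb ht) (m'_nonneg hTA hC ht hb)) hb
  have h2 := m_refl hTA hcoord hC hb
  have h3 := m'_refl hTA hcoord hC hb
  nlinarith

private lemma CpCbC (hTA : IsTableAlgebra A B deg lam)
    (hcoord : ∀ x : A, x = ∑ b ∈ B, coord b x • b) (hC : IsClosedSubset B C coord) (b : A) :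
    (∑ c ∈ C, c) * ((∑ c ∈ C, c) * b * (∑ c ∈ C, c))
      = ((∑ c ∈ C, lam c (star c) 1 : ℝ) : ℂ) • ((∑ c ∈ C, c) * b * (∑ c ∈ C, c)) := by
  rw [← mul_assoc, ← mul_assoc, CpCp hTA hcoord hC, smul_mul_assoc, smul_mul_assoc]

private lemma CbCCp (hTA : IsTableAlgebra A B deg lam)
    (hcoord : ∀ x : A, x = ∑ b ∈ B, coord b x • b) (hC : IsClosedSubset B C coord) (b : A) :
    ((∑ c ∈ C, c) * b * (∑ c ∈ C, c)) * (∑ c ∈ C, c)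
      = ((∑ c ∈ C, lam c (star c) 1 : ℝ) : ℂ) • ((∑ c ∈ C, c) * b * (∑ c ∈ C, c)) := by
  rw [mul_assoc ((∑ c ∈ C, c) * b), CpCp hTA hcoord hC, mul_smul_comm]

private lemma V_eig_left (hTA : IsTableAlgebra A B deg lam)
    (hcoord : ∀ x : A, x = ∑ b ∈ B, coord b x • b) (hC : IsClosedSubset B C coord)
    {b : A} (hb : b ∈ B) : ∀ z ∈ B,
    ∑ t ∈ B, VV lam B C b t * mm lam C t z
      = (∑ c ∈ C, lam c (star c) 1) * VV lam B C b z := by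
  have hel := CpCbC hTA hcoord hC b
  rw [CbC_repr hTA hC hb, Cmul_repr hTA hC, Finset.smul_sum] at hel
  have hel2 : ∑ s ∈ B, ((∑ t ∈ B, VV lam B C b t * mm lam C t s : ℝ) : ℂ) • s
      = ∑ s ∈ B, (((∑ c ∈ C, lam c (star c) 1) * VV lam B C b s : ℝ) : ℂ) • s := by
    rw [hel]
    exact Finset.sum_congr rfl fun s _ => by rw [smul_smul]; norm_cast
  intro z hz
  exact_mod_cast repr_unique hTA _ _ hel2 z hz

private lemma V_eig_right (hTA : IsTableAlgebra A B deg lam)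
    (hcoord : ∀ x : A, x = ∑ b ∈ B, coord b x • b) (hC : IsClosedSubset B C coord)
    {b : A} (hb : b ∈ B) : ∀ z ∈ B,
    ∑ t ∈ B, VV lam B C b t * mm' lam C t z
      = (∑ c ∈ C, lam c (star c) 1) * VV lam B C b z := by
  have hel := CbCCp hTA hcoord hC b
  rw [CbC_repr hTA hC hb, mulC_repr hTA hC, Finset.smul_sum] at hel
  have hel2 : ∑ s ∈ B, ((∑ t ∈ B, VV lam B C b t * mm' lam C t s : ℝ) : ℂ) • s
      = ∑ s ∈ B, (((∑ c ∈ C, lam c (star c) 1) * VV lam B C b s : ℝ) : ℂ) • s := by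
    rw [hel]
    exact Finset.sum_congr rfl fun s _ => by rw [smul_smul]; norm_cast
  intro z hz
  exact_mod_cast repr_unique hTA _ _ hel2 z hz

private lemma V_step_left (hTA : IsTableAlgebra A B deg lam)
    (hcoord : ∀ x : A, x = ∑ b ∈ B, coord b x • b) (hC : IsClosedSubset B C coord)
    {b t s : A} (hb : b ∈ B) (ht : t ∈ B) (hs : s ∈ B)
    (h1 : VV lam B C b t ≠ 0) (h2 : mm lam C t s ≠ 0) : VV lam B C b s ≠ 0 := by
  have hkey := V_eig_left hTA hcoord hC hb s hs
  have hge : VV lam B C b t * mm lam C t s ≤ ∑ y ∈ B, VV lam B C b y * mm lam C y s :=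
    Finset.single_le_sum (f := fun y => VV lam B C b y * mm lam C y s)
      (fun y hy => mul_nonneg (V_nonneg hTA hC hb hy) (m_nonneg hTA hC hy hs)) ht
  have hp1 : 0 < VV lam B C b t := lt_of_le_of_ne (V_nonneg hTA hC hb ht) (Ne.symm h1)
  have hp2 : 0 < mm lam C t s := lt_of_le_of_ne (m_nonneg hTA hC ht hs) (Ne.symm h2)
  intro h0
  rw [h0, mul_zero] at hkey
  nlinarith

private lemma V_step_right (hTA : IsTableAlgebra A B deg lam)
    (hcoord : ∀ x : A, x = ∑ b ∈ B, coord b x • b) (hC : IsClosedSubset B C coord)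
    {b t s : A} (hb : b ∈ B) (ht : t ∈ B) (hs : s ∈ B)
    (h1 : VV lam B C b t ≠ 0) (h2 : mm' lam C t s ≠ 0) : VV lam B C b s ≠ 0 := by
  have hkey := V_eig_right hTA hcoord hC hb s hs
  have hge : VV lam B C b t * mm' lam C t s ≤ ∑ y ∈ B, VV lam B C b y * mm' lam C y s :=
    Finset.single_le_sum (f := fun y => VV lam B C b y * mm' lam C y s)
      (fun y hy => mul_nonneg (V_nonneg hTA hC hb hy) (m'_nonneg hTA hC hy hs)) ht
  have hp1 : 0 < VV lam B C b t := lt_of_le_of_ne (V_nonneg hTA hC hb ht) (Ne.symm h1)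
  have hp2 : 0 < mm' lam C t s := lt_of_le_of_ne (m'_nonneg hTA hC ht hs) (Ne.symm h2)
  intro h0
  rw [h0, mul_zero] at hkey
  nlinarith

private lemma V_sq_key (hTA : IsTableAlgebra A B deg lam)
    (hcoord : ∀ x : A, x = ∑ b ∈ B, coord b x • b) (hC : IsClosedSubset B C coord)
    {b : A} (hb : b ∈ B) : ∀ z ∈ B,
    ∑ y ∈ B, VV lam B C b y * VV lam B C y z
      = ((∑ c ∈ C, lam c (star c) 1) * (∑ c ∈ C, lam c (star c) 1)) * VV lam B C b z := by
  have hel : ((∑ c ∈ C, c) * ((∑ c ∈ C, c) * b * (∑ c ∈ C, c))) * (∑ c ∈ C, c)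
      = (((∑ c ∈ C, lam c (star c) 1) * (∑ c ∈ C, lam c (star c) 1) : ℝ) : ℂ)
        • ((∑ c ∈ C, c) * b * (∑ c ∈ C, c)) := by
    rw [CpCbC hTA hcoord hC, smul_mul_assoc, CbCCp hTA hcoord hC, smul_smul]
    norm_cast
  rw [CbC_repr hTA hC hb, Cmul_repr hTA hC,
    mulC_repr hTA hC (fun s => ∑ t ∈ B, VV lam B C b t * mm lam C t s),
    Finset.smul_sum] at hel
  have hel2 : ∀ z ∈ B,
      ∑ s ∈ B, (∑ t ∈ B, VV lam B C b t * mm lam C t s) * mm' lam C s z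
        = ((∑ c ∈ C, lam c (star c) 1) * (∑ c ∈ C, lam c (star c) 1)) * VV lam B C b z := by
    intro z hz
    have := repr_unique hTA _ _ (hel.trans (Finset.sum_congr rfl fun s _ => by
      rw [smul_smul]; try norm_cast)) z hz
    exact_mod_cast this
  intro z hz
  rw [← hel2 z hz]
  calc ∑ y ∈ B, VV lam B C b y * VV lam B C y z
      = ∑ y ∈ B, ∑ s ∈ B, VV lam B C b y * (mm lam C y s * mm' lam C s z) := by
        apply Finset.sum_congr rfl
        intro y _
        rw [show VV lam B C y z = ∑ s ∈ B, mm lam C y s * mm' lam C s z from rfl,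
          Finset.mul_sum]
    _ = ∑ s ∈ B, ∑ y ∈ B, VV lam B C b y * (mm lam C y s * mm' lam C s z) := Finset.sum_comm
    _ = ∑ s ∈ B, (∑ t ∈ B, VV lam B C b t * mm lam C t s) * mm' lam C s z := by
        apply Finset.sum_congr rfl
        intro s _
        rw [Finset.sum_mul]
        exact Finset.sum_congr rfl fun y _ => by ring

private lemma V_sq (hTA : IsTableAlgebra A B deg lam)
    (hcoord : ∀ x : A, x = ∑ b ∈ B, coord b x • b) (hC : IsClosedSubset B C coord)
    {b y z : A} (hb : b ∈ B) (hy : y ∈ B) (hz : z ∈ B)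
    (h1 : VV lam B C b y ≠ 0) (h2 : VV lam B C y z ≠ 0) : VV lam B C b z ≠ 0 := by
  have hkey := V_sq_key hTA hcoord hC hb z hz
  have hge : VV lam B C b y * VV lam B C y z ≤ ∑ w ∈ B, VV lam B C b w * VV lam B C w z :=
    Finset.single_le_sum (f := fun w => VV lam B C b w * VV lam B C w z)
      (fun w hw => mul_nonneg (V_nonneg hTA hC hb hw) (V_nonneg hTA hC hw hz)) hy
  have hp1 : 0 < VV lam B C b y := lt_of_le_of_ne (V_nonneg hTA hC hb hy) (Ne.symm h1)
  have hp2 : 0 < VV lam B C y z := lt_of_le_of_ne (V_nonneg hTA hC hy hz) (Ne.symm h2)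
  intro h0
  rw [h0, mul_zero] at hkey
  nlinarith

private lemma V_star (hTA : IsTableAlgebra A B deg lam)
    (hcoord : ∀ x : A, x = ∑ b ∈ B, coord b x • b) (hC : IsClosedSubset B C coord)
    {b y : A} (hb : b ∈ B) (hy : y ∈ B) :
    VV lam B C (star b) (star y) = VV lam B C b y := by
  have h1 : star ((∑ c ∈ C, c) * b * (∑ c ∈ C, c)) = (∑ c ∈ C, c) * star b * (∑ c ∈ C, c) := by
    rw [StarMul.star_mul, StarMul.star_mul, star_Cp hTA hcoord hC, ← mul_assoc]
  have h2 := coord_star hTA hcoord hy ((∑ c ∈ C, c) * b * (∑ c ∈ C, c))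
  rw [h1, coord_eq hTA hcoord _ _ (CbC_repr hTA hC (hTA.star_mem b hb)) (star y)
      (hTA.star_mem y hy),
    coord_eq hTA hcoord _ _ (CbC_repr hTA hC hb) y hy, Complex.conj_ofReal] at h2
  exact_mod_cast h2

private lemma V_symm (hTA : IsTableAlgebra A B deg lam)
    (hcoord : ∀ x : A, x = ∑ b ∈ B, coord b x • b) (hC : IsClosedSubset B C coord)
    {b y : A} (hb : b ∈ B) (hy : y ∈ B) :
    VV lam B C b y * lam y (star y) 1 = VV lam B C y b * lam b (star b) 1 := by
  have hsy : star y ∈ B := hTA.star_mem y hy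
  have h1 : coord 1 (((∑ c ∈ C, c) * b * (∑ c ∈ C, c)) * star y)
      = ((VV lam B C b y * lam y (star y) 1 : ℝ) : ℂ) := by
    rw [CbC_repr hTA hC hb, pair_eval hTA hcoord (VV lam B C b) hsy, star_star]
    norm_cast
    rw [d_star hTA hy]
  have h2 : coord 1 (((∑ c ∈ C, c) * star y * (∑ c ∈ C, c)) * b)
      = ((VV lam B C y b * lam b (star b) 1 : ℝ) : ℂ) := by
    rw [CbC_repr hTA hC hsy, pair_eval hTA hcoord (VV lam B C (star y)) hb]
    norm_cast
    rw [V_star hTA hcoord hC hy hb]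
  have h3 : ((∑ c ∈ C, c) * b * (∑ c ∈ C, c)) * star y
      = ((∑ c ∈ C, c) * b) * ((∑ c ∈ C, c) * star y) := by rw [mul_assoc]
  have h4 : ((∑ c ∈ C, c) * star y * (∑ c ∈ C, c)) * b
      = ((∑ c ∈ C, c) * star y) * ((∑ c ∈ C, c) * b) := by rw [mul_assoc]
  have h5 := coord_one_comm hTA hcoord ((∑ c ∈ C, c) * b) ((∑ c ∈ C, c) * star y)
  rw [← h3, ← h4] at h5
  rw [h1, h2] at h5
  exact_mod_cast h5

private lemma DC_eq (hTA : IsTableAlgebra A B deg lam)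
    (hcoord : ∀ x : A, x = ∑ b ∈ B, coord b x • b) (hC : IsClosedSubset B C coord)
    {b y : A} (hb : b ∈ B) (hy : y ∈ DCoset B coord C b) :
    DCoset B coord C y = DCoset B coord C b := by
  obtain ⟨hyB, hVby⟩ := (mem_DC hTA hcoord hC hb).mp hy
  have hVyb : VV lam B C y b ≠ 0 := by
    intro h0
    have := V_symm hTA hcoord hC hb hyB
    rw [h0, zero_mul] at this
    exact hVby ((mul_eq_zero.mp this).resolve_right (ne_of_gt (hTA.deg_pos y hyB)))
  ext z
  rw [mem_DC hTA hcoord hC hyB, mem_DC hTA hcoord hC hb]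
  constructor
  · rintro ⟨hzB, hV⟩
    exact ⟨hzB, V_sq hTA hcoord hC hb hyB hzB hVby hV⟩
  · rintro ⟨hzB, hV⟩
    exact ⟨hzB, V_sq hTA hcoord hC hyB hb hzB hVyb hV⟩

private lemma const_of_eig {α : Type*} (B : Finset α) (n : ℝ) (m : α → α → ℝ) (g : α → ℝ)
    (hm : ∀ t ∈ B, ∀ s ∈ B, 0 ≤ m t s)
    (hrefl : ∀ t ∈ B, m t t ≠ 0)
    (hsymm : ∀ t ∈ B, ∀ s ∈ B, m t s ≠ 0 → m s t ≠ 0)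
    (htrans : ∀ t ∈ B, ∀ s ∈ B, ∀ r ∈ B, m t s ≠ 0 → m s r ≠ 0 → m t r ≠ 0)
    (hcol : ∀ s ∈ B, ∑ t ∈ B, m t s = n)
    (hg : ∀ t ∈ B, 0 ≤ g t)
    (heig : ∀ s ∈ B, ∑ t ∈ B, g t * m t s = n * g s) :
    ∀ t ∈ B, ∀ s ∈ B, m t s ≠ 0 → g t = g s := by
  intro t ht s hs hts
  set K := B.filter (fun r => m r t ≠ 0) with hK
  have hKB : ∀ r ∈ K, r ∈ B := fun r hr => (Finset.mem_filter.mp hr).1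
  have htK : t ∈ K := Finset.mem_filter.mpr ⟨ht, hrefl t ht⟩
  obtain ⟨s₀, hs₀K, hmax⟩ := Finset.exists_max_image K g ⟨t, htK⟩
  have hs₀B : s₀ ∈ B := hKB s₀ hs₀K
  have hms₀t : m s₀ t ≠ 0 := (Finset.mem_filter.mp hs₀K).2
  have hclique : ∀ r ∈ B, m r s₀ ≠ 0 ↔ r ∈ K := by
    intro r hr
    constructor
    · intro h
      exact Finset.mem_filter.mpr ⟨hr, htrans r hr s₀ hs₀B t ht h hms₀t⟩
    · intro hrK
      exact htrans r hr t ht s₀ hs₀B (Finset.mem_filter.mp hrK).2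
        (hsymm s₀ hs₀B t ht hms₀t)
  have hzero : ∑ r ∈ B, (g s₀ - g r) * m r s₀ = 0 := by
    simp_rw [sub_mul]
    rw [Finset.sum_sub_distrib, ← Finset.mul_sum, hcol s₀ hs₀B, heig s₀ hs₀B]
    ring
  have hterm : ∀ r ∈ B, (g s₀ - g r) * m r s₀ = 0 := by
    rw [← Finset.sum_eq_zero_iff_of_nonneg]
    · exact hzero
    · intro r hr
      by_cases h : m r s₀ = 0
      · rw [h, mul_zero]
      · have hrK := (hclique r hr).mp h
        exact mul_nonneg (sub_nonneg.mpr (hmax r hrK)) (hm r hr s₀ hs₀B)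
  have hkey : ∀ r ∈ B, m r s₀ ≠ 0 → g r = g s₀ := by
    intro r hr h
    have := hterm r hr
    rcases mul_eq_zero.mp this with h1 | h1
    · linarith [sub_eq_zero.mp h1]
    · exact absurd h1 h
  have h1 : g t = g s₀ := hkey t ht ((hclique t ht).mpr htK)
  have hsK : s ∈ K := Finset.mem_filter.mpr ⟨hs, hsymm t ht s hs hts⟩
  have h2 : g s = g s₀ := hkey s hs ((hclique s hs).mpr hsK)
  rw [h1, h2]

private lemma const_on_DC (hTA : IsTableAlgebra A B deg lam)
    (hcoord : ∀ x : A, x = ∑ b ∈ B, coord b x • b) (hC : IsClosedSubset B C coord)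
    (g : A → ℝ) (hg : ∀ t ∈ B, 0 ≤ g t)
    (heigL : ∀ s ∈ B, ∑ t ∈ B, g t * mm lam C t s = (∑ c ∈ C, lam c (star c) 1) * g s)
    (heigR : ∀ s ∈ B, ∑ t ∈ B, g t * mm' lam C t s = (∑ c ∈ C, lam c (star c) 1) * g s)
    {b z : A} (hb : b ∈ B) (hz : z ∈ DCoset B coord C b) : g z = g b := by
  obtain ⟨hzB, hV⟩ := (mem_DC hTA hcoord hC hb).mp hz
  obtain ⟨y, hyB, hy0⟩ := Finset.exists_ne_zero_of_sum_ne_zero hV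
  have h1 : mm lam C b y ≠ 0 := fun h => hy0 (by rw [h, zero_mul])
  have h2 : mm' lam C y z ≠ 0 := fun h => hy0 (by rw [h, mul_zero])
  have constL := const_of_eig B (∑ c ∈ C, lam c (star c) 1) (mm lam C) g
    (fun t ht s hs => m_nonneg hTA hC ht hs)
    (fun t ht => ne_of_gt (m_refl hTA hcoord hC ht))
    (fun t ht s hs h => m_symm_ne hTA hcoord hC ht hs h)
    (fun t ht s hs r hr hh1 hh2 => m_trans hTA hcoord hC ht hs hr hh1 hh2)
    (fun s hs => m_col hTA hcoord hC hs) hg heigL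
  have constR := const_of_eig B (∑ c ∈ C, lam c (star c) 1) (mm' lam C) g
    (fun t ht s hs => m'_nonneg hTA hC ht hs)
    (fun t ht => ne_of_gt (m'_refl hTA hcoord hC ht))
    (fun t ht s hs h => m'_symm_ne hTA hcoord hC ht hs h)
    (fun t ht s hs r hr hh1 hh2 => m'_trans hTA hcoord hC ht hs hr hh1 hh2)
    (fun s hs => m'_col hTA hcoord hC hs) hg heigR
  have e1 : g b = g y := constL b hb y hyB h1
  have e2 : g y = g z := constR y hyB z hzB h2
  rw [← e2, ← e1]

private lemma DC_subset : DCoset B coord C b ⊆ B := by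
  unfold DCoset
  exact Finset.filter_subset _ _

private lemma DC_ind_repr (hDC : DCoset B coord C b ⊆ B) :
    ∑ x ∈ DCoset B coord C b, x
      = ∑ t ∈ B, (((if t ∈ DCoset B coord C b then (1 : ℝ) else 0) : ℝ) : ℂ) • t := by
  symm
  calc ∑ t ∈ B, (((if t ∈ DCoset B coord C b then (1 : ℝ) else 0) : ℝ) : ℂ) • t
      = ∑ t ∈ B, (if t ∈ DCoset B coord C b then t else 0) := by
        apply Finset.sum_congr rfl
        intro t _
        split <;> simp
    _ = ∑ t ∈ B ∩ DCoset B coord C b, t := Finset.sum_ite_mem B _ _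
    _ = ∑ x ∈ DCoset B coord C b, x := by rw [Finset.inter_eq_right.2 hDC]

private lemma DC_col (hTA : IsTableAlgebra A B deg lam)
    (hcoord : ∀ x : A, x = ∑ b ∈ B, coord b x • b) (hC : IsClosedSubset B C coord)
    {i : A} (hi : i ∈ B) {s : A} (hs : s ∈ B) :
    ∑ t ∈ DCoset B coord C i, mm lam C t s
      = if s ∈ DCoset B coord C i then (∑ c ∈ C, lam c (star c) 1) else 0 := by
  by_cases hsd : s ∈ DCoset B coord C i
  · rw [if_pos hsd]
    obtain ⟨hsB, hVs⟩ := (mem_DC hTA hcoord hC hi).mp hsd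
    rw [Finset.sum_subset (DC_subset : DCoset B coord C i ⊆ B)]
    · exact m_col hTA hcoord hC hs
    · intro t htB htd
      by_contra h
      have h2 := m_symm_ne hTA hcoord hC htB hsB h
      exact htd ((mem_DC hTA hcoord hC hi).mpr
        ⟨htB, V_step_left hTA hcoord hC hi hsB htB hVs h2⟩)
  · rw [if_neg hsd]
    apply Finset.sum_eq_zero
    intro t htd
    have htB : t ∈ B := DC_subset htd
    have hVt : VV lam B C i t ≠ 0 := ((mem_DC hTA hcoord hC hi).mp htd).2
    by_contra h
    exact hsd ((mem_DC hTA hcoord hC hi).mpr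
      ⟨hs, V_step_left hTA hcoord hC hi htB hs hVt h⟩)

private lemma DC_col' (hTA : IsTableAlgebra A B deg lam)
    (hcoord : ∀ x : A, x = ∑ b ∈ B, coord b x • b) (hC : IsClosedSubset B C coord)
    {i : A} (hi : i ∈ B) {s : A} (hs : s ∈ B) :
    ∑ t ∈ DCoset B coord C i, mm' lam C t s
      = if s ∈ DCoset B coord C i then (∑ c ∈ C, lam c (star c) 1) else 0 := by
  by_cases hsd : s ∈ DCoset B coord C i
  · rw [if_pos hsd]
    obtain ⟨hsB, hVs⟩ := (mem_DC hTA hcoord hC hi).mp hsd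
    rw [Finset.sum_subset (DC_subset : DCoset B coord C i ⊆ B)]
    · exact m'_col hTA hcoord hC hs
    · intro t htB htd
      by_contra h
      have h2 := m'_symm_ne hTA hcoord hC htB hsB h
      exact htd ((mem_DC hTA hcoord hC hi).mpr
        ⟨htB, V_step_right hTA hcoord hC hi hsB htB hVs h2⟩)
  · rw [if_neg hsd]
    apply Finset.sum_eq_zero
    intro t htd
    have htB : t ∈ B := DC_subset htd
    have hVt : VV lam B C i t ≠ 0 := ((mem_DC hTA hcoord hC hi).mp htd).2
    by_contra h
    exact hsd ((mem_DC hTA hcoord hC hi).mpr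
      ⟨hs, V_step_right hTA hcoord hC hi htB hs hVt h⟩)

private lemma CpDC (hTA : IsTableAlgebra A B deg lam)
    (hcoord : ∀ x : A, x = ∑ b ∈ B, coord b x • b) (hC : IsClosedSubset B C coord)
    {i : A} (hi : i ∈ B) :
    (∑ c ∈ C, c) * (∑ x ∈ DCoset B coord C i, x)
      = ((∑ c ∈ C, lam c (star c) 1 : ℝ) : ℂ) • ∑ x ∈ DCoset B coord C i, x := by
  rw [DC_ind_repr (DC_subset : DCoset B coord C i ⊆ B),
    Cmul_repr hTA hC (fun t => if t ∈ DCoset B coord C i then (1 : ℝ) else 0)]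
  rw [Finset.smul_sum]
  apply Finset.sum_congr rfl
  intro s hs
  rw [smul_smul]
  have hcoef : ∑ t ∈ B, (if t ∈ DCoset B coord C i then (1 : ℝ) else 0) * mm lam C t s
      = (∑ c ∈ C, lam c (star c) 1) * (if s ∈ DCoset B coord C i then (1 : ℝ) else 0) := by
    calc ∑ t ∈ B, (if t ∈ DCoset B coord C i then (1 : ℝ) else 0) * mm lam C t s
        = ∑ t ∈ B, (if t ∈ DCoset B coord C i then mm lam C t s else 0) := by
          apply Finset.sum_congr rfl
          intro t _
          split <;> simp
      _ = ∑ t ∈ B ∩ DCoset B coord C i, mm lam C t s := Finset.sum_ite_mem B _ _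
      _ = ∑ t ∈ DCoset B coord C i, mm lam C t s := by
          rw [Finset.inter_eq_right.2 (DC_subset : DCoset B coord C i ⊆ B)]
      _ = _ := by rw [DC_col hTA hcoord hC hi hs]; split <;> simp
  rw [hcoef]
  norm_cast

private lemma DCCp (hTA : IsTableAlgebra A B deg lam)
    (hcoord : ∀ x : A, x = ∑ b ∈ B, coord b x • b) (hC : IsClosedSubset B C coord)
    {i : A} (hi : i ∈ B) :
    (∑ x ∈ DCoset B coord C i, x) * (∑ c ∈ C, c)
      = ((∑ c ∈ C, lam c (star c) 1 : ℝ) : ℂ) • ∑ x ∈ DCoset B coord C i, x := by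
  rw [DC_ind_repr (DC_subset : DCoset B coord C i ⊆ B),
    mulC_repr hTA hC (fun t => if t ∈ DCoset B coord C i then (1 : ℝ) else 0)]
  rw [Finset.smul_sum]
  apply Finset.sum_congr rfl
  intro s hs
  rw [smul_smul]
  have hcoef : ∑ t ∈ B, (if t ∈ DCoset B coord C i then (1 : ℝ) else 0) * mm' lam C t s
      = (∑ c ∈ C, lam c (star c) 1) * (if s ∈ DCoset B coord C i then (1 : ℝ) else 0) := by
    calc ∑ t ∈ B, (if t ∈ DCoset B coord C i then (1 : ℝ) else 0) * mm' lam C t s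
        = ∑ t ∈ B, (if t ∈ DCoset B coord C i then mm' lam C t s else 0) := by
          apply Finset.sum_congr rfl
          intro t _
          split <;> simp
      _ = ∑ t ∈ B ∩ DCoset B coord C i, mm' lam C t s := Finset.sum_ite_mem B _ _
      _ = ∑ t ∈ DCoset B coord C i, mm' lam C t s := by
          rw [Finset.inter_eq_right.2 (DC_subset : DCoset B coord C i ⊆ B)]
      _ = _ := by rw [DC_col' hTA hcoord hC hi hs]; split <;> simp
  rw [hcoef]
  norm_cast

private noncomputable def FF (lam : A → A → A → ℝ) (B : Finset A) (coord : A → A → ℂ) (C : Finset A)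
    (i j t : A) : ℝ :=
  ∑ r ∈ DCoset B coord C i, ∑ s ∈ DCoset B coord C j, lam r s t

private lemma FF_nonneg (hTA : IsTableAlgebra A B deg lam) {i j t : A} (ht : t ∈ B) :
    0 ≤ FF lam B coord C i j t :=
  Finset.sum_nonneg fun r hr => Finset.sum_nonneg fun s hs =>
    hTA.lam_nonneg r (DC_subset hr) s (DC_subset hs) t ht

private lemma DCij_repr (hTA : IsTableAlgebra A B deg lam) (i j : A) :
    (∑ x ∈ DCoset B coord C i, x) * (∑ y ∈ DCoset B coord C j, y)
      = ∑ t ∈ B, ((FF lam B coord C i j t : ℝ) : ℂ) • t := by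
  rw [Finset.sum_mul_sum]
  rw [Finset.sum_congr rfl (fun r hr => Finset.sum_congr rfl
    (fun s hs => hTA.struct r (DC_subset hr) s (DC_subset hs)))]
  rw [Finset.sum_congr rfl (fun r (_ : r ∈ DCoset B coord C i) => Finset.sum_comm),
    Finset.sum_comm]
  apply Finset.sum_congr rfl
  intro t _
  rw [show ((FF lam B coord C i j t : ℝ) : ℂ)
    = ∑ r ∈ DCoset B coord C i, ∑ s ∈ DCoset B coord C j, ((lam r s t : ℝ) : ℂ) by
      unfold FF; push_cast; rfl]
  simp [Finset.sum_smul]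

private lemma F_eig_left (hTA : IsTableAlgebra A B deg lam)
    (hcoord : ∀ x : A, x = ∑ b ∈ B, coord b x • b) (hC : IsClosedSubset B C coord)
    {i j : A} (hi : i ∈ B) (hj : j ∈ B) : ∀ z ∈ B,
    ∑ t ∈ B, FF lam B coord C i j t * mm lam C t z
      = (∑ c ∈ C, lam c (star c) 1) * FF lam B coord C i j z := by
  have hel : (∑ c ∈ C, c) * ((∑ x ∈ DCoset B coord C i, x) * (∑ y ∈ DCoset B coord C j, y))
      = ((∑ c ∈ C, lam c (star c) 1 : ℝ) : ℂ)
        • ((∑ x ∈ DCoset B coord C i, x) * (∑ y ∈ DCoset B coord C j, y)) := by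
    rw [← mul_assoc, CpDC hTA hcoord hC hi, smul_mul_assoc]
  rw [DCij_repr hTA i j, Cmul_repr hTA hC, Finset.smul_sum] at hel
  have hel2 : ∑ s ∈ B, ((∑ t ∈ B, FF lam B coord C i j t * mm lam C t s : ℝ) : ℂ) • s
      = ∑ s ∈ B, (((∑ c ∈ C, lam c (star c) 1) * FF lam B coord C i j s : ℝ) : ℂ) • s := by
    rw [hel]
    exact Finset.sum_congr rfl fun s _ => by rw [smul_smul]; try norm_cast
  intro z hz
  exact_mod_cast repr_unique hTA _ _ hel2 z hz

private lemma F_eig_right (hTA : IsTableAlgebra A B deg lam)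
    (hcoord : ∀ x : A, x = ∑ b ∈ B, coord b x • b) (hC : IsClosedSubset B C coord)
    {i j : A} (hi : i ∈ B) (hj : j ∈ B) : ∀ z ∈ B,
    ∑ t ∈ B, FF lam B coord C i j t * mm' lam C t z
      = (∑ c ∈ C, lam c (star c) 1) * FF lam B coord C i j z := by
  have hel : ((∑ x ∈ DCoset B coord C i, x) * (∑ y ∈ DCoset B coord C j, y)) * (∑ c ∈ C, c)
      = ((∑ c ∈ C, lam c (star c) 1 : ℝ) : ℂ)
        • ((∑ x ∈ DCoset B coord C i, x) * (∑ y ∈ DCoset B coord C j, y)) := by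
    rw [mul_assoc, DCCp hTA hcoord hC hj, mul_smul_comm]
  rw [DCij_repr hTA i j, mulC_repr hTA hC, Finset.smul_sum] at hel
  have hel2 : ∑ s ∈ B, ((∑ t ∈ B, FF lam B coord C i j t * mm' lam C t s : ℝ) : ℂ) • s
      = ∑ s ∈ B, (((∑ c ∈ C, lam c (star c) 1) * FF lam B coord C i j s : ℝ) : ℂ) • s := by
    rw [hel]
    exact Finset.sum_congr rfl fun s _ => by rw [smul_smul]; try norm_cast
  intro z hz
  exact_mod_cast repr_unique hTA _ _ hel2 z hz

private lemma F_const (hTA : IsTableAlgebra A B deg lam)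
    (hcoord : ∀ x : A, x = ∑ b ∈ B, coord b x • b) (hC : IsClosedSubset B C coord)
    {i j k : A} (hi : i ∈ B) (hj : j ∈ B) (hk : k ∈ B) {t : A}
    (ht : t ∈ DCoset B coord C k) :
    FF lam B coord C i j t = FF lam B coord C i j k :=
  const_on_DC hTA hcoord hC (fun t => FF lam B coord C i j t)
    (fun t ht => FF_nonneg hTA ht)
    (F_eig_left hTA hcoord hC hi hj) (F_eig_right hTA hcoord hC hi hj) hk ht

end Aux

/-- the quotient of a table algebra by a closed subset is a table algebra
with unit `e = |C⁺|⁻¹ C⁺`, basis `{bᵢ/C}` and structure constants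
`γ_{ijk} = |C⁺|⁻¹ ∑_{r ∈ C bᵢ C, s ∈ C bⱼ C} λ_{rst}` (independent of `t ∈ C bₖ C`). -/
theorem stmt5 {A : Type*} [Ring A] [Algebra ℂ A] [StarRing A] [StarModule ℂ A]
    (B : Finset A) (deg : A →ₐ[ℂ] ℂ) (lam : A → A → A → ℝ)
    (hTA : IsTableAlgebra A B deg lam)
    -- `coord b x` is the coefficient of the basis element `b ∈ B` in `x`
    (coord : A → A → ℂ) (hcoord : ∀ x : A, x = ∑ b ∈ B, coord b x • b)
    (C : Finset A) (hC : IsClosedSubset B C coord)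
    -- `T` is a complete set of representatives of the `C`-double cosets, with `1 ∈ T`
    (T : Finset A) (hTB : T ⊆ B) (h1T : (1 : A) ∈ T)
    (hreps : ∀ b ∈ B, ∃! t, t ∈ T ∧ b ∈ DCoset B coord C t)
    (e : A) (he : e = (∑ c ∈ C, deg c)⁻¹ • ∑ c ∈ C, c)
    (S : Submodule ℂ A) (hS : S = Submodule.span ℂ {x | ∃ t ∈ T, x = quo B deg coord C t}) :
    -- `e` is an idempotent lying in the span, and is a two-sided unit for it
    e * e = e ∧ e ∈ S ∧
    (∀ x ∈ S, e * x = x ∧ x * e = x) ∧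
    -- the span is closed under multiplication and under `star`
    (∀ x ∈ S, ∀ y ∈ S, x * y ∈ S) ∧
    (∀ t ∈ T, star (quo B deg coord C t) ∈ S) ∧
    -- the elements `bᵢ/C` are linearly independent (they form a basis of the span)
    LinearIndependent ℂ (fun t : ↥(T : Set A) => quo B deg coord C (t : A)) ∧
    -- nonnegative real structure constants, given by the double coset formula,
    -- whose value does not depend on the choice of `t ∈ C bₖ C`
    (∃ γ : A → A → A → ℝ,
      (∀ i ∈ T, ∀ j ∈ T, ∀ k ∈ T, 0 ≤ γ i j k) ∧
      (∀ i ∈ T, ∀ j ∈ T, ∀ k ∈ T, ∀ t ∈ DCoset B coord C k,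
        (γ i j k : ℂ) = (∑ c ∈ C, deg c)⁻¹ *
          ∑ r ∈ DCoset B coord C i, ∑ s ∈ DCoset B coord C j, (lam r s t : ℂ)) ∧
      (∀ i ∈ T, ∀ j ∈ T,
        quo B deg coord C i * quo B deg coord C j =
          ∑ k ∈ T, (γ i j k : ℂ) • quo B deg coord C k)) := by
  classical
  subst hS
  have hnR : (0:ℝ) < ∑ c ∈ C, lam c (star c) 1 := nR_pos hTA hC
  have hdegC : (∑ c ∈ C, deg c) = ((∑ c ∈ C, lam c (star c) 1 : ℝ) : ℂ) := deg_sum_eq hTA hC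
  have hnC : ((∑ c ∈ C, lam c (star c) 1 : ℝ) : ℂ) ≠ 0 := by
    exact_mod_cast ne_of_gt hnR
  have he' : e = ((∑ c ∈ C, lam c (star c) 1 : ℝ) : ℂ)⁻¹ • ∑ c ∈ C, c := by
    rw [he, hdegC]
  have hquo : ∀ t : A, quo B deg coord C t
      = ((∑ c ∈ C, lam c (star c) 1 : ℝ) : ℂ)⁻¹ • ∑ x ∈ DCoset B coord C t, x := by
    intro t; unfold quo; rw [hdegC]
  -- Goal 1 : e is idempotent
  have hidem : e * e = e := by
    rw [he', smul_mul_smul_comm, CpCp hTA hcoord hC, smul_smul]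
    congr 1
    field_simp
  -- e = quo 1
  have hDC1 : DCoset B coord C 1 = C := by
    have hCp_repr : ((∑ c ∈ C, lam c (star c) 1 : ℝ) : ℂ) • (∑ c ∈ C, c)
        = ∑ b ∈ B, ((if b ∈ C then ((∑ c ∈ C, lam c (star c) 1 : ℝ) : ℂ) else 0)) • b := by
      calc ((∑ c ∈ C, lam c (star c) 1 : ℝ) : ℂ) • (∑ c ∈ C, c)
          = ∑ c ∈ C, ((∑ c ∈ C, lam c (star c) 1 : ℝ) : ℂ) • c := Finset.smul_sum
        _ = ∑ b ∈ B ∩ C, ((∑ c ∈ C, lam c (star c) 1 : ℝ) : ℂ) • b := by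
            rw [Finset.inter_eq_right.2 hC.2.1]
        _ = ∑ b ∈ B, (if b ∈ C then ((∑ c ∈ C, lam c (star c) 1 : ℝ) : ℂ) • b else 0) :=
            (Finset.sum_ite_mem B C _).symm
        _ = _ := by
            apply Finset.sum_congr rfl
            intro b _
            split <;> simp
    have hCC : (∑ c ∈ C, c) * (1:A) * (∑ c ∈ C, c)
        = ∑ b ∈ B, ((if b ∈ C then ((∑ c ∈ C, lam c (star c) 1 : ℝ) : ℂ) else 0)) • b := by
      rw [mul_one, CpCp hTA hcoord hC, hCp_repr]
    ext y
    unfold DCoset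
    rw [Finset.mem_filter]
    constructor
    · rintro ⟨hyB, hne⟩
      by_contra hyC
      apply hne
      rw [coord_eq hTA hcoord _ _ hCC y hyB, if_neg hyC]
    · intro hyC
      have hyB : y ∈ B := hC.2.1 hyC
      refine ⟨hyB, ?_⟩
      rw [coord_eq hTA hcoord _ _ hCC y hyB, if_pos hyC]
      exact hnC
  have heq1 : e = quo B deg coord C 1 := by
    rw [he', hquo, hDC1]
  have heS : e ∈ Submodule.span ℂ {x | ∃ t ∈ T, x = quo B deg coord C t} :=
    Submodule.subset_span ⟨1, h1T, heq1⟩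
  -- units on generators
  have hunit : ∀ t ∈ T, e * quo B deg coord C t = quo B deg coord C t ∧
      quo B deg coord C t * e = quo B deg coord C t := by
    intro t htT
    have htB : t ∈ B := hTB htT
    constructor
    · rw [he', hquo, smul_mul_smul_comm, CpDC hTA hcoord hC htB, smul_smul]
      congr 1
      field_simp
    · rw [he', hquo, smul_mul_smul_comm, DCCp hTA hcoord hC htB, smul_smul]
      congr 1
      field_simp
  have hunitS : ∀ x ∈ Submodule.span ℂ {x | ∃ t ∈ T, x = quo B deg coord C t},
      e * x = x ∧ x * e = x := by
    intro x hx
    induction hx using Submodule.span_induction with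
    | mem x hmem =>
      obtain ⟨t, htT, rfl⟩ := hmem
      exact hunit t htT
    | zero => simp
    | add x y _ _ ih1 ih2 =>
      exact ⟨by rw [mul_add, ih1.1, ih2.1], by rw [add_mul, ih1.2, ih2.2]⟩
    | smul a x _ ih =>
      exact ⟨by rw [mul_smul_comm, ih.1], by rw [smul_mul_assoc, ih.2]⟩
  -- partition of B into double cosets
  have hdisj : (T : Set A).PairwiseDisjoint (fun t => DCoset B coord C t) := by
    intro t1 ht1 t2 ht2 hne
    show Disjoint (DCoset B coord C t1) (DCoset B coord C t2)
    rw [Finset.disjoint_left]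
    intro x hx1 hx2
    have hxB : x ∈ B := DC_subset hx1
    obtain ⟨t, _, huniq⟩ := hreps x hxB
    exact hne ((huniq t1 ⟨ht1, hx1⟩).trans (huniq t2 ⟨ht2, hx2⟩).symm)
  have hBU : B = T.biUnion (fun t => DCoset B coord C t) := by
    ext x
    constructor
    · intro hx
      obtain ⟨t, ⟨htT, hxd⟩, _⟩ := hreps x hx
      exact Finset.mem_biUnion.mpr ⟨t, htT, hxd⟩
    · intro hx
      obtain ⟨t, _, hxd⟩ := Finset.mem_biUnion.mp hx
      exact DC_subset hxd
  -- the product formula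
  have hprod : ∀ i ∈ T, ∀ j ∈ T,
      quo B deg coord C i * quo B deg coord C j
        = ∑ k ∈ T, (((∑ c ∈ C, lam c (star c) 1)⁻¹ * FF lam B coord C i j k : ℝ) : ℂ)
            • quo B deg coord C k := by
    intro i hiT j hjT
    have hiB : i ∈ B := hTB hiT
    have hjB : j ∈ B := hTB hjT
    rw [hquo i, hquo j, smul_mul_smul_comm, DCij_repr hTA i j]
    have hpart : ∑ t ∈ B, ((FF lam B coord C i j t : ℝ) : ℂ) • t
        = ∑ k ∈ T, ((FF lam B coord C i j k : ℝ) : ℂ) • ∑ x ∈ DCoset B coord C k, x := by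
      have hstep : (∑ t ∈ B, ((FF lam B coord C i j t : ℝ) : ℂ) • t)
          = ∑ t ∈ T.biUnion (fun k => DCoset B coord C k),
              ((FF lam B coord C i j t : ℝ) : ℂ) • t := by rw [← hBU]
      rw [hstep, Finset.sum_biUnion hdisj]
      apply Finset.sum_congr rfl
      intro k hkT
      rw [Finset.smul_sum]
      apply Finset.sum_congr rfl
      intro t ht
      rw [F_const hTA hcoord hC hiB hjB (hTB hkT) ht]
    rw [hpart, Finset.smul_sum]
    apply Finset.sum_congr rfl
    intro k hkT
    rw [hquo k, smul_smul, smul_smul]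
    congr 1
    push_cast
    ring
  -- multiplicative closure
  have hmulS : ∀ x ∈ Submodule.span ℂ {x | ∃ t ∈ T, x = quo B deg coord C t},
      ∀ y ∈ Submodule.span ℂ {x | ∃ t ∈ T, x = quo B deg coord C t},
      x * y ∈ Submodule.span ℂ {x | ∃ t ∈ T, x = quo B deg coord C t} := by
    have hgen : ∀ i ∈ T,
        ∀ y ∈ Submodule.span ℂ {x | ∃ t ∈ T, x = quo B deg coord C t},
        quo B deg coord C i * y ∈ Submodule.span ℂ {x | ∃ t ∈ T, x = quo B deg coord C t} := by
      intro i hiT y hy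
      induction hy using Submodule.span_induction with
      | mem y hmem =>
        obtain ⟨j, hjT, rfl⟩ := hmem
        rw [hprod i hiT j hjT]
        apply Submodule.sum_mem
        intro k hkT
        exact Submodule.smul_mem _ _ (Submodule.subset_span ⟨k, hkT, rfl⟩)
      | zero => rw [mul_zero]; exact Submodule.zero_mem _
      | add y z _ _ ih1 ih2 => rw [mul_add]; exact Submodule.add_mem _ ih1 ih2
      | smul a y _ ih => rw [mul_smul_comm]; exact Submodule.smul_mem _ _ ih
    intro x hx y hy
    induction hx using Submodule.span_induction with
    | mem x hmem =>
      obtain ⟨i, hiT, rfl⟩ := hmem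
      exact hgen i hiT y hy
    | zero => rw [zero_mul]; exact Submodule.zero_mem _
    | add x z _ _ ih1 ih2 => rw [add_mul]; exact Submodule.add_mem _ ih1 ih2
    | smul a x _ ih => rw [smul_mul_assoc]; exact Submodule.smul_mem _ _ ih
  -- star closure
  have hstarS : ∀ t ∈ T, star (quo B deg coord C t)
      ∈ Submodule.span ℂ {x | ∃ t ∈ T, x = quo B deg coord C t} := by
    intro t htT
    have htB : t ∈ B := hTB htT
    have hstB : star t ∈ B := hTA.star_mem t htB
    obtain ⟨k, ⟨hkT, hstk⟩, _⟩ := hreps (star t) hstB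
    have hDCeq : DCoset B coord C (star t) = DCoset B coord C k :=
      DC_eq hTA hcoord hC (hTB hkT) hstk
    have hstar : star (quo B deg coord C t) = quo B deg coord C k := by
      rw [hquo t, hquo k, star_smul]
      have hsc : star (((∑ c ∈ C, lam c (star c) 1 : ℝ) : ℂ)⁻¹)
          = ((∑ c ∈ C, lam c (star c) 1 : ℝ) : ℂ)⁻¹ := by
        rw [star_inv₀]
        congr 1
        rw [Complex.star_def, Complex.conj_ofReal]
      rw [hsc]
      congr 1
      rw [star_sum, ← hDCeq]
      apply Finset.sum_nbij' (fun x => star x) (fun x => star x)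
      · intro x hx
        have hxB : x ∈ B := DC_subset hx
        rw [mem_DC hTA hcoord hC hstB]
        refine ⟨hTA.star_mem x hxB, ?_⟩
        rw [V_star hTA hcoord hC htB hxB]
        exact ((mem_DC hTA hcoord hC htB).mp hx).2
      · intro x hx
        have hxB : x ∈ B := DC_subset hx
        rw [mem_DC hTA hcoord hC htB]
        refine ⟨hTA.star_mem x hxB, ?_⟩
        have h2 : VV lam B C t (star x) = VV lam B C (star t) x := by
          rw [← V_star hTA hcoord hC htB (hTA.star_mem x hxB)]
          · rw [star_star]
        rw [h2]
        exact ((mem_DC hTA hcoord hC hstB).mp hx).2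
      · intro x _; exact star_star x
      · intro x _; exact star_star x
      · intro x _; rfl
    rw [hstar]
    exact Submodule.subset_span ⟨k, hkT, rfl⟩
  -- linear independence
  have hli : LinearIndependent ℂ (fun t : ↥(T : Set A) => quo B deg coord C (t : A)) := by
    rw [Fintype.linearIndependent_iff]
    intro g hg i
    set G : A → ℂ := fun a => if h : a ∈ T then g ⟨a, h⟩ else 0 with hG
    have hGT : ∀ t : ↥(T : Set A), G (t : A) = g t := by
      intro t
      exact dif_pos t.2
    have hsum0 : ∑ t ∈ T, G t • quo B deg coord C t = 0 := by
      rw [← Finset.sum_coe_sort T (fun t => G t • quo B deg coord C t)]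
      rw [← hg]
      exact Finset.sum_congr rfl fun t _ => by rw [hGT t]
    have hexp : ∑ t ∈ T, G t • quo B deg coord C t
        = ∑ b ∈ B, (∑ t ∈ T, if b ∈ DCoset B coord C t
            then G t * ((∑ c ∈ C, lam c (star c) 1 : ℝ) : ℂ)⁻¹ else 0) • b := by
      calc ∑ t ∈ T, G t • quo B deg coord C t
          = ∑ t ∈ T, ∑ b ∈ B, (if b ∈ DCoset B coord C t
              then G t * ((∑ c ∈ C, lam c (star c) 1 : ℝ) : ℂ)⁻¹ else 0) • b := by
            apply Finset.sum_congr rfl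
            intro t _
            rw [hquo t, smul_smul]
            calc (G t * ((∑ c ∈ C, lam c (star c) 1 : ℝ) : ℂ)⁻¹) • ∑ x ∈ DCoset B coord C t, x
                = ∑ x ∈ DCoset B coord C t,
                    (G t * ((∑ c ∈ C, lam c (star c) 1 : ℝ) : ℂ)⁻¹) • x := Finset.smul_sum
              _ = ∑ b ∈ B ∩ DCoset B coord C t,
                    (G t * ((∑ c ∈ C, lam c (star c) 1 : ℝ) : ℂ)⁻¹) • b := by
                  rw [Finset.inter_eq_right.2 (DC_subset : DCoset B coord C t ⊆ B)]
              _ = ∑ b ∈ B, (if b ∈ DCoset B coord C t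
                    then (G t * ((∑ c ∈ C, lam c (star c) 1 : ℝ) : ℂ)⁻¹) • b else 0) :=
                  (Finset.sum_ite_mem B _ _).symm
              _ = ∑ b ∈ B, (if b ∈ DCoset B coord C t
                    then G t * ((∑ c ∈ C, lam c (star c) 1 : ℝ) : ℂ)⁻¹ else 0) • b := by
                  apply Finset.sum_congr rfl
                  intro b _
                  split <;> simp
        _ = _ := by
            rw [Finset.sum_comm]
            exact Finset.sum_congr rfl fun b _ => by rw [Finset.sum_smul]
    have hz : ∀ b ∈ B, (∑ t ∈ T, if b ∈ DCoset B coord C t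
        then G t * ((∑ c ∈ C, lam c (star c) 1 : ℝ) : ℂ)⁻¹ else 0) = (fun _ => (0:ℂ)) b := by
      apply repr_unique hTA
      rw [← hexp, hsum0]
      simp
    have hiT : (i : A) ∈ T := i.2
    have hiB : (i : A) ∈ B := hTB hiT
    have hval := hz (i : A) hiB
    rw [Finset.sum_eq_single (i : A)] at hval
    · rw [if_pos (DC_self hTA hcoord hC hiB)] at hval
      have := mul_eq_zero.mp hval
      rcases this with h | h
      · rw [← hGT i, h]
      · exact absurd h (inv_ne_zero hnC)
    · intro t htT hne
      apply if_neg
      intro hmem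
      obtain ⟨k, _, huniq⟩ := hreps (i : A) hiB
      exact hne ((huniq t ⟨htT, hmem⟩).trans (huniq (i : A) ⟨hiT, DC_self hTA hcoord hC hiB⟩).symm)
    · intro h; exact absurd hiT h
  refine ⟨hidem, heS, hunitS, hmulS, hstarS, hli, ?_⟩
  refine ⟨fun i j k => (∑ c ∈ C, lam c (star c) 1)⁻¹ * FF lam B coord C i j k, ?_, ?_, ?_⟩
  · intro i _ j _ k hkT
    exact mul_nonneg (inv_nonneg.mpr (le_of_lt hnR)) (FF_nonneg hTA (hTB hkT))
  · intro i hiT j hjT k hkT t ht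
    have hFt : FF lam B coord C i j t = FF lam B coord C i j k :=
      F_const hTA hcoord hC (hTB hiT) (hTB hjT) (hTB hkT) ht
    rw [hdegC]
    have hsum : ∑ r ∈ DCoset B coord C i, ∑ s ∈ DCoset B coord C j, ((lam r s t : ℝ) : ℂ)
        = ((FF lam B coord C i j t : ℝ) : ℂ) := by
      unfold FF; push_cast; rfl
    rw [hsum, hFt]
    push_cast
    ring
  · exact hprod
end

section
/- Let (A,B) be a table algebra and let χ be a character of A, i.e., χ(a) = tr(v ↦ av) for some finite-dimensional A-module. Then |χ(a)| ≤ |a| · χ(1_A) for every a ∈ B. -/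
open Matrix
open scoped BigOperators

/-- If `l ^ (m+1) ≤ d ^ (m+1) * C` for all `m`, with `d > 0`, then `l ≤ d`. -/
lemma aux_pow_le_stmt12 {l d C : ℝ} (hd : 0 < d)
    (h : ∀ m : ℕ, l ^ (m + 1) ≤ d ^ (m + 1) * C) : l ≤ d := by
  by_contra hc
  push_neg at hc
  have hr : 1 < l / d := (one_lt_div hd).2 hc
  obtain ⟨m, hm⟩ := pow_unbounded_of_one_lt C hr
  have h2 : (l / d) ^ (m + 1) ≤ C := by
    rw [div_pow, div_le_iff₀ (by positivity)]
    exact (h m).trans (le_of_eq (mul_comm _ _))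
  have h3 : (l / d) ^ m ≤ (l / d) ^ (m + 1) :=
    pow_le_pow_right₀ hr.le (Nat.le_succ m)
  linarith

set_option maxHeartbeats 2000000 in
/-- for any character `χ` of a table algebra and any `a ∈ B`,
`|χ(a)| ≤ |a|·χ(1)` (note `deg a` and `χ 1` are positive reals). -/
theorem stmt12 {A : Type*} [Ring A] [Algebra ℂ A] [StarRing A] [StarModule ℂ A]
    (B : Finset A) (deg : A →ₐ[ℂ] ℂ) (lam : A → A → A → ℝ)
    (hTA : IsTableAlgebra A B deg lam)
    (χ : A → ℂ)
    (hχ : ∃ (n : ℕ) (D : A →ₐ[ℂ] Matrix (Fin n) (Fin n) ℂ), ∀ x : A, χ x = (D x).trace) :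
    ∀ a ∈ B, ‖χ a‖ ≤ (deg a).re * (χ 1).re := by
  intro a ha
  classical
  obtain ⟨n, D, hD⟩ := hχ
  -- degrees are positive reals
  have hdegC : ∀ b ∈ B, (((deg b).re : ℝ) : ℂ) = deg b := by
    intro b hb
    have h := hTA.lam_one_eq b hb
    rw [← h, Complex.ofReal_re]
  have hpos : ∀ b ∈ B, 0 < (deg b).re := by
    intro b hb
    have h := hTA.lam_one_eq b hb
    rw [← h, Complex.ofReal_re]
    exact hTA.deg_pos b hb
  set d : ℝ := (deg a).re with hd_def
  have hd : 0 < d := hpos a ha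
  have hda : ((d : ℝ) : ℂ) = deg a := hdegC a ha
  -- representation of powers of `a` with nonnegative coefficients
  have rep : ∀ m : ℕ, ∃ c : A → ℝ, (∀ b ∈ B, 0 ≤ c b) ∧
      a ^ (m + 1) = ∑ b ∈ B, ((c b : ℝ) : ℂ) • b := by
    intro m
    induction m with
    | zero =>
      refine ⟨fun b => if b = a then 1 else 0, fun b _ => by by_cases h : b = a <;> simp [h], ?_⟩
      rw [pow_one]
      have hterm : ∀ b ∈ B, (((if b = a then (1:ℝ) else 0) : ℝ) : ℂ) • b
          = if b = a then b else 0 := by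
        intro b _
        split <;> simp
      rw [Finset.sum_congr rfl hterm, Finset.sum_ite_eq' B a (fun x => x)]
      simp [ha]
    | succ m ih =>
      obtain ⟨c, hc0, hc⟩ := ih
      refine ⟨fun y => ∑ b ∈ B, c b * lam b a y, fun y hy =>
        Finset.sum_nonneg fun b hb => mul_nonneg (hc0 b hb) (hTA.lam_nonneg b hb a ha y hy), ?_⟩
      rw [pow_succ a (m + 1), hc, Finset.sum_mul]
      rw [Finset.sum_congr rfl (fun b hb => by
        rw [smul_mul_assoc, hTA.struct b hb a ha, Finset.smul_sum])]
      rw [Finset.sum_comm]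
      refine Finset.sum_congr rfl fun y hy => ?_
      rw [Complex.ofReal_sum, Finset.sum_smul]
      refine Finset.sum_congr rfl fun b hb => ?_
      rw [smul_smul, Complex.ofReal_mul]
  -- entrywise bound on `D (a ^ (m+1))`
  set T : A → ℝ := fun b => ∑ i : Fin n, ∑ j : Fin n, ‖D b i j‖ with hT_def
  have hT0 : ∀ b, 0 ≤ T b := fun b =>
    Finset.sum_nonneg fun i _ => Finset.sum_nonneg fun j _ => norm_nonneg _
  set K : ℝ := ∑ b ∈ B, T b / (deg b).re with hK_def
  have hK0 : 0 ≤ K :=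
    Finset.sum_nonneg fun b hb => div_nonneg (hT0 b) (hpos b hb).le
  have entry : ∀ m : ℕ, ∀ i j : Fin n,
      ‖D (a ^ (m + 1)) i j‖ ≤ d ^ (m + 1) * K := by
    intro m i j
    obtain ⟨c, hc0, hceq⟩ := rep m
    -- coefficient identity from applying `deg`
    have hsumC : ((d ^ (m + 1) : ℝ) : ℂ) = ∑ b ∈ B, ((c b * (deg b).re : ℝ) : ℂ) := by
      push_cast
      rw [Finset.sum_congr rfl (fun b hb => by rw [hdegC b hb])]
      rw [show (∑ b ∈ B, (c b : ℂ) * deg b) = deg (a ^ (m+1)) by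
        rw [hceq, map_sum]
        exact Finset.sum_congr rfl fun b _ => by
          rw [_root_.map_smul, smul_eq_mul]]
      rw [map_pow, ← hda]
    have hsum : ∑ b ∈ B, c b * (deg b).re = d ^ (m + 1) := by
      have := hsumC
      exact_mod_cast this.symm
    have hcb : ∀ b ∈ B, c b ≤ d ^ (m + 1) / (deg b).re := by
      intro b hb
      rw [le_div_iff₀ (hpos b hb)]
      rw [← hsum]
      exact Finset.single_le_sum
        (fun x hx => mul_nonneg (hc0 x hx) (hpos x hx).le) hb
    have hDb : D (a ^ (m + 1)) = ∑ b ∈ B, ((c b : ℝ) : ℂ) • D b := by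
      rw [hceq, map_sum]
      exact Finset.sum_congr rfl fun b _ => by rw [_root_.map_smul]
    have hentry : D (a ^ (m + 1)) i j = ∑ b ∈ B, ((c b : ℝ) : ℂ) * D b i j := by
      rw [hDb]
      simp [Finset.sum_apply, Matrix.sum_apply]
    rw [hentry]
    calc ‖∑ b ∈ B, ((c b : ℝ) : ℂ) * D b i j‖
        ≤ ∑ b ∈ B, ‖((c b : ℝ) : ℂ) * D b i j‖ :=
          norm_sum_le _ _
      _ = ∑ b ∈ B, c b * ‖D b i j‖ := by
          refine Finset.sum_congr rfl fun b hb => ?_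
          rw [norm_mul, Complex.norm_real, Real.norm_eq_abs, abs_of_nonneg (hc0 b hb)]
      _ ≤ ∑ b ∈ B, (d ^ (m + 1) / (deg b).re) * T b := by
          refine Finset.sum_le_sum fun b hb => ?_
          have h1 : ‖D b i j‖ ≤ T b := by
            calc ‖D b i j‖
                ≤ ∑ j' : Fin n, ‖D b i j'‖ :=
                  Finset.single_le_sum (f := fun j' => ‖D b i j'‖)
                    (fun x _ => norm_nonneg _) (Finset.mem_univ j)
              _ ≤ T b := Finset.single_le_sum
                    (f := fun i' => ∑ j' : Fin n, ‖D b i' j'‖)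
                    (fun x _ => Finset.sum_nonneg fun j' _ => norm_nonneg _)
                    (Finset.mem_univ i)
          exact mul_le_mul (hcb b hb) h1 (norm_nonneg _)
            (div_nonneg (by positivity) (hpos b hb).le)
      _ = d ^ (m + 1) * K := by
          rw [hK_def, Finset.mul_sum]
          exact Finset.sum_congr rfl fun b hb => by
            rw [div_mul_eq_mul_div, mul_div_assoc]
  -- every root of the characteristic polynomial of `D a` is bounded by `d`
  have eig : ∀ μ ∈ (D a).charpoly.roots, ‖μ‖ ≤ d := by
    intro μ hμ
    have hroot : (D a).charpoly.eval μ = 0 :=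
      (Polynomial.isRoot_of_mem_roots hμ)
    have hdet : (Matrix.scalar (Fin n) μ - D a).det = 0 := by
      rw [Matrix.charpoly, _root_.eval_det, matPolyEquiv_charmatrix] at hroot
      simpa using hroot
    obtain ⟨v, hv0, hv⟩ := (Matrix.exists_mulVec_eq_zero_iff).2 hdet
    have hMv : D a *ᵥ v = μ • v := by
      rw [Matrix.sub_mulVec] at hv
      have hsc : Matrix.scalar (Fin n) μ *ᵥ v = μ • v := by
        rw [show Matrix.scalar (Fin n) μ = μ • (1 : Matrix (Fin n) (Fin n) ℂ) by
          simp [Matrix.scalar, Matrix.smul_one_eq_diagonal]]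
        rw [Matrix.smul_mulVec, Matrix.one_mulVec]
      rw [hsc] at hv
      exact (sub_eq_zero.mp hv).symm
    have hpow : ∀ m : ℕ, (D a) ^ (m + 1) *ᵥ v = μ ^ (m + 1) • v := by
      intro m
      induction m with
      | zero => simpa using hMv
      | succ m ih =>
        rw [pow_succ' (D a) (m + 1), ← Matrix.mulVec_mulVec, ih, Matrix.mulVec_smul, hMv, smul_smul]
        rw [show μ ^ (m + 1) * μ = μ ^ (m + 2) by ring]
    obtain ⟨j0, hj0⟩ := Function.ne_iff.1 hv0
    have hj0' : v j0 ≠ 0 := by simpa using hj0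
    obtain ⟨i, -, hi⟩ := Finset.exists_max_image Finset.univ
      (fun k => ‖v k‖) ⟨j0, Finset.mem_univ j0⟩
    have hvi : 0 < ‖v i‖ :=
      lt_of_lt_of_le (norm_pos_iff.2 hj0') (hi j0 (Finset.mem_univ j0))
    refine aux_pow_le_stmt12 (C := (n : ℝ) * K) hd fun m => ?_
    have key : ‖μ‖ ^ (m + 1) * ‖v i‖ ≤
        (d ^ (m + 1) * ((n : ℝ) * K)) * ‖v i‖ := by
      have hNv : D (a ^ (m + 1)) *ᵥ v = μ ^ (m + 1) • v := by
        rw [map_pow]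
        exact hpow m
      calc ‖μ‖ ^ (m + 1) * ‖v i‖
          = ‖(μ ^ (m + 1) • v) i‖ := by
            rw [Pi.smul_apply, smul_eq_mul, norm_mul, norm_pow]
        _ = ‖∑ j : Fin n, D (a ^ (m + 1)) i j * v j‖ := by
            rw [← hNv]
            simp [Matrix.mulVec, dotProduct]
        _ ≤ ∑ j : Fin n, ‖D (a ^ (m + 1)) i j * v j‖ :=
            norm_sum_le _ _
        _ ≤ ∑ _j : Fin n, (d ^ (m + 1) * K) * ‖v i‖ := by
            refine Finset.sum_le_sum fun j _ => ?_
            rw [norm_mul]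
            exact mul_le_mul (entry m i j) (hi j (Finset.mem_univ j))
              (norm_nonneg _) (by positivity)
        _ = (d ^ (m + 1) * ((n : ℝ) * K)) * ‖v i‖ := by
            rw [Finset.sum_const, Finset.card_univ, Fintype.card_fin, nsmul_eq_mul]
            ring
    exact le_of_mul_le_mul_right key hvi
  -- conclude
  have htrace : χ a = ((D a).charpoly.roots).sum := by
    rw [hD a, Matrix.trace_eq_sum_roots_charpoly]
  have hcard : (D a).charpoly.roots.card = n := by
    rw [Polynomial.splits_iff_card_roots.mp (IsAlgClosed.splits _),
      Matrix.charpoly_natDegree_eq_dim, Fintype.card_fin]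
  have hχ1 : (χ 1).re = (n : ℝ) := by
    rw [hD 1]
    simp
  calc ‖χ a‖ = ‖((D a).charpoly.roots).sum‖ := by
        rw [htrace]
    _ ≤ ((((D a).charpoly.roots).map (fun z => ‖z‖)).sum) := norm_multiset_sum_le _
    _ ≤ ((((D a).charpoly.roots).map (fun z => ‖z‖)).card) • d := by
        refine Multiset.sum_le_card_nsmul _ _ ?_
        intro x hx
        obtain ⟨μ, hμ, rfl⟩ := Multiset.mem_map.1 hx
        exact eig μ hμ
    _ = (n : ℝ) * d := by rw [Multiset.card_map, hcard, nsmul_eq_mul]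
    _ = (deg a).re * (χ 1).re := by rw [hχ1, ← hd_def]; ring
end

section
/- Let (A,B) be a table algebra. Then |ζ_χ| ≥ χ(1_A)⁻¹ for every χ ∈ Irr(A). In particular, if A is commutative then |ζ_χ| ≥ 1 for every χ ∈ Irr(A). -/
open Matrix
open scoped BigOperators

namespace Stmt13Aux

open Finset

variable {A : Type*} [Ring A] [Algebra ℂ A] [StarRing A] [StarModule ℂ A]
  {B : Finset A} {deg : A →ₐ[ℂ] ℂ} {lam : A → A → A → ℝ}

lemma coeff_eq_zero (hCA : IsCAlgebra A B deg lam) {g : A → ℂ}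
    (h : ∑ b ∈ B, g b • b = 0) : ∀ b ∈ B, g b = 0 := by
  intro b hb
  refine linearIndependent_iff'.mp hCA.indep Finset.univ (fun i => g i) ?_ ⟨b, hb⟩
    (Finset.mem_univ _)
  rw [← h, ← Finset.sum_finset_coe (fun b => g b • b) B]

lemma coeff_ext (hCA : IsCAlgebra A B deg lam) {g g' : A → ℂ}
    (h : ∑ b ∈ B, g b • b = ∑ b ∈ B, g' b • b) : ∀ b ∈ B, g b = g' b := by
  intro b hb
  have h0 : ∑ b ∈ B, (g b - g' b) • b = 0 := by
    simp only [sub_smul, Finset.sum_sub_distrib, h, sub_self]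
  exact sub_eq_zero.mp (coeff_eq_zero hCA h0 b hb)

lemma deg_eq (hCA : IsCAlgebra A B deg lam) {b : A} (hb : b ∈ B) :
    deg b = ((lam b (star b) 1 : ℝ) : ℂ) := (hCA.lam_one_eq b hb).symm

lemma deg_star_eq (hCA : IsCAlgebra A B deg lam) {b : A} (hb : b ∈ B) :
    deg (star b) = deg b := by
  rw [hCA.deg_star, deg_eq hCA hb, Complex.conj_ofReal]

lemma deg_ne_zero (hCA : IsCAlgebra A B deg lam) {b : A} (hb : b ∈ B) :
    deg b ≠ 0 := by
  rw [deg_eq hCA hb]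
  exact_mod_cast (hCA.deg_pos b hb).ne'

lemma lam_star_self (hCA : IsCAlgebra A B deg lam) {c : A} (hc : c ∈ B) :
    ((lam (star c) c 1 : ℝ) : ℂ) = deg c := by
  have := hCA.lam_one_eq (star c) (hCA.star_mem c hc)
  rw [star_star] at this
  rw [this, deg_star_eq hCA hc]

/-- coefficients of `(a*b)*c = a*(b*c)` -/
lemma assoc_coeff (hCA : IsCAlgebra A B deg lam) {a b c f : A}
    (ha : a ∈ B) (hb : b ∈ B) (hc : c ∈ B) (hf : f ∈ B) :
    ∑ d ∈ B, (lam a b d : ℂ) * (lam d c f : ℝ) =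
      ∑ e ∈ B, (lam b c e : ℂ) * (lam a e f : ℝ) := by
  have h1 : (a * b) * c = ∑ f ∈ B, (∑ d ∈ B, (lam a b d : ℂ) * (lam d c f : ℝ)) • f := by
    rw [hCA.struct a ha b hb, Finset.sum_mul]
    have : ∀ d ∈ B, ((lam a b d : ℝ) : ℂ) • d * c
        = ∑ f ∈ B, ((lam a b d : ℂ) * (lam d c f : ℝ)) • f := by
      intro d hd
      rw [smul_mul_assoc, hCA.struct d hd c hc, Finset.smul_sum]
      simp only [smul_smul]
    rw [Finset.sum_congr rfl this, Finset.sum_comm]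
    simp [Finset.sum_smul]
  have h2 : a * (b * c) = ∑ f ∈ B, (∑ e ∈ B, (lam b c e : ℂ) * (lam a e f : ℝ)) • f := by
    rw [hCA.struct b hb c hc, Finset.mul_sum]
    have : ∀ e ∈ B, a * ((lam b c e : ℂ) • e)
        = ∑ f ∈ B, ((lam b c e : ℂ) * (lam a e f : ℝ)) • f := by
      intro e he
      rw [mul_smul_comm, hCA.struct a ha e he, Finset.smul_sum]
      simp only [smul_smul]
    rw [Finset.sum_congr rfl this, Finset.sum_comm]
    simp [Finset.sum_smul]
  have h := h1.symm.trans (by rw [mul_assoc, h2])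
  exact coeff_ext hCA h f hf

/-- the key identity (⋆) -/
lemma star_identity (hCA : IsCAlgebra A B deg lam) {a b c : A}
    (ha : a ∈ B) (hb : b ∈ B) (hc : c ∈ B) :
    (lam a b (star c) : ℂ) * deg c = (lam b c (star a) : ℂ) * deg a := by
  have h := assoc_coeff hCA ha hb hc hCA.one_mem
  have hL : ∑ d ∈ B, (lam a b d : ℂ) * (lam d c 1 : ℝ)
      = (lam a b (star c) : ℂ) * deg c := by
    rw [Finset.sum_eq_single_of_mem (star c) (hCA.star_mem c hc)]
    · rw [lam_star_self hCA hc]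
    · intro d hd hdc
      rw [hCA.lam_one_ne d hd c hc ?_]
      · simp
      · intro hdc'; exact hdc (by rw [hdc'])
  have hR : ∑ e ∈ B, (lam b c e : ℂ) * (lam a e 1 : ℝ)
      = (lam b c (star a) : ℂ) * deg a := by
    rw [Finset.sum_eq_single_of_mem (star a) (hCA.star_mem a ha)]
    · congr 1
      have := hCA.lam_one_eq a ha
      rw [this]
    · intro e he hea
      rw [hCA.lam_one_ne a ha e he ?_]
      · simp
      · intro h'
        exact hea (by rw [h', star_star])
  rw [← hL, ← hR, h]

lemma rearr (hCA : IsCAlgebra A B deg lam) {a c e : A}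
    (ha : a ∈ B) (hc : c ∈ B) (he : e ∈ B) :
    (lam (star c) a e : ℂ) * deg e = (lam a (star e) c : ℂ) * deg c := by
  have h := star_identity hCA (hCA.star_mem c hc) ha (hCA.star_mem e he)
  rwa [star_star, star_star, deg_star_eq hCA he, deg_star_eq hCA hc] at h

end Stmt13Aux
namespace Stmt13Aux

open Finset

variable {A : Type*} [Ring A] [Algebra ℂ A] [StarRing A] [StarModule ℂ A]
  {B : Finset A} {deg : A →ₐ[ℂ] ℂ} {lam : A → A → A → ℝ}

/-- reindexing a sum over `B` by `star` -/
lemma sum_star_reindex (hCA : IsCAlgebra A B deg lam) {M : Type*} [AddCommMonoid M]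
    (F : A → M) : ∑ b ∈ B, F (star b) = ∑ b ∈ B, F b := by
  refine Finset.sum_nbij' (fun b => star b) (fun b => star b) ?_ ?_ ?_ ?_ ?_
  · exact fun a ha => hCA.star_mem a ha
  · exact fun a ha => hCA.star_mem a ha
  · exact fun a _ => star_star a
  · exact fun a _ => star_star a
  · exact fun a _ => rfl

noncomputable def Tmap {n m : ℕ} (B : Finset A) (deg : A →ₐ[ℂ] ℂ)
    (D : A →ₐ[ℂ] Matrix (Fin n) (Fin n) ℂ) (D' : A →ₐ[ℂ] Matrix (Fin m) (Fin m) ℂ)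
    (f : Matrix (Fin n) (Fin m) ℂ) : Matrix (Fin n) (Fin m) ℂ :=
  ∑ b ∈ B, (deg b)⁻¹ • (D b * f * D' (star b))

lemma intertwine_mem {n m : ℕ} (hCA : IsCAlgebra A B deg lam)
    (D : A →ₐ[ℂ] Matrix (Fin n) (Fin n) ℂ) (D' : A →ₐ[ℂ] Matrix (Fin m) (Fin m) ℂ)
    (f : Matrix (Fin n) (Fin m) ℂ) {a : A} (ha : a ∈ B) :
    D a * Tmap B deg D D' f = Tmap B deg D D' f * D' a := by
  unfold Tmap
  rw [Matrix.mul_sum, Matrix.sum_mul]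
  have hL : ∀ b ∈ B, D a * ((deg b)⁻¹ • (D b * f * D' (star b)))
      = ∑ c ∈ B, ((deg b)⁻¹ * (lam a b c : ℝ)) • (D c * f * D' (star b)) := by
    intro b hb
    rw [Matrix.mul_smul, ← Matrix.mul_assoc, ← Matrix.mul_assoc, ← _root_.map_mul,
      hCA.struct a ha b hb, map_sum, Matrix.sum_mul, Matrix.sum_mul, Finset.smul_sum]
    refine Finset.sum_congr rfl fun c hc => ?_
    rw [_root_.map_smul, Matrix.smul_mul, Matrix.smul_mul, smul_smul]
  have hR : ∀ b ∈ B, ((deg b)⁻¹ • (D b * f * D' (star b))) * D' a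
      = ∑ e ∈ B, ((deg b)⁻¹ * (lam (star b) a e : ℝ)) • (D b * f * D' e) := by
    intro b hb
    rw [Matrix.smul_mul, Matrix.mul_assoc, Matrix.mul_assoc, ← _root_.map_mul,
      hCA.struct (star b) (hCA.star_mem b hb) a ha, map_sum, Matrix.mul_sum, Matrix.mul_sum,
      Finset.smul_sum]
    refine Finset.sum_congr rfl fun e he => ?_
    rw [_root_.map_smul, Matrix.mul_smul, Matrix.mul_smul, smul_smul, ← Matrix.mul_assoc]
  rw [Finset.sum_congr rfl hL, Finset.sum_congr rfl hR]
  rw [sum_star_reindex hCA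
    (fun b => ∑ c ∈ B, ((deg b)⁻¹ * (lam a b c : ℝ)) • (D c * f * D' (star b))) |>.symm]
  rw [Finset.sum_comm]
  refine Finset.sum_congr rfl fun c hc => Finset.sum_congr rfl fun e he => ?_
  rw [star_star, deg_star_eq hCA he]
  congr 1
  have h := rearr hCA ha hc he
  have hc0 := deg_ne_zero hCA hc
  have he0 := deg_ne_zero hCA he
  field_simp
  linear_combination -h

lemma intertwine {n m : ℕ} (hCA : IsCAlgebra A B deg lam)
    (D : A →ₐ[ℂ] Matrix (Fin n) (Fin n) ℂ) (D' : A →ₐ[ℂ] Matrix (Fin m) (Fin m) ℂ)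
    (f : Matrix (Fin n) (Fin m) ℂ) (a : A) :
    D a * Tmap B deg D D' f = Tmap B deg D D' f * D' a := by
  have hmem : a ∈ Submodule.span ℂ (B : Set A) := by
    rw [hCA.span_top]; exact Submodule.mem_top
  induction hmem using Submodule.span_induction with
  | mem x hx => exact intertwine_mem hCA D D' f hx
  | zero => simp
  | add x y hx hy ihx ihy => rw [map_add, map_add, Matrix.add_mul, Matrix.mul_add, ihx, ihy]
  | smul r x hx ih => rw [_root_.map_smul, _root_.map_smul, Matrix.smul_mul, Matrix.mul_smul, ih]

lemma scalar_eq_smul_one {k : ℕ} (d : ℂ) :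
    (Matrix.scalar (Fin k)) d = d • (1 : Matrix (Fin k) (Fin k) ℂ) := by
  ext i j
  simp [Matrix.scalar_apply, Matrix.smul_apply, Matrix.one_apply, Matrix.diagonal_apply,
    mul_ite, mul_one, mul_zero]

lemma schur_scalar {k : ℕ} {D : A →ₐ[ℂ] Matrix (Fin k) (Fin k) ℂ}
    (hsurj : Function.Surjective ⇑D)
    (M : Matrix (Fin k) (Fin k) ℂ) (hM : ∀ a, D a * M = M * D a) :
    ∃ d : ℂ, M = d • (1 : Matrix (Fin k) (Fin k) ℂ) ∧ M.trace = (k : ℂ) * d := by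
  have hall : ∀ X : Matrix (Fin k) (Fin k) ℂ, X * M = M * X := fun X => by
    obtain ⟨a, rfl⟩ := hsurj X; exact hM a
  obtain ⟨d, hd⟩ := Matrix.mem_range_scalar_of_commute_single
    (M := M) (fun i j _ => hall _)
  have hM1 : M = d • (1 : Matrix (Fin k) (Fin k) ℂ) := by
    rw [← hd, scalar_eq_smul_one]
  refine ⟨d, hM1, ?_⟩
  rw [hM1, Matrix.trace_smul, Matrix.trace_one, smul_eq_mul, mul_comm]
  simp [Fintype.card_fin]

lemma exists_mulVec_eq {k : ℕ} {v : Fin k → ℂ} (hv : v ≠ 0) (w : Fin k → ℂ) :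
    ∃ X : Matrix (Fin k) (Fin k) ℂ, X *ᵥ v = w := by
  obtain ⟨j, hj⟩ : ∃ j, v j ≠ 0 := by
    by_contra h; push_neg at h; exact hv (funext h)
  refine ⟨Matrix.of fun i k' => if k' = j then w i / v j else 0, ?_⟩
  ext i
  simp only [Matrix.mulVec, dotProduct, Matrix.of_apply, ite_mul, zero_mul]
  rw [Finset.sum_ite_eq' Finset.univ j fun k' => w i / v j * v k']
  simp only [Finset.mem_univ, if_true]
  field_simp

lemma trace_mulVecLin' {k : ℕ} (M : Matrix (Fin k) (Fin k) ℂ) :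
    LinearMap.trace ℂ (Fin k → ℂ) M.mulVecLin = M.trace := by
  rw [← Matrix.toLin'_apply' M, LinearMap.trace_eq_matrix_trace ℂ (Pi.basisFun ℂ (Fin k)),
    LinearMap.toMatrix_eq_toMatrix', LinearMap.toMatrix'_toLin']

end Stmt13Aux
namespace Stmt13Aux

open Finset

set_option linter.unusedSectionVars false

variable {A : Type*} [Ring A] [Algebra ℂ A] [StarRing A] [StarModule ℂ A]
  {B : Finset A} {deg : A →ₐ[ℂ] ℂ} {lam : A → A → A → ℝ}

/-- Schur: an intertwiner between surjective matrix representations with distinct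
traces vanishes. -/
lemma schur_zero {n m : ℕ} {D : A →ₐ[ℂ] Matrix (Fin n) (Fin n) ℂ}
    {D' : A →ₐ[ℂ] Matrix (Fin m) (Fin m) ℂ}
    (hD : Function.Surjective ⇑D) (hD' : Function.Surjective ⇑D')
    (hne : ∃ a, (D a).trace ≠ (D' a).trace)
    (M : Matrix (Fin n) (Fin m) ℂ) (hM : ∀ a, D a * M = M * D' a) : M = 0 := by
  by_contra hM0
  have hker : ∀ v, M *ᵥ v = 0 → v = 0 := by
    intro v hv
    by_contra hv0
    apply hM0
    have key : ∀ w : Fin m → ℂ, M *ᵥ w = 0 := by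
      intro w
      obtain ⟨X, hX⟩ := exists_mulVec_eq hv0 w
      obtain ⟨a, ha⟩ := hD' X
      have h1 := congrArg (fun N => N *ᵥ v) (hM a)
      simp only [← Matrix.mulVec_mulVec] at h1
      rw [hv, Matrix.mulVec_zero, ha, hX] at h1
      exact h1.symm
    ext i k
    have := congrFun (key (Pi.single k 1)) i
    simpa using this
  have hinj : Function.Injective M.mulVecLin := by
    intro v w h
    have h2 : M *ᵥ (v - w) = 0 := by
      rw [Matrix.mulVec_sub]
      simp only [Matrix.mulVecLin_apply] at h
      rw [h, sub_self]
    exact sub_eq_zero.mp (hker _ h2)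
  obtain ⟨i0, k0, h00⟩ : ∃ i k, M i k ≠ 0 := by
    by_contra h
    push_neg at h
    exact hM0 (Matrix.ext fun i k => by simpa using h i k)
  have hu0 : M *ᵥ (Pi.single k0 1) ≠ 0 := by
    intro h
    have := congrFun h i0
    rw [Matrix.mulVec_single_one] at this
    simp only [mul_one, Pi.zero_apply] at this
    exact h00 this
  have hsurjv : ∀ w : Fin n → ℂ, ∃ vv, M.mulVecLin vv = w := by
    intro w
    obtain ⟨X, hX⟩ := exists_mulVec_eq hu0 w
    obtain ⟨a, ha⟩ := hD X
    refine ⟨(D' a) *ᵥ (Pi.single k0 1), ?_⟩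
    rw [Matrix.mulVecLin_apply, Matrix.mulVec_mulVec, ← hM a, ← Matrix.mulVec_mulVec, ha, hX]
  let e := LinearEquiv.ofBijective M.mulVecLin ⟨hinj, hsurjv⟩
  obtain ⟨a0, ha0⟩ := hne
  apply ha0
  have hconj : ∀ a : A, (D a).mulVecLin
      = (e.conj ((D' a).mulVecLin) : (Fin n → ℂ) →ₗ[ℂ] (Fin n → ℂ)) := by
    intro a
    apply LinearMap.ext
    intro x
    rw [LinearEquiv.conj_apply_apply]
    conv_lhs => rw [← e.apply_symm_apply x]
    set y := e.symm x
    show (D a).mulVecLin (e y) = e ((D' a).mulVecLin y)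
    have he : ∀ z, e z = M.mulVecLin z := fun z => rfl
    rw [he, he]
    simp only [Matrix.mulVecLin_apply, Matrix.mulVec_mulVec, hM a]
  calc (D a0).trace = LinearMap.trace ℂ _ (D a0).mulVecLin := (trace_mulVecLin' _).symm
    _ = LinearMap.trace ℂ _ (e.conj ((D' a0).mulVecLin)) := by rw [hconj a0]
    _ = LinearMap.trace ℂ _ ((D' a0).mulVecLin) := LinearMap.trace_conj' _ e
    _ = (D' a0).trace := trace_mulVecLin' _

lemma entry_helper {n m : ℕ} (X : Matrix (Fin n) (Fin n) ℂ) (Y : Matrix (Fin m) (Fin m) ℂ)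
    (i : Fin n) (k : Fin m) :
    (X * Matrix.single i k (1:ℂ) * Y) i k = X i i * Y k k := by
  simp [Matrix.mul_apply, Matrix.single, ite_and, mul_ite, ite_mul, mul_zero, zero_mul,
    Finset.sum_ite_eq, Finset.sum_ite_eq', Finset.mul_sum]

lemma pairing {n m : ℕ} (D : A →ₐ[ℂ] Matrix (Fin n) (Fin n) ℂ)
    (D' : A →ₐ[ℂ] Matrix (Fin m) (Fin m) ℂ) :
    ∑ b ∈ B, (deg b)⁻¹ * ((D b).trace * (D' (star b)).trace)
      = ∑ i : Fin n, ∑ k : Fin m, (Tmap B deg D D' (Matrix.single i k 1)) i k := by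
  have h1 : ∀ (i : Fin n) (k : Fin m), (Tmap B deg D D' (Matrix.single i k 1)) i k
      = ∑ b ∈ B, (deg b)⁻¹ * (D b i i * D' (star b) k k) := by
    intro i k
    unfold Tmap
    rw [Matrix.sum_apply]
    refine Finset.sum_congr rfl fun b hb => ?_
    rw [Matrix.smul_apply, entry_helper, smul_eq_mul]
  have h2 : ∀ b ∈ B, (deg b)⁻¹ * ((D b).trace * (D' (star b)).trace)
      = ∑ i : Fin n, ∑ k : Fin m, (deg b)⁻¹ * (D b i i * D' (star b) k k) := by
    intro b hb
    rw [Matrix.trace, Matrix.trace]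
    simp only [Matrix.diag]
    rw [Finset.sum_mul_sum]
    rw [Finset.mul_sum]
    refine Finset.sum_congr rfl fun i _ => ?_
    rw [Finset.mul_sum]
  rw [Finset.sum_congr rfl h2, Finset.sum_comm]
  refine Finset.sum_congr rfl fun i _ => ?_
  rw [Finset.sum_comm]
  refine Finset.sum_congr rfl fun k _ => ?_
  rw [h1 i k]

lemma sum_stdBasis_id {k : ℕ} :
    ∑ i : Fin k, Matrix.single i i (1 : ℂ) = 1 := by
  ext a b
  rw [Matrix.sum_apply]
  simp [Matrix.single, Matrix.one_apply, ite_and, Finset.sum_ite_eq, eq_comm]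

lemma Tmap_sum {n m : ℕ} {ι : Type*} (s : Finset ι)
    (D : A →ₐ[ℂ] Matrix (Fin n) (Fin n) ℂ) (D' : A →ₐ[ℂ] Matrix (Fin m) (Fin m) ℂ)
    (F : ι → Matrix (Fin n) (Fin m) ℂ) :
    Tmap B deg D D' (∑ j ∈ s, F j) = ∑ j ∈ s, Tmap B deg D D' (F j) := by
  unfold Tmap
  rw [Finset.sum_comm]
  refine Finset.sum_congr rfl fun b hb => ?_
  rw [Matrix.mul_sum, Matrix.sum_mul, Finset.smul_sum]

/-- In a single surjective representation `D`, the image of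
`z₁ = ∑_b |b|⁻¹ b b*` is the scalar matrix `S • 1` where
`S = ∑_b |b|⁻¹ χ(b) χ(b*)`. -/
lemma same_rep_scalar {k : ℕ} (hCA : IsCAlgebra A B deg lam) (hk : 0 < k)
    {D : A →ₐ[ℂ] Matrix (Fin k) (Fin k) ℂ} (hsurj : Function.Surjective ⇑D) :
    D (∑ b ∈ B, (deg b)⁻¹ • (b * star b))
      = (∑ b ∈ B, (deg b)⁻¹ * ((D b).trace * (D (star b)).trace)) • 1 := by
  have hk0 : (k : ℂ) ≠ 0 := Nat.cast_ne_zero.mpr hk.ne'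
  have hT1 : Tmap B deg D D 1 = D (∑ b ∈ B, (deg b)⁻¹ • (b * star b)) := by
    unfold Tmap
    rw [map_sum]
    refine Finset.sum_congr rfl fun b hb => ?_
    rw [_root_.map_smul, _root_.map_mul, Matrix.mul_one]
  obtain ⟨d, hd, hdtr⟩ := schur_scalar hsurj (Tmap B deg D D 1) (intertwine hCA D D 1)
  -- off-diagonal entries vanish
  have hoff : ∀ (i j : Fin k), i ≠ j →
      (Tmap B deg D D (Matrix.single i j 1)) i j = 0 := by
    intro i j hij
    obtain ⟨γ, hγ, -⟩ := schur_scalar hsurj _ (intertwine hCA D D (Matrix.single i j 1))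
    rw [hγ, Matrix.smul_apply, Matrix.one_apply_ne hij, smul_zero]
  have hdiag : ∀ i : Fin k, (k : ℂ) * (Tmap B deg D D (Matrix.single i i 1)) i i
      = (Tmap B deg D D (Matrix.single i i 1)).trace := by
    intro i
    obtain ⟨γ, hγ, htr⟩ := schur_scalar hsurj _ (intertwine hCA D D (Matrix.single i i 1))
    rw [hγ]
    rw [Matrix.trace_smul, Matrix.trace_one, Matrix.smul_apply, Matrix.one_apply_eq]
    simp [Fintype.card_fin]
    ring
  -- compute k * S
  have hS : (k : ℂ) * (∑ b ∈ B, (deg b)⁻¹ * ((D b).trace * (D (star b)).trace))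
      = (k : ℂ) * d := by
    rw [pairing D D]
    have : ∀ i : Fin k, (∑ j : Fin k, (Tmap B deg D D (Matrix.single i j 1)) i j)
        = (Tmap B deg D D (Matrix.single i i 1)) i i := by
      intro i
      rw [Finset.sum_eq_single i]
      · intro j _ hji
        exact hoff i j (Ne.symm hji)
      · intro h; exact absurd (Finset.mem_univ i) h
    rw [Finset.sum_congr rfl fun i _ => this i, Finset.mul_sum,
      Finset.sum_congr rfl fun i _ => hdiag i, ← Matrix.trace_sum, ← Tmap_sum,
      sum_stdBasis_id, hdtr]
  have hSd : (∑ b ∈ B, (deg b)⁻¹ * ((D b).trace * (D (star b)).trace)) = d :=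
    mul_left_cancel₀ hk0 hS
  rw [← hT1, hd, hSd]

end Stmt13Aux
namespace Stmt13Aux

open Finset

set_option linter.unusedSectionVars false

variable {A : Type*} [Ring A] [Algebra ℂ A] [StarRing A] [StarModule ℂ A]
  {B : Finset A} {deg : A →ₐ[ℂ] ℂ} {lam : A → A → A → ℝ}

/-- `x` is a nonnegative combination of the basis elements. -/
def PosSpan (B : Finset A) (x : A) : Prop :=
  ∃ ν : A → ℝ, (∀ c ∈ B, 0 ≤ ν c) ∧ x = ∑ c ∈ B, ((ν c : ℝ) : ℂ) • c

open scoped Classical in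
lemma posSpan_one (hCA : IsCAlgebra A B deg lam) : PosSpan B (1 : A) := by
  refine ⟨fun c => if c = 1 then 1 else 0, fun c _ => by positivity, ?_⟩
  rw [Finset.sum_eq_single_of_mem 1 hCA.one_mem]
  · simp
  · intro b hb hb1
    simp [hb1]

lemma posSpan_mul (hTA : IsTableAlgebra A B deg lam) {x y : A}
    (hx : PosSpan B x) (hy : PosSpan B y) : PosSpan B (x * y) := by
  obtain ⟨ν, hν, rfl⟩ := hx
  obtain ⟨μ, hμ, rfl⟩ := hy
  refine ⟨fun e => ∑ c ∈ B, ∑ d ∈ B, ν c * μ d * lam c d e, ?_, ?_⟩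
  · intro e heB
    apply Finset.sum_nonneg
    intro c hc
    apply Finset.sum_nonneg
    intro d hd
    exact mul_nonneg (mul_nonneg (hν c hc) (hμ d hd)) (hTA.lam_nonneg c hc d hd e heB)
  · rw [Finset.sum_mul]
    have h1 : ∀ c ∈ B, (((ν c : ℝ) : ℂ) • c) * ∑ d ∈ B, ((μ d : ℝ) : ℂ) • d
        = ∑ e ∈ B, (∑ d ∈ B, ((ν c * μ d * lam c d e : ℝ) : ℂ)) • e := by
      intro c hc
      rw [Finset.mul_sum]
      have h2 : ∀ d ∈ B, (((ν c : ℝ) : ℂ) • c) * (((μ d : ℝ) : ℂ) • d)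
          = ∑ e ∈ B, ((ν c * μ d * lam c d e : ℝ) : ℂ) • e := by
        intro d hd
        rw [smul_mul_assoc, mul_smul_comm, hTA.struct c hc d hd, smul_smul, Finset.smul_sum]
        refine Finset.sum_congr rfl fun e he => ?_
        rw [smul_smul]
        norm_cast
      rw [Finset.sum_congr rfl h2, Finset.sum_comm]
      refine Finset.sum_congr rfl fun e he => ?_
      rw [Finset.sum_smul]
    rw [Finset.sum_congr rfl h1, Finset.sum_comm]
    refine Finset.sum_congr rfl fun e he => ?_
    rw [← Finset.sum_smul]
    norm_cast

lemma posSpan_pow (hTA : IsTableAlgebra A B deg lam) {x : A} (hx : PosSpan B x) :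
    ∀ mm : ℕ, PosSpan B (x ^ mm) := by
  intro mm
  induction mm with
  | zero => simpa using posSpan_one hTA.toIsCAlgebra
  | succ p ih => rw [pow_succ]; exact posSpan_mul hTA ih hx

lemma posSpan_deg (hCA : IsCAlgebra A B deg lam) (ν : A → ℝ) :
    deg (∑ c ∈ B, ((ν c : ℝ) : ℂ) • c)
      = ((∑ c ∈ B, ν c * lam c (star c) 1 : ℝ) : ℂ) := by
  rw [map_sum, Complex.ofReal_sum]
  refine Finset.sum_congr rfl fun c hc => ?_
  rw [_root_.map_smul, smul_eq_mul, deg_eq hCA hc, Complex.ofReal_mul]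

/-- triangle-inequality bound for a linear functional on a nonnegative combination -/
lemma abs_sum_bound (hCA : IsCAlgebra A B deg lam) (φ : A → ℂ) {ν : A → ℝ}
    (hν : ∀ c ∈ B, 0 ≤ ν c) :
    ‖∑ c ∈ B, ((ν c : ℝ) : ℂ) * φ c‖
      ≤ (∑ c ∈ B, ‖φ c‖ / lam c (star c) 1)
        * ∑ c ∈ B, ν c * lam c (star c) 1 := by
  set K := ∑ c ∈ B, ‖φ c‖ / lam c (star c) 1 with hK
  calc ‖∑ c ∈ B, ((ν c : ℝ) : ℂ) * φ c‖
      ≤ ∑ c ∈ B, ‖((ν c : ℝ) : ℂ) * φ c‖ := norm_sum_le _ _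
    _ = ∑ c ∈ B, ν c * ‖φ c‖ := by
        refine Finset.sum_congr rfl fun c hc => ?_
        rw [norm_mul, Complex.norm_real, Real.norm_eq_abs, abs_of_nonneg (hν c hc)]
    _ ≤ ∑ c ∈ B, ν c * (K * lam c (star c) 1) := by
        refine Finset.sum_le_sum fun c hc => ?_
        refine mul_le_mul_of_nonneg_left ?_ (hν c hc)
        have hpos := hCA.deg_pos c hc
        have hsingle : ‖φ c‖ / lam c (star c) 1 ≤ K := by
          refine Finset.single_le_sum (f := fun c => ‖φ c‖ / lam c (star c) 1)
            ?_ hc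
          intro d hd
          exact div_nonneg (norm_nonneg _) (hCA.deg_pos d hd).le
        rw [div_le_iff₀ hpos] at hsingle
        linarith
    _ = K * ∑ c ∈ B, ν c * lam c (star c) 1 := by
        rw [Finset.mul_sum]
        refine Finset.sum_congr rfl fun c hc => by ring

/-- `z₁ = ∑_b |b|⁻¹ b b*` is a nonnegative combination. -/
lemma posSpan_z1 (hTA : IsTableAlgebra A B deg lam) :
    PosSpan B (∑ b ∈ B, (deg b)⁻¹ • (b * star b)) := by
  refine ⟨fun c => ∑ b ∈ B, (lam b (star b) 1)⁻¹ * lam b (star b) c, ?_, ?_⟩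
  · intro c hc
    apply Finset.sum_nonneg
    intro b hb
    exact mul_nonneg (inv_nonneg.mpr (hTA.deg_pos b hb).le)
      (hTA.lam_nonneg b hb (star b) (hTA.star_mem b hb) c hc)
  · have h1 : ∀ b ∈ B, (deg b)⁻¹ • (b * star b)
        = ∑ c ∈ B, (((lam b (star b) 1)⁻¹ * lam b (star b) c : ℝ) : ℂ) • c := by
      intro b hb
      rw [hTA.struct b hb (star b) (hTA.star_mem b hb), Finset.smul_sum]
      refine Finset.sum_congr rfl fun c hc => ?_
      rw [smul_smul, deg_eq hTA.toIsCAlgebra hb]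
      norm_cast
    rw [Finset.sum_congr rfl h1, Finset.sum_comm]
    refine Finset.sum_congr rfl fun c hc => ?_
    rw [← Finset.sum_smul]
    norm_cast

lemma deg_z1 (hCA : IsCAlgebra A B deg lam) :
    deg (∑ b ∈ B, (deg b)⁻¹ • (b * star b))
      = ((∑ b ∈ B, lam b (star b) 1 : ℝ) : ℂ) := by
  rw [map_sum, Complex.ofReal_sum]
  refine Finset.sum_congr rfl fun b hb => ?_
  rw [_root_.map_smul, smul_eq_mul, _root_.map_mul, deg_star_eq hCA hb, ← mul_assoc,
    inv_mul_cancel₀ (deg_ne_zero hCA hb), one_mul, deg_eq hCA hb]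

end Stmt13Aux
namespace Stmt13Aux

open Finset

set_option linter.unusedSectionVars false

variable {A : Type*} [Ring A] [Algebra ℂ A] [StarRing A] [StarModule ℂ A]
  {B : Finset A} {deg : A →ₐ[ℂ] ℂ} {lam : A → A → A → ℝ}

lemma S_le_DB (hTA : IsTableAlgebra A B deg lam) {k : ℕ} (hk : 0 < k)
    {D : A →ₐ[ℂ] Matrix (Fin k) (Fin k) ℂ} (hsurj : Function.Surjective ⇑D) :
    ‖∑ b ∈ B, (deg b)⁻¹ * ((D b).trace * (D (star b)).trace)‖
      ≤ ∑ b ∈ B, lam b (star b) 1 := by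
  have hCA := hTA.toIsCAlgebra
  set z1 := ∑ b ∈ B, (deg b)⁻¹ • (b * star b) with hz1
  set S := ∑ b ∈ B, (deg b)⁻¹ * ((D b).trace * (D (star b)).trace) with hSdef
  set DB := ∑ b ∈ B, lam b (star b) 1 with hDBdef
  have hDBpos : 0 < DB :=
    Finset.sum_pos (fun b hb => hCA.deg_pos b hb) ⟨1, hCA.one_mem⟩
  set K := ∑ c ∈ B, ‖(D c).trace‖ / lam c (star c) 1 with hKdef
  have hDz : D z1 = S • 1 := same_rep_scalar hCA hk hsurj
  have hpow : ∀ mm : ℕ, (‖S‖) ^ mm * (k : ℝ) ≤ K * DB ^ mm := by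
    intro mm
    obtain ⟨ν, hν, hrep⟩ := posSpan_pow hTA (posSpan_z1 hTA) mm
    have h1 : (D (z1 ^ mm)).trace = S ^ mm * (k : ℂ) := by
      rw [map_pow, hDz, smul_pow, one_pow, Matrix.trace_smul, Matrix.trace_one,
        smul_eq_mul, Fintype.card_fin]
    have h2 : (D (z1 ^ mm)).trace = ∑ c ∈ B, ((ν c : ℝ) : ℂ) * (D c).trace := by
      rw [hrep, map_sum, Matrix.trace_sum]
      refine Finset.sum_congr rfl fun c hc => ?_
      rw [_root_.map_smul, Matrix.trace_smul, smul_eq_mul]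
    have h3 : ∑ c ∈ B, ν c * lam c (star c) 1 = DB ^ mm := by
      have hd1 : deg (z1 ^ mm) = ((DB ^ mm : ℝ) : ℂ) := by
        rw [map_pow, deg_z1 hCA]; norm_cast
      have hd2 : deg (z1 ^ mm) = ((∑ c ∈ B, ν c * lam c (star c) 1 : ℝ) : ℂ) := by
        rw [hrep]; exact posSpan_deg hCA ν
      exact_mod_cast (hd2.symm.trans hd1)
    have h4 := abs_sum_bound hCA (fun a => (D a).trace) hν
    calc (‖S‖) ^ mm * (k : ℝ) = ‖S ^ mm * (k : ℂ)‖ := by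
          rw [norm_mul, norm_pow, Complex.norm_natCast]
      _ = ‖∑ c ∈ B, ((ν c : ℝ) : ℂ) * (D c).trace‖ := by rw [← h1, h2]
      _ ≤ K * ∑ c ∈ B, ν c * lam c (star c) 1 := h4
      _ = K * DB ^ mm := by rw [h3]
  by_contra hcon
  push_neg at hcon
  have hq : 1 < ‖S‖ / DB := (one_lt_div hDBpos).mpr hcon
  obtain ⟨mm, hmm⟩ := pow_unbounded_of_one_lt K hq
  have h5 := hpow mm
  have hk1 : (1 : ℝ) ≤ (k : ℝ) := by exact_mod_cast hk
  have h6 : (‖S‖ / DB) ^ mm ≤ K := by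
    rw [div_pow, div_le_iff₀ (pow_pos hDBpos mm)]
    nlinarith [pow_nonneg (norm_nonneg S) mm, pow_pos hDBpos mm]
  linarith

end Stmt13Aux
/-- `|ζ_χ| ≥ χ(1)⁻¹` for every `χ ∈ Irr(A)`; in particular if `A` is
commutative then `|ζ_χ| ≥ 1`. -/
theorem stmt13 {A : Type*} [Ring A] [Algebra ℂ A] [StarRing A] [StarModule ℂ A]
    (B : Finset A) (deg : A →ₐ[ℂ] ℂ) (lam : A → A → A → ℝ)
    (hTA : IsTableAlgebra A B deg lam)
    (ζ : A →ₗ[ℂ] ℂ) (hζ : IsStdTrace B deg ζ)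
    (Irr : Finset (A → ℂ)) (hIrr : ∀ χ : A → ℂ, χ ∈ Irr ↔ IsIrrChar A χ)
    (m : (A → ℂ) → ℂ) (hm0 : ∀ χ ∈ Irr, m χ ≠ 0)
    (hdec : ∀ a : A, ζ a = ∑ χ ∈ Irr, m χ * χ a) :
    (∀ χ ∈ Irr, ((χ 1).re)⁻¹ ≤ ‖m χ‖) ∧
    ((∀ x y : A, x * y = y * x) → ∀ χ ∈ Irr, 1 ≤ ‖m χ‖) := by
  classical
  have hCA := hTA.toIsCAlgebra
  set DB := ∑ b ∈ B, lam b (star b) 1 with hDBdef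
  have hDBpos : 0 < DB :=
    Finset.sum_pos (fun b hb => hCA.deg_pos b hb) ⟨1, hCA.one_mem⟩
  have hζ1 : ζ 1 = ((DB : ℝ) : ℂ) := by
    rw [hζ.1, Complex.ofReal_sum]
    exact Finset.sum_congr rfl fun b hb => Stmt13Aux.deg_eq hCA hb
  have main : ∀ χ ∈ Irr, 1 ≤ (χ 1).re ∧ 1 ≤ ‖m χ‖ := by
    intro χ hχ
    obtain ⟨k, D, hk, hsurj, hχD⟩ := (hIrr χ).mp hχ
    have hχ1 : χ 1 = (k : ℂ) := by
      rw [hχD 1, _root_.map_one, Matrix.trace_one, Fintype.card_fin]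
    have hk1 : (1 : ℝ) ≤ (k : ℝ) := by exact_mod_cast hk
    -- the auxiliary element z_χ
    set zχ : A := ∑ b ∈ B, ((deg b)⁻¹ * χ (star b)) • b with hzχ
    -- evaluation of any irreducible character on zχ
    have heval : ∀ (k' : ℕ) (D' : A →ₐ[ℂ] Matrix (Fin k') (Fin k') ℂ),
        (D' zχ).trace = ∑ b ∈ B, ((deg b)⁻¹ * χ (star b)) * (D' b).trace := by
      intro k' D'
      rw [hzχ, map_sum, Matrix.trace_sum]
      exact Finset.sum_congr rfl fun b hb => by
        rw [_root_.map_smul, Matrix.trace_smul, smul_eq_mul]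
    -- ζ applied to zχ
    have hζz : ζ zχ = (k : ℂ) * ((DB : ℝ) : ℂ) := by
      rw [hzχ, map_sum]
      have : ∀ b ∈ B, ζ (((deg b)⁻¹ * χ (star b)) • b) = ((deg b)⁻¹ * χ (star b)) * ζ b := by
        intro b hb
        rw [LinearMap.map_smul, smul_eq_mul]
      rw [Finset.sum_congr rfl this, Finset.sum_eq_single_of_mem 1 hCA.one_mem]
      · rw [_root_.map_one, inv_one, star_one, hχ1, one_mul, hζ1]
      · intro b hb hb1
        rw [hζ.2 b hb hb1, mul_zero]
    -- vanishing for other irreducible characters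
    have hvanish : ∀ ψ ∈ Irr, ψ ≠ χ → ψ zχ = 0 := by
      intro ψ hψ hψχ
      obtain ⟨k', D', hk', hsurj', hψD⟩ := (hIrr ψ).mp hψ
      have hne : ∃ a, (D' a).trace ≠ (D a).trace := by
        by_contra h
        push_neg at h
        exact hψχ (funext fun a => by rw [hψD a, h a, ← hχD a])
      have hzero : ∀ f, Stmt13Aux.Tmap B deg D' D f = 0 := fun f =>
        Stmt13Aux.schur_zero hsurj' hsurj hne _ (Stmt13Aux.intertwine hCA D' D f)
      have hpair := Stmt13Aux.pairing (B := B) (deg := deg) D' D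
      simp only [hzero, Matrix.zero_apply, Finset.sum_const_zero] at hpair
      rw [hψD zχ, heval k' D']
      rw [← hpair]
      exact Finset.sum_congr rfl fun b hb => by rw [← hχD (star b), ← hψD b]; ring
    -- the sum collapses
    have hcollapse : ζ zχ = m χ * χ zχ := by
      rw [hdec zχ, Finset.sum_eq_single_of_mem χ hχ]
      intro ψ hψ hψχ
      rw [hvanish ψ hψ hψχ, mul_zero]
    -- identify χ zχ with S
    set S := ∑ b ∈ B, (deg b)⁻¹ * ((D b).trace * (D (star b)).trace) with hSdef
    have hχz : χ zχ = S := by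
      rw [hχD zχ, heval k D, hSdef]
      exact Finset.sum_congr rfl fun b hb => by rw [← hχD (star b), ← hχD b]; ring
    have hkey : m χ * S = (k : ℂ) * ((DB : ℝ) : ℂ) := by
      rw [← hχz, ← hcollapse, hζz]
    -- absolute values
    have habs : ‖m χ‖ * ‖S‖ = (k : ℝ) * DB := by
      rw [← norm_mul, hkey, norm_mul, Complex.norm_natCast, Complex.norm_real, Real.norm_eq_abs,
        abs_of_pos hDBpos]
    have hSle : ‖S‖ ≤ DB := Stmt13Aux.S_le_DB hTA hk hsurj
    have hSpos : 0 < ‖S‖ := by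
      rcases eq_or_lt_of_le (norm_nonneg S) with h | h
      · exfalso
        rw [← h, mul_zero] at habs
        nlinarith
      · exact h
    have hmabs : 1 ≤ ‖m χ‖ := by
      have h1 : 1 * ‖S‖ ≤ ‖m χ‖ * ‖S‖ := by
        rw [habs, one_mul]
        nlinarith
      exact le_of_mul_le_mul_right h1 hSpos
    refine ⟨?_, hmabs⟩
    rw [hχ1]
    simpa using hk1
  constructor
  · intro χ hχ
    obtain ⟨h1, h2⟩ := main χ hχ
    calc ((χ 1).re)⁻¹ ≤ 1 := by
          rw [inv_le_one_iff₀]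
          right
          exact h1
      _ ≤ ‖m χ‖ := h2
  · intro _ χ hχ
    exact (main χ hχ).2
end

section
/- Let (A,B) be a commutative C-algebra satisfying the standard character condition, and let D : A → Mat_n(ℂ) be a representation affording the standard feasible trace ζ, i.e., a unital ℂ-algebra homomorphism with tr(D(x)) = ζ(x) for all x ∈ A. Then D is injective. -/
open Matrix
open scoped BigOperators

/-- for a commutative C-algebra satisfying the standard character
condition, any matrix representation affording the standard feasible trace `ζ` is
faithful (injective). -/
theorem stmt15 {A : Type*} [Ring A] [Algebra ℂ A] [StarRing A] [StarModule ℂ A]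
    (B : Finset A) (deg : A →ₐ[ℂ] ℂ) (lam : A → A → A → ℝ)
    (hCA : IsCAlgebra A B deg lam)
    (hcomm : ∀ x y : A, x * y = y * x)
    (ζ : A →ₗ[ℂ] ℂ) (hζ : IsStdTrace B deg ζ)
    (n : ℕ) (D : A →ₐ[ℂ] Matrix (Fin n) (Fin n) ℂ)
    (hD : ∀ x : A, (D x).trace = ζ x) :
    Function.Injective ⇑D := by
  classical
  rw [injective_iff_map_eq_zero]
  intro x hx
  have hxmem : x ∈ Submodule.span ℂ (B : Set A) := by rw [hCA.span_top]; trivial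
  obtain ⟨f, -, hf⟩ := Submodule.mem_span_finset.mp hxmem
  have h0 : ζ (x * star x) = 0 := by
    rw [← hD, _root_.map_mul, hx, Matrix.zero_mul, Matrix.trace_zero]
  have hsx : star x = ∑ c ∈ B, (starRingEnd ℂ) (f c) • star c := by
    rw [← hf, star_sum]
    exact Finset.sum_congr rfl fun c _ => by rw [star_smul, Complex.star_def]
  have hexp : x * star x
      = ∑ b ∈ B, ∑ c ∈ B, (f b * (starRingEnd ℂ) (f c)) • (b * star c) := by
    rw [hsx]; rw [← hf, Finset.sum_mul_sum]
    exact Finset.sum_congr rfl fun b _ => Finset.sum_congr rfl fun c _ => by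
      rw [smul_mul_smul_comm]
  have hζbc : ∀ b ∈ B, ∀ c ∈ B, ζ (b * star c)
      = if b = c then (lam b (star b) 1 : ℂ) * ζ 1 else 0 := by
    intro b hb c hc
    rw [hCA.struct b hb (star c) (hCA.star_mem c hc), map_sum,
      Finset.sum_eq_single_of_mem 1 hCA.one_mem
        (fun d hd hd1 => by rw [_root_.map_smul, hζ.2 d hd hd1, smul_zero])]
    rw [_root_.map_smul, smul_eq_mul]
    by_cases h : b = c
    · subst h; rw [if_pos rfl]
    · rw [if_neg h, hCA.lam_one_ne b hb (star c) (hCA.star_mem c hc)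
        (by rw [star_star]; exact h)]
      simp
  have hζ1 : ζ 1 = ((∑ b ∈ B, lam b (star b) 1 : ℝ) : ℂ) := by
    rw [hζ.1, Complex.ofReal_sum]
    exact Finset.sum_congr rfl fun b hb => (hCA.lam_one_eq b hb).symm
  set S : ℝ := ∑ b ∈ B, lam b (star b) 1 with hS
  have hSpos : 0 < S :=
    Finset.sum_pos (fun b hb => hCA.deg_pos b hb) ⟨1, hCA.one_mem⟩
  have h1 : ζ (x * star x)
      = ((∑ b ∈ B, Complex.normSq (f b) * lam b (star b) 1) * S : ℝ) := by
    rw [hexp, map_sum]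
    have : ∀ b ∈ B, ζ (∑ c ∈ B, (f b * (starRingEnd ℂ) (f c)) • (b * star c))
        = ((Complex.normSq (f b) * lam b (star b) 1 : ℝ) : ℂ) * ζ 1 := by
      intro b hb
      rw [map_sum]
      have : ∀ c ∈ B, ζ ((f b * (starRingEnd ℂ) (f c)) • (b * star c))
          = if b = c then (f b * (starRingEnd ℂ) (f c))
              * ((lam b (star b) 1 : ℂ) * ζ 1) else 0 := by
        intro c hc
        rw [_root_.map_smul, hζbc b hb c hc, smul_eq_mul]
        by_cases h : b = c
        · rw [if_pos h, if_pos h]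
        · rw [if_neg h, if_neg h, mul_zero]
      rw [Finset.sum_congr rfl this, Finset.sum_ite_eq B b, if_pos hb]
      rw [Complex.mul_conj, Complex.ofReal_mul]
      ring
    rw [Finset.sum_congr rfl this, ← Finset.sum_mul, hζ1]
    push_cast
    ring
  have hsum0 : (∑ b ∈ B, Complex.normSq (f b) * lam b (star b) 1) = 0 := by
    have := h1.symm.trans h0
    rw [Complex.ofReal_eq_zero] at this
    exact (mul_eq_zero.mp this).resolve_right (ne_of_gt hSpos)
  have hterm : ∀ b ∈ B, Complex.normSq (f b) * lam b (star b) 1 = 0 := by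
    intro b hb
    refine (Finset.sum_eq_zero_iff_of_nonneg ?_).mp hsum0 b hb
    intro c hc
    exact mul_nonneg (Complex.normSq_nonneg _) (le_of_lt (hCA.deg_pos c hc))
  have hf0 : ∀ b ∈ B, f b = 0 := by
    intro b hb
    have := (mul_eq_zero.mp (hterm b hb)).resolve_right (ne_of_gt (hCA.deg_pos b hb))
    exact Complex.normSq_eq_zero.mp this
  rw [← hf]
  exact Finset.sum_eq_zero fun b hb => by rw [hf0 b hb, zero_smul]
end
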